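/- arXiv:1501.01511 — 10 statements merged into one kernel-verified Lean document; each statement's English description precedes it below -/
import Mathlib

section
/- If G is a finite simple graph of order n with maximum degree Δ and k is a positive integer with k ≤ Δ, then the lower k-limited packing number satisfies L^ℓ_k(G) ≥ kn/(Δ(Δ − k + 1) + k). -/
open SimpleGraph Finset

variable {V : Type*}

/-- The closed neighborhood `N[v]` of a vertex `v`, as a `Finset`. -/
def closedNbrFinset (G : SimpleGraph V) [Fintype V] [DecidableEq V] [DecidableRel G.Adj]
    (v : V) : Finset V :=
  insert v (G.neighborFinset v)

/-- `B` is a `k`-limited packing in `G`. -/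
def IsLimitedPacking (G : SimpleGraph V) [Fintype V] [DecidableEq V] [DecidableRel G.Adj]
    (k : ℕ) (B : Finset V) : Prop :=
  ∀ v : V, (closedNbrFinset G v ∩ B).card ≤ k

/-- The lower `k`-limited packing number `L^ℓ_k(G)`: the minimum cardinality of a
`k`-limited packing that is maximal under inclusion among `k`-limited packings. -/
noncomputable def lowerLimitedPackingNumber (G : SimpleGraph V) [Fintype V] [DecidableEq V]
    [DecidableRel G.Adj] (k : ℕ) : ℕ :=
  sInf {m | ∃ B : Finset V, Maximal (IsLimitedPacking G k) B ∧ B.card = m}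

section Aux

variable (G : SimpleGraph V) [Fintype V] [DecidableEq V] [DecidableRel G.Adj]

lemma mem_closedNbrFinset_iff {u v : V} :
    v ∈ closedNbrFinset G u ↔ v = u ∨ G.Adj u v := by
  simp [closedNbrFinset]

lemma closedNbrFinset_comm {u v : V} :
    v ∈ closedNbrFinset G u ↔ u ∈ closedNbrFinset G v := by
  simp only [mem_closedNbrFinset_iff]
  constructor
  · rintro (h | h)
    · exact Or.inl h.symm
    · exact Or.inr h.symm
  · rintro (h | h)
    · exact Or.inl h.symm
    · exact Or.inr h.symm

lemma self_mem_closedNbrFinset (v : V) : v ∈ closedNbrFinset G v :=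
  Finset.mem_insert_self _ _

lemma card_closedNbrFinset_le (u : V) :
    (closedNbrFinset G u).card ≤ G.maxDegree + 1 := by
  have h1 : (closedNbrFinset G u).card ≤ (G.neighborFinset u).card + 1 :=
    Finset.card_insert_le _ _
  have h2 : (G.neighborFinset u).card = G.degree u := rfl
  have h3 := G.degree_le_maxDegree u
  omega

/-- Existence of a maximal `k`-limited packing. -/
lemma exists_maximal_limitedPacking (k : ℕ) :
    ∃ B : Finset V, Maximal (IsLimitedPacking G k) B := by
  classical
  set s : Finset (Finset V) := univ.filter (fun B => IsLimitedPacking G k B) with hs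
  have hne : s.Nonempty := by
    refine ⟨∅, ?_⟩
    simp only [hs, mem_filter, mem_univ, true_and]
    intro v
    simp [IsLimitedPacking]
  obtain ⟨B, hBs, hBmax⟩ := s.exists_max_image Finset.card hne
  have hBp : IsLimitedPacking G k B := (mem_filter.mp hBs).2
  refine ⟨B, hBp, ?_⟩
  intro C hC hBC
  have hCs : C ∈ s := by simp [hs, hC]
  have := hBmax C hCs
  exact (Finset.eq_of_subset_of_card_le hBC this).ge

/-- Key counting lemma: any maximal `k`-limited packing has at least
`kn / (Δ(Δ+1-k) + k)` elements, in natural-number form. -/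
lemma key_count (k : ℕ) (hk : 0 < k) (hkΔ : k ≤ G.maxDegree) (B : Finset V)
    (hB : Maximal (IsLimitedPacking G k) B) :
    k * Fintype.card V ≤
      B.card * (G.maxDegree * (G.maxDegree + 1 - k) + k) := by
  classical
  set D := G.maxDegree with hD
  -- the set of "saturated" vertices
  set A : Finset V := univ.filter (fun u => (closedNbrFinset G u ∩ B).card = k) with hA
  -- the charge sets
  set T : V → Finset V := fun b =>
    ((G.neighborFinset b ∩ A).biUnion (fun u => closedNbrFinset G u \ B)) ∪
      (G.neighborFinset b \ (B ∪ A)) with hT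
  -- Step 1: for every v ∉ B there is u ∈ A with v ∈ N[u]
  have step1 : ∀ v : V, v ∉ B → ∃ u : V, u ∈ A ∧ v ∈ closedNbrFinset G u := by
    intro v hv
    have hnot : ¬ IsLimitedPacking G k (insert v B) := by
      intro hins
      have h1 : insert v B ⊆ B := hB.2 hins (Finset.subset_insert v B)
      exact hv (h1 (Finset.mem_insert_self v B))
    rw [IsLimitedPacking] at hnot
    push_neg at hnot
    obtain ⟨u, hu⟩ := hnot
    have hpack := hB.1 u
    have hvmem : v ∈ closedNbrFinset G u := by
      by_contra hvn
      have : closedNbrFinset G u ∩ insert v B = closedNbrFinset G u ∩ B := by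
        ext x
        simp only [Finset.mem_inter, Finset.mem_insert]
        constructor
        · rintro ⟨hx, (rfl | hx')⟩
          · exact absurd hx hvn
          · exact ⟨hx, hx'⟩
        · rintro ⟨hx, hx'⟩
          exact ⟨hx, Or.inr hx'⟩
      rw [this] at hu
      omega
    have hsub : closedNbrFinset G u ∩ insert v B ⊆
        insert v (closedNbrFinset G u ∩ B) := by
      intro x hx
      simp only [Finset.mem_inter, Finset.mem_insert] at hx ⊢
      tauto
    have hcard := Finset.card_le_card hsub
    have hcard2 : (insert v (closedNbrFinset G u ∩ B)).card ≤
        (closedNbrFinset G u ∩ B).card + 1 := Finset.card_insert_le _ _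
    have heq : (closedNbrFinset G u ∩ B).card = k := by omega
    exact ⟨u, by simp [hA, heq], hvmem⟩
  -- Step 2: charging. If v ∉ B, v ∈ N[u], u ∈ A, then v ∈ T b for all b ∈ N[u] ∩ B
  have step2 : ∀ v : V, v ∉ B → ∀ u : V, u ∈ A → v ∈ closedNbrFinset G u →
      ∀ b ∈ closedNbrFinset G u ∩ B, v ∈ T b := by
    intro v hv u huA hvu b hb
    obtain ⟨hbu, hbB⟩ := Finset.mem_inter.mp hb
    simp only [hT, Finset.mem_union, Finset.mem_biUnion]
    by_cases hub : u = b
    · -- u = b : v is a neighbor of b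
      subst hub
      have hvb : v ≠ u := by rintro rfl; exact hv hbB
      have hadj : G.Adj u v := by
        rcases (mem_closedNbrFinset_iff G).mp hvu with h | h
        · exact absurd h hvb
        · exact h
      by_cases hvA : v ∈ A
      · left
        exact ⟨v, Finset.mem_inter.mpr ⟨(G.mem_neighborFinset u v).mpr hadj, hvA⟩,
          Finset.mem_sdiff.mpr ⟨self_mem_closedNbrFinset G v, hv⟩⟩
      · right
        refine Finset.mem_sdiff.mpr ⟨(G.mem_neighborFinset u v).mpr hadj, ?_⟩
        simp only [Finset.mem_union]
        tauto
    · -- u ≠ b : u is a neighbor of b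
      left
      have hadj : G.Adj u b := by
        rcases (mem_closedNbrFinset_iff G).mp hbu with h | h
        · exact absurd h (Ne.symm hub)
        · exact h
      exact ⟨u, Finset.mem_inter.mpr ⟨(G.mem_neighborFinset b u).mpr hadj.symm, huA⟩,
        Finset.mem_sdiff.mpr ⟨hvu, hv⟩⟩
  -- Step 3: every v ∉ B lies in at least k charge sets
  have step3 : ∀ v : V, v ∉ B → k ≤ (B.filter (fun b => v ∈ T b)).card := by
    intro v hv
    obtain ⟨u, huA, hvu⟩ := step1 v hv
    have hk' : (closedNbrFinset G u ∩ B).card = k := by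
      have := (Finset.mem_filter.mp huA).2
      exact this
    have hsub : closedNbrFinset G u ∩ B ⊆ B.filter (fun b => v ∈ T b) := by
      intro b hb
      refine Finset.mem_filter.mpr ⟨(Finset.mem_inter.mp hb).2, ?_⟩
      exact step2 v hv u huA hvu b hb
    calc k = (closedNbrFinset G u ∩ B).card := hk'.symm
    _ ≤ _ := Finset.card_le_card hsub
  -- Step 4: size of each charge set
  have step4 : ∀ b ∈ B, (T b).card ≤ D * (D + 1 - k) := by
    intro b _
    have hsum : ((G.neighborFinset b ∩ A).biUnion
        (fun u => closedNbrFinset G u \ B)).card ≤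
        (G.neighborFinset b ∩ A).card * (D + 1 - k) := by
      calc ((G.neighborFinset b ∩ A).biUnion (fun u => closedNbrFinset G u \ B)).card
          ≤ ∑ u ∈ G.neighborFinset b ∩ A, (closedNbrFinset G u \ B).card :=
            Finset.card_biUnion_le
        _ ≤ (G.neighborFinset b ∩ A).card * (D + 1 - k) := by
            rw [← smul_eq_mul]
            apply Finset.sum_le_card_nsmul
            intro u hu
            have huA : (closedNbrFinset G u ∩ B).card = k :=
              (Finset.mem_filter.mp (Finset.mem_inter.mp hu).2).2
            have h1 := Finset.card_inter_add_card_sdiff (closedNbrFinset G u) B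
            have h2 := card_closedNbrFinset_le G u
            omega
    have hsd : (G.neighborFinset b \ (B ∪ A)).card ≤
        (G.neighborFinset b \ A).card := by
      apply Finset.card_le_card
      intro x hx
      rw [Finset.mem_sdiff] at hx ⊢
      simp only [Finset.mem_union] at hx
      tauto
    set a := (G.neighborFinset b ∩ A).card with ha
    have haD : a ≤ D := by
      have h1 : a ≤ (G.neighborFinset b).card :=
        Finset.card_le_card Finset.inter_subset_left
      have h2 : (G.neighborFinset b).card = G.degree b := rfl
      have := G.degree_le_maxDegree b
      omega
    have hsd2 : (G.neighborFinset b \ A).card ≤ D - a := by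
      have h1 := Finset.card_inter_add_card_sdiff (G.neighborFinset b) A
      have h2 : (G.neighborFinset b).card = G.degree b := rfl
      have := G.degree_le_maxDegree b
      omega
    have hcard : (T b).card ≤ a * (D + 1 - k) + (D - a) := by
      calc (T b).card ≤ _ + _ := Finset.card_union_le _ _
        _ ≤ a * (D + 1 - k) + (D - a) := by
            refine Nat.add_le_add hsum ?_
            omega
    have hfinal : a * (D + 1 - k) + (D - a) ≤ D * (D + 1 - k) := by
      have hc : 1 ≤ D + 1 - k := by omega
      have h1 : D - a ≤ (D - a) * (D + 1 - k) := Nat.le_mul_of_pos_right _ (by omega)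
      have h2 : a * (D + 1 - k) + (D - a) * (D + 1 - k) = D * (D + 1 - k) := by
        rw [← Nat.add_mul, Nat.add_sub_cancel' haD]
      omega
    omega
  -- Step 5: double counting
  have step5 : k * (Bᶜ : Finset V).card ≤ ∑ b ∈ B, (T b).card := by
    have h1 : k * (Bᶜ : Finset V).card ≤
        ∑ v ∈ (Bᶜ : Finset V), (B.filter (fun b => v ∈ T b)).card := by
      rw [mul_comm, ← smul_eq_mul, ← Finset.sum_const]
      apply Finset.sum_le_sum
      intro v hv
      exact step3 v (Finset.mem_compl.mp hv)
    have h2 : ∑ v ∈ (Bᶜ : Finset V), (B.filter (fun b => v ∈ T b)).card =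
        ∑ b ∈ B, ((Bᶜ : Finset V).filter (fun v => v ∈ T b)).card := by
      simp only [Finset.card_filter]
      exact Finset.sum_comm
    have h3 : ∀ b ∈ B, ((Bᶜ : Finset V).filter (fun v => v ∈ T b)).card ≤ (T b).card := by
      intro b _
      apply Finset.card_le_card
      intro x hx
      exact (Finset.mem_filter.mp hx).2
    calc k * (Bᶜ : Finset V).card ≤ _ := h1
      _ = _ := h2
      _ ≤ ∑ b ∈ B, (T b).card := Finset.sum_le_sum h3
  have step6 : ∑ b ∈ B, (T b).card ≤ B.card * (D * (D + 1 - k)) := by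
    rw [← smul_eq_mul]
    exact Finset.sum_le_card_nsmul _ _ _ step4
  -- combine
  have hcompl : (Bᶜ : Finset V).card = Fintype.card V - B.card := Finset.card_compl B
  have hle : B.card ≤ Fintype.card V := Finset.card_le_univ B
  have hmain : k * (Fintype.card V - B.card) ≤ B.card * (D * (D + 1 - k)) := by
    rw [← hcompl]
    exact le_trans step5 step6
  have hsplit : k * Fintype.card V = k * B.card + k * (Fintype.card V - B.card) := by
    rw [← Nat.mul_add, Nat.add_sub_cancel' hle]
  calc k * Fintype.card V = k * B.card + k * (Fintype.card V - B.card) := hsplit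
    _ ≤ k * B.card + B.card * (D * (D + 1 - k)) := by omega
    _ = B.card * (D * (D + 1 - k) + k) := by ring

end Aux

/-- If `G` has order `n` and maximum degree `Δ`, and `k` is a positive integer with
`k ≤ Δ`, then `L^ℓ_k(G) ≥ k n / (Δ(Δ - k + 1) + k)`. -/
theorem lowerLimitedPackingNumber_ge (G : SimpleGraph V) [Fintype V] [DecidableEq V]
    [DecidableRel G.Adj] (k : ℕ) (hk : 0 < k) (hkΔ : k ≤ G.maxDegree) :
    (lowerLimitedPackingNumber G k : ℝ) ≥
      (k : ℝ) * (Fintype.card V) /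
        ((G.maxDegree : ℝ) * ((G.maxDegree : ℝ) - k + 1) + k) := by
  classical
  set D := G.maxDegree with hD
  have hne : {m | ∃ B : Finset V, Maximal (IsLimitedPacking G k) B ∧ B.card = m}.Nonempty := by
    obtain ⟨B, hB⟩ := exists_maximal_limitedPacking G k
    exact ⟨B.card, B, hB, rfl⟩
  obtain ⟨B, hB, hcard⟩ := Nat.sInf_mem hne
  rw [lowerLimitedPackingNumber, ← hcard]
  have hnat := key_count G k hk hkΔ B hB
  have hdenom : (D : ℝ) * ((D : ℝ) - k + 1) + k = ((D * (D + 1 - k) + k : ℕ) : ℝ) := by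
    have hk1 : k ≤ D + 1 := by omega
    push_cast [Nat.cast_sub hk1]
    ring
  rw [ge_iff_le, hdenom, div_le_iff₀]
  · calc (k : ℝ) * (Fintype.card V) = ((k * Fintype.card V : ℕ) : ℝ) := by push_cast; ring
      _ ≤ ((B.card * (D * (D + 1 - k) + k) : ℕ) : ℝ) := by exact_mod_cast hnat
      _ = (B.card : ℝ) * ((D * (D + 1 - k) + k : ℕ) : ℝ) := by push_cast; ring
  · have : 0 < D * (D + 1 - k) + k := by omega
    exact_mod_cast this
end

section
/- If G is a finite cubic graph (every vertex has degree 3) of order n, then the lower 2-limited packing number satisfies L^ℓ_2(G) ≥ n/4. -/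
open SimpleGraph Finset

variable {V : Type*}

section Aux

variable (G : SimpleGraph V) [Fintype V] [DecidableEq V] [DecidableRel G.Adj]

lemma mem_closedNbrFinset_comm {u v : V} :
    u ∈ closedNbrFinset G v ↔ v ∈ closedNbrFinset G u := by
  simp only [closedNbrFinset, mem_insert, mem_neighborFinset]
  rw [G.adj_comm]
  tauto

lemma card_closedNbrFinset (v : V) :
    (closedNbrFinset G v).card = G.degree v + 1 := by
  rw [closedNbrFinset, card_insert_of_notMem (by simp), G.card_neighborFinset_eq_degree]

lemma sum_card_inter (B : Finset V) :
    ∑ v : V, (closedNbrFinset G v ∩ B).card = ∑ b ∈ B, (closedNbrFinset G b).card := by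
  have h1 : ∀ v : V, (closedNbrFinset G v ∩ B).card
      = ∑ b ∈ B, if b ∈ closedNbrFinset G v then 1 else 0 := by
    intro v
    rw [← Finset.card_filter]
    congr 1
    rw [Finset.filter_mem_eq_inter, Finset.inter_comm]
  have h2 : ∀ b : V, (closedNbrFinset G b).card
      = ∑ v : V, if b ∈ closedNbrFinset G v then 1 else 0 := by
    intro b
    rw [← Finset.card_filter]
    congr 1
    ext v
    simp [mem_closedNbrFinset_comm G]
  simp_rw [h1, h2]
  exact Finset.sum_comm

/-- Key counting bound: a maximal 2-limited packing in a cubic graph has card ≥ n/4. -/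
lemma card_bound (hcubic : ∀ v : V, G.degree v = 3) (B : Finset V)
    (hmax : Maximal (IsLimitedPacking G 2) B) :
    Fintype.card V ≤ 4 * B.card := by
  classical
  set f : V → ℕ := fun v => (closedNbrFinset G v ∩ B).card with hf
  have hf2 : ∀ v, f v ≤ 2 := hmax.1
  have hcard4 : ∀ v : V, (closedNbrFinset G v).card = 4 := by
    intro v; rw [card_closedNbrFinset, hcubic]
  -- total sum
  have hsum : ∑ v : V, f v = 4 * B.card := by
    rw [hf]
    rw [sum_card_inter]
    rw [Finset.sum_congr rfl fun b _ => hcard4 b]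
    rw [Finset.sum_const, smul_eq_mul, mul_comm]
  -- classes
  set S : Finset V := Finset.univ \ B with hS
  set A0 : Finset V := S.filter (fun v => f v = 0) with hA0
  set A1 : Finset V := S.filter (fun v => f v = 1) with hA1
  set A2 : Finset V := S.filter (fun v => f v = 2) with hA2
  -- partition of cardinality
  have hScard : Fintype.card V = B.card + S.card := by
    have := Finset.card_le_univ B
    rw [hS, Finset.card_sdiff_of_subset (Finset.subset_univ B), Finset.card_univ]
    omega
  have hScover : S ⊆ A0 ∪ A1 ∪ A2 := by
    intro v hv
    have h := hf2 v
    have h3 : f v = 0 ∨ f v = 1 ∨ f v = 2 := by omega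
    simp only [hA0, hA1, hA2, Finset.mem_union, Finset.mem_filter]
    rcases h3 with h3 | h3 | h3 <;> simp [hv, h3]
  have hSle : S.card ≤ A0.card + A1.card + A2.card :=
    le_trans (Finset.card_le_card hScover)
      (le_trans (Finset.card_union_le _ _) (by
        have := Finset.card_union_le A0 A1
        omega))
  -- sum lower bound: B contributes ≥ |B|, A1 contributes |A1|, A2 contributes 2|A2|
  have hBsum : B.card ≤ ∑ v ∈ B, f v := by
    calc B.card = ∑ _v ∈ B, 1 := by simp
    _ ≤ ∑ v ∈ B, f v := Finset.sum_le_sum (fun v hv =>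
        Finset.card_pos.2 ⟨v, Finset.mem_inter.2 ⟨self_mem_closedNbrFinset G v, hv⟩⟩)
  have hdisj12 : Disjoint A1 A2 := by
    rw [Finset.disjoint_left]
    intro v h1 h2
    rw [hA1, Finset.mem_filter] at h1
    rw [hA2, Finset.mem_filter] at h2
    omega
  have hA12sub : A1 ∪ A2 ⊆ S := by
    rw [hA1, hA2]
    exact Finset.union_subset (Finset.filter_subset _ _) (Finset.filter_subset _ _)
  have hA1sum : ∑ v ∈ A1, f v = A1.card := by
    rw [Finset.sum_congr rfl (fun v hv => (Finset.mem_filter.1 hv).2), Finset.sum_const,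
      smul_eq_mul, mul_one]
  have hA2sum : ∑ v ∈ A2, f v = 2 * A2.card := by
    rw [Finset.sum_congr rfl (fun v hv => (Finset.mem_filter.1 hv).2), Finset.sum_const,
      smul_eq_mul, mul_comm]
  have hSsum : A1.card + 2 * A2.card ≤ ∑ v ∈ S, f v := by
    calc A1.card + 2 * A2.card = ∑ v ∈ A1, f v + ∑ v ∈ A2, f v := by rw [hA1sum, hA2sum]
    _ = ∑ v ∈ A1 ∪ A2, f v := (Finset.sum_union hdisj12).symm
    _ ≤ ∑ v ∈ S, f v := Finset.sum_le_sum_of_subset hA12sub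
  have hsplit : ∑ v ∈ S, f v + ∑ v ∈ B, f v = 4 * B.card := by
    have h := Finset.sum_sdiff (f := f) (Finset.subset_univ B)
    rw [← hS] at h
    rw [h, hsum]
  have hkey : A1.card + 2 * A2.card + B.card ≤ 4 * B.card := by omega
  -- injection from A0 into A2
  have hwitness : ∀ u ∈ A0, ∃ v, v ∈ A2 ∧ u ∈ closedNbrFinset G v := by
    intro u hu
    rw [hA0, Finset.mem_filter, hS, Finset.mem_sdiff] at hu
    obtain ⟨⟨-, huB⟩, hfu⟩ := hu
    have hnot : ¬ IsLimitedPacking G 2 (insert u B) := by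
      intro hpack
      have := hmax.2 hpack (Finset.subset_insert u B)
      exact huB (this (Finset.mem_insert_self u B))
    rw [IsLimitedPacking] at hnot
    push_neg at hnot
    obtain ⟨v, hv⟩ := hnot
    have hsub : closedNbrFinset G v ∩ insert u B ⊆ insert u (closedNbrFinset G v ∩ B) := by
      intro x hx
      rw [Finset.mem_inter, Finset.mem_insert] at hx
      rcases hx with ⟨hx1, hx2 | hx3⟩
      · exact Finset.mem_insert.2 (Or.inl hx2)
      · exact Finset.mem_insert.2 (Or.inr (Finset.mem_inter.2 ⟨hx1, hx3⟩))
    have hle : (closedNbrFinset G v ∩ insert u B).card ≤ (closedNbrFinset G v ∩ B).card + 1 :=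
      le_trans (Finset.card_le_card hsub) (Finset.card_insert_le _ _)
    have hfv : f v = 2 := by
      have := hf2 v
      simp only [hf] at this ⊢
      omega
    have huv : u ∈ closedNbrFinset G v := by
      by_contra huv
      have : closedNbrFinset G v ∩ insert u B = closedNbrFinset G v ∩ B := by
        ext x
        simp only [Finset.mem_inter, Finset.mem_insert]
        constructor
        · rintro ⟨hx1, rfl | hx2⟩
          · exact absurd hx1 huv
          · exact ⟨hx1, hx2⟩
        · rintro ⟨hx1, hx2⟩; exact ⟨hx1, Or.inr hx2⟩
      rw [this] at hv
      have := hf2 v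
      simp only [hf] at this
      omega
    have hvB : v ∉ B := by
      intro hvB
      have : v ∈ closedNbrFinset G u ∩ B :=
        Finset.mem_inter.2 ⟨(mem_closedNbrFinset_comm G).1 huv, hvB⟩
      have := Finset.card_pos.2 ⟨v, this⟩
      simp only [hf] at hfu
      omega
    refine ⟨v, ?_, huv⟩
    rw [hA2, Finset.mem_filter, hS, Finset.mem_sdiff]
    exact ⟨⟨Finset.mem_univ v, hvB⟩, hfv⟩
  have hA0le : A0.card ≤ A2.card := by
    set g : V → V := fun u =>
      if h : ∃ v, v ∈ A2 ∧ u ∈ closedNbrFinset G v then h.choose else u with hg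
    apply Finset.card_le_card_of_injOn g
    · intro u hu
      have h : ∃ v, v ∈ A2 ∧ u ∈ closedNbrFinset G v := hwitness u hu
      simp only [hg, dif_pos h]
      exact h.choose_spec.1
    · intro u1 hu1 u2 hu2 heq
      rw [Finset.mem_coe] at hu1 hu2
      have h1 : ∃ v, v ∈ A2 ∧ u1 ∈ closedNbrFinset G v := hwitness u1 hu1
      have h2 : ∃ v, v ∈ A2 ∧ u2 ∈ closedNbrFinset G v := hwitness u2 hu2
      simp only [hg, dif_pos h1, dif_pos h2] at heq
      set v := h1.choose with hv
      have hv1 : v ∈ A2 ∧ u1 ∈ closedNbrFinset G v := h1.choose_spec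
      have hv2 : v ∈ A2 ∧ u2 ∈ closedNbrFinset G v := heq ▸ h2.choose_spec
      -- v ∈ A2: v ∉ B, f v = 2; u1, u2 ∈ N[v] \ insert v B which has card 1
      obtain ⟨hvA2, hu1v⟩ := hv1
      obtain ⟨-, hu2v⟩ := hv2
      rw [hA2, Finset.mem_filter, hS, Finset.mem_sdiff] at hvA2
      obtain ⟨⟨-, hvB⟩, hfv⟩ := hvA2
      have hT : (closedNbrFinset G v \ insert v B).card = 1 := by
        have heqT : closedNbrFinset G v \ insert v B
            = closedNbrFinset G v \ insert v (closedNbrFinset G v ∩ B) := by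
          ext x
          simp only [Finset.mem_sdiff, Finset.mem_insert, Finset.mem_inter]
          tauto
        rw [heqT, Finset.card_sdiff_of_subset (by
          apply Finset.insert_subset (self_mem_closedNbrFinset G v)
          exact Finset.inter_subset_left)]
        rw [Finset.card_insert_of_notMem (by
          simp only [Finset.mem_inter]
          tauto)]
        simp only [hf] at hfv
        rw [hfv, hcard4]
      have hu1T : u1 ∈ closedNbrFinset G v \ insert v B := by
        rw [hA0, Finset.mem_filter, hS, Finset.mem_sdiff] at hu1
        obtain ⟨⟨-, hu1B⟩, hfu1⟩ := hu1
        rw [Finset.mem_sdiff, Finset.mem_insert]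
        refine ⟨hu1v, ?_⟩
        rintro (h | h)
        · rw [h] at hfu1; simp only [hf] at hfu1 hfv; omega
        · exact hu1B h
      have hu2T : u2 ∈ closedNbrFinset G v \ insert v B := by
        rw [hA0, Finset.mem_filter, hS, Finset.mem_sdiff] at hu2
        obtain ⟨⟨-, hu2B⟩, hfu2⟩ := hu2
        rw [Finset.mem_sdiff, Finset.mem_insert]
        refine ⟨hu2v, ?_⟩
        rintro (h | h)
        · rw [h] at hfu2; simp only [hf] at hfu2 hfv; omega
        · exact hu2B h
      have := Finset.card_le_one.1 (le_of_eq hT) u1 hu1T u2 hu2T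
      exact this
  omega

end Aux

/-- If `G` is a cubic graph of order `n`, then `L^ℓ_2(G) ≥ n / 4`. -/
theorem lowerLimitedPackingNumber_two_cubic (G : SimpleGraph V) [Fintype V] [DecidableEq V]
    [DecidableRel G.Adj] (hcubic : ∀ v : V, G.degree v = 3) :
    (lowerLimitedPackingNumber G 2 : ℝ) ≥ (Fintype.card V : ℝ) / 4 := by
  classical
  have hempty : IsLimitedPacking G 2 (∅ : Finset V) := by
    intro v; simp [IsLimitedPacking]
  obtain ⟨B, hB, hBmax⟩ := Set.Finite.exists_maximalFor id
    {B : Finset V | IsLimitedPacking G 2 B} (Set.toFinite _) ⟨∅, hempty⟩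
  have hmax : Maximal (IsLimitedPacking G 2) B := by
    refine ⟨hB, fun C hC hBC => ?_⟩
    exact hBmax hC hBC
  have hne : {m | ∃ B : Finset V, Maximal (IsLimitedPacking G 2) B ∧ B.card = m}.Nonempty :=
    ⟨B.card, B, hmax, rfl⟩
  obtain ⟨B', hB'max, hB'card⟩ := Nat.sInf_mem hne
  have hbound := card_bound G hcubic B' hB'max
  have h4 : Fintype.card V ≤ 4 * lowerLimitedPackingNumber G 2 := by
    rw [lowerLimitedPackingNumber, ← hB'card]
    exact hbound
  rw [ge_iff_le, div_le_iff₀ (by norm_num : (0:ℝ) < 4)]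
  have h5 : (Fintype.card V : ℝ) ≤ 4 * (lowerLimitedPackingNumber G 2 : ℝ) := by
    exact_mod_cast h4
  linarith
end

section
/- If G is a finite simple graph of order n with maximum degree Δ ≥ 1, then the lower packing number satisfies ρ_L(G) ≥ n/(Δ² + 1). -/
open SimpleGraph Finset

variable {V : Type*}

lemma mem_closedNbr_comm (G : SimpleGraph V) [Fintype V] [DecidableEq V] [DecidableRel G.Adj]
    {a b : V} (h : a ∈ closedNbrFinset G b) : b ∈ closedNbrFinset G a := by
  simp only [closedNbrFinset, mem_insert, mem_neighborFinset] at *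
  rcases h with h | h
  · exact Or.inl h.symm
  · exact Or.inr h.symm

lemma ball2_card_le (G : SimpleGraph V) [Fintype V] [DecidableEq V] [DecidableRel G.Adj]
    (hΔ : 1 ≤ G.maxDegree) (b : V) :
    (closedNbrFinset G b ∪ (G.neighborFinset b).biUnion
      (fun u => (G.neighborFinset u).erase b)).card ≤ G.maxDegree ^ 2 + 1 := by
  obtain ⟨k, hk⟩ : ∃ k, G.maxDegree = k + 1 := ⟨G.maxDegree - 1, by omega⟩
  have h1 : (closedNbrFinset G b).card ≤ G.maxDegree + 1 := by
    refine (card_insert_le _ _).trans ?_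
    have := G.degree_le_maxDegree b
    rw [← card_neighborFinset_eq_degree] at this
    omega
  have h2 : ((G.neighborFinset b).biUnion
      (fun u => (G.neighborFinset u).erase b)).card ≤ G.maxDegree * (G.maxDegree - 1) := by
    refine (card_biUnion_le).trans ?_
    calc ∑ u ∈ G.neighborFinset b, ((G.neighborFinset u).erase b).card
        ≤ ∑ _u ∈ G.neighborFinset b, (G.maxDegree - 1) := by
          refine sum_le_sum fun u hu => ?_
          have hbu : b ∈ G.neighborFinset u := by
            rw [mem_neighborFinset] at *; exact hu.symm
          rw [card_erase_of_mem hbu]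
          have := G.degree_le_maxDegree u
          rw [← card_neighborFinset_eq_degree] at this
          omega
      _ ≤ G.maxDegree * (G.maxDegree - 1) := by
          rw [sum_const, smul_eq_mul]
          have := G.degree_le_maxDegree b
          rw [← card_neighborFinset_eq_degree] at this
          exact Nat.mul_le_mul_right _ this
  refine (card_union_le _ _).trans ?_
  rw [hk] at h1 h2 ⊢
  simp only [Nat.add_sub_cancel] at h2
  nlinarith

lemma card_le_of_maximal (G : SimpleGraph V) [Fintype V] [DecidableEq V] [DecidableRel G.Adj]
    (hΔ : 1 ≤ G.maxDegree) {B : Finset V} (hB : Maximal (IsLimitedPacking G 1) B) :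
    Fintype.card V ≤ (G.maxDegree ^ 2 + 1) * B.card := by
  classical
  have key : ∀ v : V, ∃ b, b ∈ B ∧ ∃ u, u ∈ closedNbrFinset G v ∧ u ∈ closedNbrFinset G b := by
    intro v
    by_cases hv : v ∈ B
    · exact ⟨v, hv, v, by simp [closedNbrFinset], by simp [closedNbrFinset]⟩
    · have hnot : ¬ IsLimitedPacking G 1 (insert v B) := by
        intro h
        exact hv (hB.2 h (subset_insert _ _) (mem_insert_self v B))
      rw [IsLimitedPacking] at hnot
      push_neg at hnot
      obtain ⟨u, hu⟩ := hnot
      rw [Finset.one_lt_card] at hu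
      obtain ⟨a, ha, c, hc, hac⟩ := hu
      simp only [mem_inter, mem_insert] at ha hc
      have hBu := hB.1 u
      -- at least one of a, c is v; the other is in B
      have : ∃ w, w ∈ B ∧ w ∈ closedNbrFinset G u ∧ v ∈ closedNbrFinset G u := by
        rcases ha.2 with rfl | haB
        · rcases hc.2 with rfl | hcB
          · exact absurd rfl hac
          · exact ⟨c, hcB, hc.1, ha.1⟩
        · rcases hc.2 with rfl | hcB
          · exact ⟨a, haB, ha.1, hc.1⟩
          · exfalso
            have : 2 ≤ (closedNbrFinset G u ∩ B).card := by
              refine Finset.one_lt_card.2 ⟨a, ?_, c, ?_, hac⟩ <;>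
                simp [mem_inter, ha.1, hc.1, haB, hcB]
            omega
      obtain ⟨w, hwB, hwu, hvu⟩ := this
      exact ⟨w, hwB, u, mem_closedNbr_comm G hvu, mem_closedNbr_comm G hwu⟩
  choose f hfB u hu1 hu2 using key
  have hmap : ∀ v : V, v ∈ Finset.univ → f v ∈ B := fun v _ => hfB v
  have hfib : ∀ b ∈ B, ({v ∈ Finset.univ | f v = b} : Finset V).card ≤ G.maxDegree ^ 2 + 1 := by
    intro b _
    refine le_trans (Finset.card_le_card ?_) (ball2_card_le G hΔ b)
    intro v hv
    simp only [mem_filter, mem_univ, true_and] at hv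
    subst hv
    have h1 : v ∈ closedNbrFinset G (u v) := mem_closedNbr_comm G (hu1 v)
    have h2 : u v ∈ closedNbrFinset G (f v) := hu2 v
    simp only [closedNbrFinset, mem_insert, mem_neighborFinset] at h1 h2
    simp only [mem_union, mem_biUnion, closedNbrFinset, mem_insert, mem_neighborFinset,
      mem_erase]
    rcases h2 with hh | h2
    · rw [hh] at h1
      exact Or.inl h1
    · rcases h1 with hh | h1
      · exact Or.inl (Or.inr (by rw [← hh] at h2; exact h2))
      · by_cases hvb : v = f v
        · exact Or.inl (Or.inl hvb)
        · exact Or.inr ⟨u v, h2, hvb, h1⟩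
  calc Fintype.card V = Finset.univ.card := rfl
    _ ≤ (G.maxDegree ^ 2 + 1) * B.card :=
        Finset.card_le_mul_card_image_of_maps_to hmap _ hfib


/-- A packing is a `1`-limited packing; the lower packing number `ρ_L(G)` is the
lower `1`-limited packing number.  If `G` has order `n` and maximum degree `Δ ≥ 1`,
then `ρ_L(G) ≥ n / (Δ² + 1)`. -/
theorem lowerPackingNumber_ge (G : SimpleGraph V) [Fintype V] [DecidableEq V]
    [DecidableRel G.Adj] (hΔ : 1 ≤ G.maxDegree) :
    (lowerLimitedPackingNumber G 1 : ℝ) ≥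
      (Fintype.card V : ℝ) / ((G.maxDegree : ℝ) ^ 2 + 1) := by
  classical
  -- existence of a maximal packing
  have hne : {m | ∃ B : Finset V, Maximal (IsLimitedPacking G 1) B ∧ B.card = m}.Nonempty := by
    have hS : ({B : Finset V | IsLimitedPacking G 1 B} : Set (Finset V)).Finite := Set.toFinite _
    obtain ⟨m, hm, hmax⟩ := (hS.toFinset).exists_maximal (by
      refine ⟨∅, ?_⟩
      simp only [Set.Finite.mem_toFinset, Set.mem_setOf_eq]
      intro v; simp [IsLimitedPacking])
    refine ⟨m.card, m, ⟨?_, ?_⟩, rfl⟩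
    · simpa using hm
    · intro y hy hle
      have hy' : y ∈ hS.toFinset := by simpa using hy
      rcases hle.lt_or_eq with h | h
      · exact absurd h (not_lt_of_ge (hmax hy' hle))
      · exact h.ge
  have hmem := Nat.sInf_mem hne
  obtain ⟨B, hB, hcard⟩ := hmem
  have hle := card_le_of_maximal G hΔ hB
  rw [hcard] at hle
  rw [ge_iff_le, div_le_iff₀ (by positivity)]
  calc (Fintype.card V : ℝ) ≤ ((G.maxDegree ^ 2 + 1) * lowerLimitedPackingNumber G 1 : ℕ) := by
        exact_mod_cast hle
    _ = (lowerLimitedPackingNumber G 1 : ℝ) * ((G.maxDegree : ℝ) ^ 2 + 1) := by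
        push_cast; ring
end

section
/- For every finite simple graph G of order n, the 2-limited packing numbers of G and its complement Ḡ satisfy L_2(G) + L_2(Ḡ) ≤ n + 2. -/
open SimpleGraph Finset

variable {V : Type*}

/-- The `k`-limited packing number `L_k(G)`: the maximum cardinality of a
`k`-limited packing in `G`. -/
noncomputable def limitedPackingNumber (G : SimpleGraph V) [Fintype V] [DecidableEq V]
    [DecidableRel G.Adj] (k : ℕ) : ℕ :=
  sSup {m | ∃ B : Finset V, IsLimitedPacking G k B ∧ B.card = m}

lemma aux_two_nbrs (G : SimpleGraph V) [Fintype V] [DecidableEq V] [DecidableRel G.Adj]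
    {B : Finset V} (hB : IsLimitedPacking G 2 B) {x y z : V}
    (hxy : G.Adj x y) (hxz : G.Adj x z) (hyz : y ≠ z)
    (hx : x ∈ B) (hy : y ∈ B) (hz : z ∈ B) : False := by
  have hsub : ({x, y, z} : Finset V) ⊆ closedNbrFinset G x ∩ B := by
    intro a ha
    simp only [mem_insert, mem_singleton] at ha
    simp only [closedNbrFinset, mem_inter, mem_insert, SimpleGraph.mem_neighborFinset]
    rcases ha with rfl | rfl | rfl
    · exact ⟨Or.inl rfl, hx⟩
    · exact ⟨Or.inr hxy, hy⟩
    · exact ⟨Or.inr hxz, hz⟩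
  have hcard : ({x, y, z} : Finset V).card = 3 := by
    rw [card_insert_of_notMem (by simp [hxy.ne, hxz.ne]),
      card_insert_of_notMem (by simp [hyz]), card_singleton]
  have := le_trans (hcard ▸ card_le_card hsub) (hB x)
  omega

lemma aux_inter_card (G : SimpleGraph V) [Fintype V] [DecidableEq V] [DecidableRel G.Adj]
    {B B' : Finset V} (hB : IsLimitedPacking G 2 B) (hB' : IsLimitedPacking Gᶜ 2 B') :
    (B ∩ B').card ≤ 2 := by
  by_contra h
  push_neg at h
  -- extract three distinct elements of B ∩ B'
  obtain ⟨x, hxS⟩ : (B ∩ B').Nonempty := card_pos.mp (by omega)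
  have h2 : 1 < ((B ∩ B').erase x).card := by
    have := card_erase_of_mem hxS
    omega
  obtain ⟨y, hyE, z, hzE, hyz⟩ := Finset.one_lt_card.mp h2
  have hyS := mem_of_mem_erase hyE
  have hzS := mem_of_mem_erase hzE
  have hxy : x ≠ y := fun e => (ne_of_mem_erase hyE) e.symm
  have hxz : x ≠ z := fun e => (ne_of_mem_erase hzE) e.symm
  have hxB := (mem_inter.mp hxS).1; have hxB' := (mem_inter.mp hxS).2
  have hyB := (mem_inter.mp hyS).1; have hyB' := (mem_inter.mp hyS).2
  have hzB := (mem_inter.mp hzS).1; have hzB' := (mem_inter.mp hzS).2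
  have hc : ∀ a b : V, a ≠ b → ¬ G.Adj a b → Gᶜ.Adj a b := by
    intro a b hab hn
    exact (SimpleGraph.compl_adj G a b).mpr ⟨hab, hn⟩
  by_cases h1 : G.Adj x y
  · by_cases h2' : G.Adj x z
    · exact aux_two_nbrs G hB h1 h2' hyz hxB hyB hzB
    · by_cases h3 : G.Adj y z
      · exact aux_two_nbrs G hB h1.symm h3 hxz hyB hxB hzB
      · exact aux_two_nbrs Gᶜ hB' (hc z x (Ne.symm hxz) (fun e => h2' e.symm))
          (hc z y (Ne.symm hyz) (fun e => h3 e.symm)) hxy hzB' hxB' hyB'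
  · by_cases h2' : G.Adj x z
    · by_cases h3 : G.Adj y z
      · exact aux_two_nbrs G hB h2'.symm h3.symm hxy hzB hxB hyB
      · exact aux_two_nbrs Gᶜ hB' (hc y x (Ne.symm hxy) (fun e => h1 e.symm))
          (hc y z hyz h3) hxz hyB' hxB' hzB'
    · exact aux_two_nbrs Gᶜ hB' (hc x y hxy h1) (hc x z hxz h2') hyz hxB' hyB' hzB'

lemma aux_key (G : SimpleGraph V) [Fintype V] [DecidableEq V] [DecidableRel G.Adj]
    {B B' : Finset V} (hB : IsLimitedPacking G 2 B) (hB' : IsLimitedPacking Gᶜ 2 B') :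
    B.card + B'.card ≤ Fintype.card V + 2 := by
  have h1 : (B ∪ B').card + (B ∩ B').card = B.card + B'.card :=
    card_union_add_card_inter B B'
  have h2 : (B ∪ B').card ≤ Fintype.card V := card_le_card (subset_univ _) |>.trans_eq
    (by simp)
  have h3 := aux_inter_card G hB hB'
  omega

/-- Nordhaus–Gaddum: for every graph `G` of order `n`, `L₂(G) + L₂(Ḡ) ≤ n + 2`. -/
theorem limitedPackingNumber_two_nordhaus_gaddum (G : SimpleGraph V) [Fintype V]
    [DecidableEq V] [DecidableRel G.Adj] :
    limitedPackingNumber G 2 + limitedPackingNumber Gᶜ 2 ≤ Fintype.card V + 2 := by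
  have hmem : ∀ (H : SimpleGraph V) (inst : DecidableRel H.Adj),
      limitedPackingNumber H 2 ∈ {m | ∃ B : Finset V, IsLimitedPacking H 2 B ∧ B.card = m} := by
    intro H inst
    apply Nat.sSup_mem
    · exact ⟨0, ∅, fun v => by simp, rfl⟩
    · refine ⟨Fintype.card V, fun m hm => ?_⟩
      obtain ⟨B, _, rfl⟩ := hm
      exact (card_le_card (subset_univ B)).trans_eq (by simp)
  obtain ⟨B, hB, hBc⟩ := hmem G ‹_›
  obtain ⟨B', hB', hBc'⟩ := hmem Gᶜ inferInstance
  rw [← hBc, ← hBc']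
  exact aux_key G hB hB'
end

section
/- Let G be a finite simple connected graph of order n ≥ 3 with ℓ pendant vertices and s support vertices, and let δ' be the minimum degree taken over all vertices of G that are not pendant vertices. Then the packing number satisfies ρ(G) ≤ (n − ℓ + δ'·s)/(1 + δ'). -/
open SimpleGraph Finset

variable {V : Type*}

/-- `B` is a packing in `G`: every closed neighborhood meets `B` in at most one vertex. -/
def IsPacking (G : SimpleGraph V) [Fintype V] [DecidableEq V] [DecidableRel G.Adj]
    (B : Finset V) : Prop :=
  ∀ v : V, (closedNbrFinset G v ∩ B).card ≤ 1

/-- The packing number `ρ(G)`: the maximum cardinality of a packing in `G`. -/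
noncomputable def packingNumber (G : SimpleGraph V) [Fintype V] [DecidableEq V]
    [DecidableRel G.Adj] : ℕ :=
  sSup {m | ∃ B : Finset V, IsPacking G B ∧ B.card = m}

lemma mem_closedNbrFinset {G : SimpleGraph V} [Fintype V] [DecidableEq V] [DecidableRel G.Adj]
    {v w : V} : v ∈ closedNbrFinset G w ↔ v = w ∨ G.Adj w v := by
  simp [closedNbrFinset]

lemma packing_disjoint {G : SimpleGraph V} [Fintype V] [DecidableEq V] [DecidableRel G.Adj]
    {B : Finset V} (hB : IsPacking G B) {b₁ b₂ : V} (h₁ : b₁ ∈ B) (h₂ : b₂ ∈ B)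
    (hne : b₁ ≠ b₂) : Disjoint (closedNbrFinset G b₁) (closedNbrFinset G b₂) := by
  rw [Finset.disjoint_left]
  intro v hv₁ hv₂
  have hb₁ : b₁ ∈ closedNbrFinset G v ∩ B := by
    rw [Finset.mem_inter, mem_closedNbrFinset]
    rw [mem_closedNbrFinset] at hv₁
    exact ⟨hv₁.imp Eq.symm (fun h => h.symm), h₁⟩
  have hb₂ : b₂ ∈ closedNbrFinset G v ∩ B := by
    rw [Finset.mem_inter, mem_closedNbrFinset]
    rw [mem_closedNbrFinset] at hv₂
    exact ⟨hv₂.imp Eq.symm (fun h => h.symm), h₂⟩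
  have : ({b₁, b₂} : Finset V) ⊆ closedNbrFinset G v ∩ B := by
    intro x hx
    rcases Finset.mem_insert.mp hx with h | h
    · exact h ▸ hb₁
    · exact (Finset.mem_singleton.mp h) ▸ hb₂
  have h2 : 2 ≤ (closedNbrFinset G v ∩ B).card := by
    calc 2 = ({b₁, b₂} : Finset V).card := (Finset.card_pair hne).symm
    _ ≤ _ := Finset.card_le_card this
  have := hB v
  omega

lemma sum_inter_card_le {G : SimpleGraph V} [Fintype V] [DecidableEq V] [DecidableRel G.Adj]
    {B : Finset V} (hB : IsPacking G B) (T : Finset V) :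
    ∑ b ∈ B, ((closedNbrFinset G b) ∩ T).card ≤ T.card := by
  rw [← Finset.card_biUnion]
  · exact Finset.card_le_card (Finset.biUnion_subset.mpr fun b _ => Finset.inter_subset_right)
  · intro b₁ h₁ b₂ h₂ hne
    exact (packing_disjoint hB h₁ h₂ hne).mono Finset.inter_subset_left Finset.inter_subset_left

/-- In a connected graph of order at least 3, the neighbor of a pendant vertex is
not pendant. -/
lemma support_not_pendant {G : SimpleGraph V} [Fintype V] [DecidableEq V] [DecidableRel G.Adj]
    (hconn : G.Connected) (hn : 3 ≤ Fintype.card V) {b u : V} (hadj : G.Adj b u)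
    (hb : G.degree b = 1) : G.degree u ≠ 1 := by
  intro hu
  have hNu : G.neighborFinset u = {b} := by
    obtain ⟨a, ha⟩ := Finset.card_eq_one.mp (by rw [← G.card_neighborFinset_eq_degree] at hu; exact hu)
    have : b ∈ G.neighborFinset u := by rw [SimpleGraph.mem_neighborFinset]; exact hadj.symm
    rw [ha] at this ⊢
    rw [Finset.mem_singleton] at this
    rw [this]
  have hNb : G.neighborFinset b = {u} := by
    obtain ⟨a, ha⟩ := Finset.card_eq_one.mp (by rw [← G.card_neighborFinset_eq_degree] at hb; exact hb)
    have : u ∈ G.neighborFinset b := by rw [SimpleGraph.mem_neighborFinset]; exact hadj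
    rw [ha] at this ⊢
    rw [Finset.mem_singleton] at this
    rw [this]
  have key : ∀ x w : V, G.Walk x w → (x = u ∨ x = b) → (w = u ∨ w = b) := by
    intro x w p
    induction p with
    | nil => exact id
    | @cons x y w h p ih =>
      intro hx
      apply ih
      rcases hx with rfl | rfl
      · right
        have : y ∈ G.neighborFinset x := by rw [SimpleGraph.mem_neighborFinset]; exact h
        rw [hNu] at this; exact Finset.mem_singleton.mp this
      · left
        have : y ∈ G.neighborFinset x := by rw [SimpleGraph.mem_neighborFinset]; exact h
        rw [hNb] at this; exact Finset.mem_singleton.mp this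
  -- find a third vertex
  have h2 : ({u, b} : Finset V).card ≤ 2 := by
    apply le_trans (Finset.card_insert_le _ _); simp
  have hpos : 0 < ((Finset.univ : Finset V) \ {u, b}).card := by
    rw [Finset.card_sdiff_of_subset (Finset.subset_univ _), Finset.card_univ]
    omega
  obtain ⟨w, hw⟩ := Finset.card_pos.mp hpos
  rw [Finset.mem_sdiff] at hw
  replace hw := hw.2
  obtain ⟨p⟩ := hconn.preconnected u w
  have := key u w p (Or.inl rfl)
  simp at hw
  tauto

/-- The main counting argument, in ℕ. -/
lemma packing_count {G : SimpleGraph V} [Fintype V] [DecidableEq V] [DecidableRel G.Adj]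
    (hconn : G.Connected) (hn : 3 ≤ Fintype.card V) (δ' : ℕ)
    (hδ' : δ' = sInf {d : ℕ | ∃ v : V, G.degree v ≠ 1 ∧ G.degree v = d})
    {B : Finset V} (hB : IsPacking G B) :
    (1 + δ') * B.card + (Finset.univ.filter fun v => G.degree v = 1).card ≤
      Fintype.card V +
        δ' * (Finset.univ.filter fun v : V => ∃ u, G.Adj v u ∧ G.degree u = 1).card := by
  classical
  set P : Finset V := Finset.univ.filter fun v => G.degree v = 1 with hPdef
  set S : Finset V := Finset.univ.filter (fun v : V => ∃ u, G.Adj v u ∧ G.degree u = 1) with hSdef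
  have hmemP : ∀ v, v ∈ P ↔ G.degree v = 1 := by intro v; simp [hPdef]
  have hmemS : ∀ v, v ∈ S ↔ ∃ u, G.Adj v u ∧ G.degree u = 1 := by intro v; simp [hSdef]
  set B1 : Finset V := B.filter (fun b => b ∈ P ∨ b ∈ S) with hB1def
  set B2 : Finset V := B.filter (fun b => ¬(b ∈ P ∨ b ∈ S)) with hB2def
  have hsplit : B1.card + B2.card = B.card := Finset.card_filter_add_card_filter_not _
  -- Part A : B1.card ≤ S.card
  have hA : B1.card ≤ S.card := by
    calc B1.card = ∑ b ∈ B1, 1 := by simp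
    _ ≤ ∑ b ∈ B1, ((closedNbrFinset G b) ∩ S).card := by
        apply Finset.sum_le_sum
        intro b hb
        rw [Finset.mem_filter] at hb
        rcases hb.2 with hbP | hbS
        · rw [hmemP] at hbP
          obtain ⟨u, hu⟩ := G.degree_pos_iff_exists_adj b |>.mp (by omega)
          have : u ∈ (closedNbrFinset G b) ∩ S := by
            rw [Finset.mem_inter, mem_closedNbrFinset, hmemS]
            exact ⟨Or.inr hu, b, hu.symm, hbP⟩
          exact Finset.card_pos.mpr ⟨u, this⟩
        · have : b ∈ (closedNbrFinset G b) ∩ S := by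
            rw [Finset.mem_inter, mem_closedNbrFinset]
            exact ⟨Or.inl rfl, hbS⟩
          exact Finset.card_pos.mpr ⟨b, this⟩
    _ ≤ ∑ b ∈ B, ((closedNbrFinset G b) ∩ S).card :=
        Finset.sum_le_sum_of_subset (Finset.filter_subset _ _)
    _ ≤ S.card := sum_inter_card_le hB S
  -- Part B : B1.card + (1+δ') * B2.card ≤ (univ \ P).card
  have hclosedcard : ∀ b : V, (closedNbrFinset G b).card = 1 + G.degree b := by
    intro b
    rw [closedNbrFinset, Finset.card_insert_of_notMem (by simp), G.card_neighborFinset_eq_degree]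
    omega
  have hBnd : B1.card + (1 + δ') * B2.card ≤ (Finset.univ \ P).card := by
    calc B1.card + (1 + δ') * B2.card
        = ∑ b ∈ B1, 1 + ∑ b ∈ B2, (1 + δ') := by simp [mul_comm]
    _ ≤ ∑ b ∈ B1, ((closedNbrFinset G b) ∩ (Finset.univ \ P)).card +
          ∑ b ∈ B2, ((closedNbrFinset G b) ∩ (Finset.univ \ P)).card := by
        apply Nat.add_le_add
        · apply Finset.sum_le_sum
          intro b hb
          rw [hB1def, Finset.mem_filter] at hb
          by_cases hbP : b ∈ P
          · rw [hmemP] at hbP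
            obtain ⟨u, hu⟩ := G.degree_pos_iff_exists_adj b |>.mp (by omega)
            have hu1 : G.degree u ≠ 1 := support_not_pendant hconn hn hu hbP
            have : u ∈ (closedNbrFinset G b) ∩ (Finset.univ \ P) := by
              rw [Finset.mem_inter, mem_closedNbrFinset, Finset.mem_sdiff]
              exact ⟨Or.inr hu, Finset.mem_univ u, fun h => hu1 ((hmemP u).mp h)⟩
            exact Finset.card_pos.mpr ⟨u, this⟩
          · have : b ∈ (closedNbrFinset G b) ∩ (Finset.univ \ P) := by
              rw [Finset.mem_inter, mem_closedNbrFinset, Finset.mem_sdiff]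
              exact ⟨Or.inl rfl, Finset.mem_univ b, hbP⟩
            exact Finset.card_pos.mpr ⟨b, this⟩
        · apply Finset.sum_le_sum
          intro b hb
          rw [hB2def, Finset.mem_filter] at hb
          push_neg at hb
          obtain ⟨hbB, hbP, hbS⟩ := hb
          have hsub : closedNbrFinset G b ⊆ Finset.univ \ P := by
            intro x hx
            rw [mem_closedNbrFinset] at hx
            rw [Finset.mem_sdiff]
            refine ⟨Finset.mem_univ x, fun hxP => ?_⟩
            rw [hmemP] at hxP
            rcases hx with rfl | hadj
            · exact hbP ((hmemP x).mpr hxP)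
            · exact hbS ((hmemS b).mpr ⟨x, hadj, hxP⟩)
          rw [Finset.inter_eq_left.mpr hsub, hclosedcard]
          have hδle : δ' ≤ G.degree b := by
            rw [hδ']
            exact Nat.sInf_le ⟨b, fun h => hbP ((hmemP b).mpr h), rfl⟩
          omega
    _ = ∑ b ∈ B, ((closedNbrFinset G b) ∩ (Finset.univ \ P)).card := by
        rw [hB1def, hB2def, Finset.sum_filter_add_sum_filter_not]
    _ ≤ (Finset.univ \ P).card := sum_inter_card_le hB _
  have hPV : (Finset.univ \ P).card + P.card = Fintype.card V := by
    rw [Finset.card_sdiff_of_subset (Finset.subset_univ P), Finset.card_univ]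
    have := Finset.card_le_univ P
    omega
  -- combine
  have : (1 + δ') * B.card = B1.card + (1 + δ') * B2.card + δ' * B1.card := by
    rw [← hsplit]; ring
  rw [this]
  have hδB1 : δ' * B1.card ≤ δ' * S.card := Nat.mul_le_mul_left _ hA
  omega

/-- If `G` is connected of order `n ≥ 3` with `ℓ` pendant vertices and `s` support
vertices, and `δ'` is the minimum degree over non-pendant vertices, then
`ρ(G) ≤ (n − ℓ + δ'·s) / (1 + δ')`. -/
theorem packingNumber_le (G : SimpleGraph V) [Fintype V] [DecidableEq V]
    [DecidableRel G.Adj] (hconn : G.Connected) (hn : 3 ≤ Fintype.card V)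
    (δ' : ℕ) (hδ' : δ' = sInf {d : ℕ | ∃ v : V, G.degree v ≠ 1 ∧ G.degree v = d}) :
    (packingNumber G : ℝ) ≤
      ((Fintype.card V : ℝ) - ({v : V | G.degree v = 1}.ncard : ℝ) +
          (δ' : ℝ) * ({v : V | ∃ u : V, G.Adj v u ∧ G.degree u = 1}.ncard : ℝ)) /
        (1 + (δ' : ℝ)) := by
  classical
  -- packingNumber is attained
  have hmem : packingNumber G ∈ {m | ∃ B : Finset V, IsPacking G B ∧ B.card = m} := by
    apply Nat.sSup_mem
    · exact ⟨0, ∅, fun v => by simp, rfl⟩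
    · exact ⟨Fintype.card V, fun m ⟨B, _, hc⟩ => hc ▸ Finset.card_le_univ B⟩
  obtain ⟨B, hB, hcard⟩ := hmem
  have hP : ({v : V | G.degree v = 1} : Set V).ncard
      = (Finset.univ.filter fun v : V => G.degree v = 1).card := by
    rw [← Set.ncard_coe_finset]
    congr 1
    ext v; simp
  have hS : ({v : V | ∃ u : V, G.Adj v u ∧ G.degree u = 1} : Set V).ncard
      = (Finset.univ.filter fun v : V => ∃ u, G.Adj v u ∧ G.degree u = 1).card := by
    rw [← Set.ncard_coe_finset]
    congr 1
    ext v; simp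
  have hkey := packing_count hconn hn δ' hδ' hB
  rw [le_div_iff₀ (by positivity)]
  rw [hP, hS, ← hcard]
  have hkeyR := (Nat.cast_le (α := ℝ)).mpr hkey
  push_cast at hkeyR ⊢
  linarith
end

section
/- For every finite tree T, the domination number equals the packing number: γ(T) = ρ(T). -/
set_option linter.unusedSectionVars false
set_option maxHeartbeats 1000000


open SimpleGraph Finset

variable {V : Type*}

/-- `S` is a dominating set in `G`. -/
def IsDominatingSet (G : SimpleGraph V) (S : Finset V) : Prop :=
  ∀ v ∉ S, ∃ u ∈ S, G.Adj u v

/-- The domination number `γ(G)`: the minimum cardinality of a dominating set. -/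
noncomputable def dominationNumber (G : SimpleGraph V) [Fintype V] : ℕ :=
  sInf {m | ∃ S : Finset V, IsDominatingSet G S ∧ S.card = m}

section MeirMoon

variable [Fintype V] [DecidableEq V] (T : SimpleGraph V) [DecidableRel T.Adj]

/-- Relative packing: `B ⊆ s` and for each `v ∈ s` at most one element of `B` is in `N[v]`. -/
def RelPack (s B : Finset V) : Prop :=
  B ⊆ s ∧ ∀ v ∈ s, ∀ b1 ∈ B, ∀ b2 ∈ B,
    (b1 = v ∨ T.Adj v b1) → (b2 = v ∨ T.Adj v b2) → b1 = b2

/-- Relative dominating set for the induced subgraph on `s`. -/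
def RelDom (s S : Finset V) : Prop :=
  S ⊆ s ∧ ∀ v ∈ s, v ∉ S → ∃ u ∈ S, T.Adj u v

/-- `x` is a leaf of the induced subgraph on `s` whose unique neighbor is `u`. -/
def IsLeafAt (s : Finset V) (x u : V) : Prop :=
  x ∈ s ∧ u ∈ s ∧ T.Adj u x ∧ ∀ w ∈ s, T.Adj w x → w = u

variable {T}

/-- any relative packing is at most as large as any relative dominating set. -/
lemma relPack_card_le_relDom_card {s B S : Finset V} (hB : RelPack T s B)
    (hS : RelDom T s S) : B.card ≤ S.card := by
  classical
  have hdom : ∀ b ∈ B, ∃ u, u ∈ S ∧ (b = u ∨ T.Adj u b) := by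
    intro b hb
    by_cases hbS : b ∈ S
    · exact ⟨b, hbS, Or.inl rfl⟩
    · obtain ⟨u, hu, hadj⟩ := hS.2 b (hB.1 hb) hbS
      exact ⟨u, hu, Or.inr hadj⟩
  set f : V → V := fun b => if h : ∃ u, u ∈ S ∧ (b = u ∨ T.Adj u b) then h.choose else b
    with hf
  apply Finset.card_le_card_of_injOn f
  · intro b hb
    have h := hdom b hb
    simp only [hf, dif_pos h]
    exact h.choose_spec.1
  · intro b1 hb1 b2 hb2 heq
    have h1 := hdom b1 hb1
    have h2 := hdom b2 hb2
    simp only [hf, dif_pos h1, dif_pos h2] at heq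
    have s1 := h1.choose_spec
    have s2 := h2.choose_spec
    set u := h1.choose
    rw [← heq] at s2
    exact hB.2 u (hS.1 s1.1) b1 hb1 b2 hb2 s1.2 s2.2

lemma not_two_paths (hac : T.IsAcyclic) {a b : V} {p q : T.Walk a b}
    (hp : p.IsPath) (hq : q.IsPath) (hne : p ≠ q) : False := by
  have := hac.path_unique ⟨p, hp⟩ ⟨q, hq⟩
  exact hne (congrArg Subtype.val this)

/-- In an acyclic graph, if `u - w - ⋯ - v` is a path and `x` is a neighbor of `u`
occurring in the walk from `w`, then `x = w`. -/
lemma helper_adj_support (hac : T.IsAcyclic) {u w v x : V} (h : T.Adj u w)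
    {q : T.Walk w v} (hq : (SimpleGraph.Walk.cons h q).IsPath) (hadj : T.Adj u x)
    (hx : x ∈ q.support) : x = w := by
  by_contra hxw
  have hqp : q.IsPath := hq.of_cons
  have hu : u ∉ q.support := ((SimpleGraph.Walk.cons_isPath_iff h q).mp hq).2
  set r := q.takeUntil x hx with hr'
  have hr : r.IsPath := hqp.takeUntil hx
  have hrpos : r.length ≠ 0 := fun h0 => hxw (SimpleGraph.Walk.eq_of_length_eq_zero h0).symm
  have h1 : (SimpleGraph.Walk.cons hadj SimpleGraph.Walk.nil : T.Walk u x).IsPath := by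
    simp [SimpleGraph.Walk.cons_isPath_iff, hadj.ne]
  have h2 : (SimpleGraph.Walk.cons h r).IsPath :=
    hr.cons (fun hu' => hu ((SimpleGraph.Walk.support_takeUntil_subset q hx) hu'))
  apply not_two_paths hac h1 h2
  intro hEq
  have := congrArg SimpleGraph.Walk.length hEq
  simp only [SimpleGraph.Walk.length_cons, SimpleGraph.Walk.length_nil] at this
  omega

/-- In an acyclic graph, a path cannot be shortcut: if `e` lies on path `p` from `u`, and
`q` is another path from `u` to `e` containing a vertex not on `p`, contradiction. -/
lemma no_detour (hac : T.IsAcyclic) {u b e : V} (p : T.Walk u b) (hp : p.IsPath)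
    (he : e ∈ p.support) (q : T.Walk u e) (hq : q.IsPath) {x : V}
    (hx : x ∈ q.support) (hxp : x ∉ p.support) : False := by
  apply not_two_paths hac (hp.takeUntil he) hq
  intro hEq
  rw [← hEq] at hx
  exact hxp (SimpleGraph.Walk.support_takeUntil_subset p he hx)


/-- Reduction when some vertex `u` has two leaves `x ≠ x'` in `s`: drop `x`. -/
lemma reduceC2 {s : Finset V} {u x x' : V} (hxx' : x ≠ x')
    (hx : IsLeafAt T s x u) (hx' : IsLeafAt T s x' u)
    {B' S' : Finset V} (hB' : RelPack T (s.erase x) B') (hS' : RelDom T (s.erase x) S')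
    (hc : S'.card ≤ B'.card) :
    ∃ B S : Finset V, RelPack T s B ∧ RelDom T s S ∧ S.card ≤ B.card := by
  classical
  obtain ⟨hxs, hus, hux, hleafx⟩ := hx
  obtain ⟨hx's, -, hux', hleafx'⟩ := hx'
  have hBs : RelPack T s B' := by
    refine ⟨hB'.1.trans (s.erase_subset x), ?_⟩
    intro v hv b1 hb1 b2 hb2 h1 h2
    by_cases hvx : v = x
    · rw [hvx] at h1 h2
      have e1 : b1 = u := by
        rcases h1 with h1 | h1
        · exact absurd h1 (Finset.mem_erase.mp (hB'.1 hb1)).1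
        · exact hleafx b1 ((s.erase_subset x) (hB'.1 hb1)) h1.symm
      have e2 : b2 = u := by
        rcases h2 with h2 | h2
        · exact absurd h2 (Finset.mem_erase.mp (hB'.1 hb2)).1
        · exact hleafx b2 ((s.erase_subset x) (hB'.1 hb2)) h2.symm
      rw [e1, e2]
    · exact hB'.2 v (Finset.mem_erase.mpr ⟨hvx, hv⟩) b1 hb1 b2 hb2 h1 h2
  by_cases hu : u ∈ S'
  · refine ⟨B', S', hBs, ⟨hS'.1.trans (s.erase_subset x), ?_⟩, hc⟩
    intro v hv hvS
    by_cases hvx : v = x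
    · exact ⟨u, hu, by rw [hvx]; exact hux⟩
    · exact hS'.2 v (Finset.mem_erase.mpr ⟨hvx, hv⟩) hvS
  · have hx'S : x' ∈ S' := by
      by_contra hx'S
      obtain ⟨w, hw, hwadj⟩ := hS'.2 x' (Finset.mem_erase.mpr ⟨fun h => hxx' h.symm, hx's⟩) hx'S
      exact hu ((hleafx' w ((s.erase_subset x) (hS'.1 hw)) hwadj) ▸ hw)
    refine ⟨B', insert u (S'.erase x'), hBs, ⟨?_, ?_⟩, ?_⟩
    · intro y hy
      rcases Finset.mem_insert.mp hy with rfl | hy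
      · exact hus
      · exact (s.erase_subset x) (hS'.1 (S'.erase_subset x' hy))
    · intro v hv hvS
      have hvu : v ≠ u := fun h => hvS (by rw [h]; exact Finset.mem_insert_self u _)
      by_cases hvx : v = x
      · exact ⟨u, Finset.mem_insert_self u _, by rw [hvx]; exact hux⟩
      by_cases hvx' : v = x'
      · exact ⟨u, Finset.mem_insert_self u _, by rw [hvx']; exact hux'⟩
      have hvS' : v ∉ S' := by
        intro hvS'
        exact hvS (Finset.mem_insert.mpr (Or.inr (Finset.mem_erase.mpr ⟨hvx', hvS'⟩)))
      obtain ⟨w, hw, hwadj⟩ := hS'.2 v (Finset.mem_erase.mpr ⟨hvx, hv⟩) hvS'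
      have hwx' : w ≠ x' := by
        rintro rfl
        exact hvu (hleafx' v hv hwadj.symm)
      exact ⟨w, Finset.mem_insert.mpr (Or.inr (Finset.mem_erase.mpr ⟨hwx', hw⟩)), hwadj⟩
    · calc (insert u (S'.erase x')).card ≤ (S'.erase x').card + 1 := Finset.card_insert_le _ _
        _ = S'.card - 1 + 1 := by rw [Finset.card_erase_of_mem hx'S]
        _ = S'.card := Nat.succ_pred_eq_of_pos (Finset.card_pos.mpr ⟨x', hx'S⟩)
        _ ≤ B'.card := hc

/-- Reduction when the closed star of `u` in `s` is a union of connected components. -/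
lemma reduceC3 {s : Finset V} {u : V} (hus : u ∈ s)
    (hclosed : ∀ x, (x = u ∨ (x ∈ s ∧ T.Adj u x)) → ∀ w ∈ s, T.Adj w x →
      (w = u ∨ (w ∈ s ∧ T.Adj u w)))
    {B' S' : Finset V}
    (hB' : RelPack T (s.filter (fun y => ¬(y = u ∨ T.Adj u y))) B')
    (hS' : RelDom T (s.filter (fun y => ¬(y = u ∨ T.Adj u y))) S')
    (hc : S'.card ≤ B'.card) :
    ∃ B S : Finset V, RelPack T s B ∧ RelDom T s S ∧ S.card ≤ B.card := by
  classical
  set s' := s.filter (fun y => ¬(y = u ∨ T.Adj u y)) with hs'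
  have hs'sub : s' ⊆ s := Finset.filter_subset _ _
  have hus' : u ∉ s' := by simp [hs']
  have huB' : u ∉ B' := fun h => hus' (hB'.1 h)
  have huS' : u ∉ S' := fun h => hus' (hS'.1 h)
  refine ⟨insert u B', insert u S', ⟨?_, ?_⟩, ⟨?_, ?_⟩, ?_⟩
  · intro y hy
    rcases Finset.mem_insert.mp hy with rfl | hy
    · exact hus
    · exact hs'sub (hB'.1 hy)
  · intro v hv b1 hb1 b2 hb2 h1 h2
    by_cases hvstar : v = u ∨ T.Adj u v
    · have key : ∀ b ∈ insert u B', (b = v ∨ T.Adj v b) → b = u := by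
        intro b hb hbv
        rcases Finset.mem_insert.mp hb with rfl | hb
        · rfl
        · exfalso
          have hbs' : b ∈ s' := hB'.1 hb
          rcases hbv with rfl | hbv
          · simp only [hs', Finset.mem_filter] at hbs'
            exact hbs'.2 hvstar
          · have hcl := hclosed v (hvstar.imp id (fun h => ⟨hv, h⟩)) b (hs'sub hbs') hbv.symm
            simp only [hs', Finset.mem_filter] at hbs'
            rcases hcl with rfl | hcl
            · exact hbs'.2 (Or.inl rfl)
            · exact hbs'.2 (Or.inr hcl.2)
      rw [key b1 hb1 h1, key b2 hb2 h2]
    · have hvs' : v ∈ s' := by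
        simp only [hs', Finset.mem_filter]
        exact ⟨hv, hvstar⟩
      have key : ∀ b ∈ insert u B', (b = v ∨ T.Adj v b) → b ∈ B' := by
        intro b hb hbv
        rcases Finset.mem_insert.mp hb with rfl | hb
        · exfalso
          rcases hbv with rfl | hbv
          · exact hvstar (Or.inl rfl)
          · exact hvstar (Or.inr hbv.symm)
        · exact hb
      exact hB'.2 v hvs' b1 (key b1 hb1 h1) b2 (key b2 hb2 h2) h1 h2
  · intro y hy
    rcases Finset.mem_insert.mp hy with rfl | hy
    · exact hus
    · exact hs'sub (hS'.1 hy)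
  · intro v hv hvS
    have hvu : v ≠ u := fun h => hvS (by rw [h]; exact Finset.mem_insert_self u _)
    by_cases hvstar : v = u ∨ T.Adj u v
    · rcases hvstar with rfl | hvstar
      · exact absurd rfl hvu
      · exact ⟨u, Finset.mem_insert_self u _, hvstar⟩
    · have hvs' : v ∈ s' := by
        simp only [hs', Finset.mem_filter]
        exact ⟨hv, hvstar⟩
      have hvS' : v ∉ S' := fun h => hvS (Finset.mem_insert.mpr (Or.inr h))
      obtain ⟨w, hw, hwadj⟩ := hS'.2 v hvs' hvS'
      exact ⟨w, Finset.mem_insert.mpr (Or.inr hw), hwadj⟩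
  · rw [Finset.card_insert_of_notMem huB', Finset.card_insert_of_notMem huS']
    omega


/-- Reduction 4a: `v0` the unique leaf at `v1`, `deg v1 = 2` with other neighbor `v2`,
and `v2` has a leaf `c ≠ v1`.  Remove `{v0, v1}`. -/
lemma reduce4a {s : Finset V} {v0 v1 v2 c : V}
    (hv0 : IsLeafAt T s v0 v1)
    (hv1nb : ∀ w ∈ s, T.Adj w v1 → w = v0 ∨ w = v2)
    (hv12 : T.Adj v1 v2) (hv2s : v2 ∈ s) (h02 : v0 ≠ v2)
    (hcl : IsLeafAt T s c v2) (hcv1 : c ≠ v1)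
    {B' S' : Finset V} (hB' : RelPack T ((s.erase v0).erase v1) B')
    (hS' : RelDom T ((s.erase v0).erase v1) S') (hc : S'.card ≤ B'.card) :
    ∃ B S : Finset V, RelPack T s B ∧ RelDom T s S ∧ S.card ≤ B.card := by
  classical
  obtain ⟨hv0s, hv1s, h10, hleaf0⟩ := hv0
  obtain ⟨hcs, -, h2c, hleafc⟩ := hcl
  set s' := (s.erase v0).erase v1 with hs'
  have hs'sub : s' ⊆ s := (Finset.erase_subset _ _).trans (Finset.erase_subset _ _)
  have hmem_s' : ∀ y, y ∈ s' ↔ (y ∈ s ∧ y ≠ v0 ∧ y ≠ v1) := by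
    intro y
    simp only [hs', Finset.mem_erase]
    tauto
  have h01 : T.Adj v0 v1 := h10.symm
  have hcv0 : c ≠ v0 := by
    rintro rfl
    exact T.irrefl (hleaf0 v2 hv2s h2c ▸ hv12)
  have hcv2 : c ≠ v2 := fun h => T.irrefl (h ▸ h2c)
  have hv0n1 : v0 ≠ v1 := h01.ne
  have hv1n2 : v1 ≠ v2 := hv12.ne
  have hcs' : c ∈ s' := (hmem_s' c).mpr ⟨hcs, hcv0, hcv1⟩
  have hv2s' : v2 ∈ s' := (hmem_s' v2).mpr ⟨hv2s, fun h => h02 h.symm, fun h => hv1n2 h.symm⟩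
  have hv0ns' : v0 ∉ s' := fun h => ((hmem_s' v0).mp h).2.1 rfl
  have hv1ns' : v1 ∉ s' := fun h => ((hmem_s' v1).mp h).2.2 rfl
  -- the swapped packing
  set B'' := if v2 ∈ B' then insert c (B'.erase v2) else B' with hB''def
  have hB''sub : B'' ⊆ s' := by
    rw [hB''def]
    split
    · intro y hy
      rcases Finset.mem_insert.mp hy with rfl | hy
      · exact hcs'
      · exact hB'.1 (Finset.erase_subset _ _ hy)
    · exact hB'.1
  have hv2nB'' : v2 ∉ B'' := by
    rw [hB''def]
    split
    · intro hy
      rcases Finset.mem_insert.mp hy with h | hy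
      · exact hcv2 h.symm
      · exact (Finset.mem_erase.mp hy).1 rfl
    · assumption
  have hB''pack : RelPack T s' B'' := by
    refine ⟨hB''sub, ?_⟩
    rw [hB''def]
    split
    case isTrue hv2B' =>
      have hcB' : c ∉ B' := fun hcB' =>
        hcv2 (hB'.2 v2 hv2s' c hcB' v2 hv2B' (Or.inr h2c) (Or.inl rfl))
      have hkey : ∀ b ∈ B'.erase v2, (b = v2 ∨ T.Adj v2 b) → False := by
        intro b hb hbv
        have := hB'.2 v2 hv2s' b (Finset.erase_subset _ _ hb) v2 hv2B' hbv (Or.inl rfl)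
        exact (Finset.mem_erase.mp hb).1 this
      have main : ∀ v ∈ s', ∀ b ∈ B'.erase v2,
          (c = v ∨ T.Adj v c) → (b = v ∨ T.Adj v b) → False := by
        intro v hv b hb hcv hbv
        rcases hcv with hcv | hcv
        · rcases hbv with hbv | hbv
          · have hbc : b = c := hbv.trans hcv.symm
            exact hcB' (by rw [← hbc]; exact Finset.erase_subset _ _ hb)
          · have hcb : T.Adj c b := by rw [hcv]; exact hbv
            have := hleafc b (hs'sub (hB'.1 (Finset.erase_subset _ _ hb))) hcb.symm
            exact (Finset.mem_erase.mp hb).1 this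
        · have hvv2 : v = v2 := hleafc v (hs'sub hv) hcv
          exact hkey b hb (by rw [← hvv2]; exact hbv)
      intro v hv b1 hb1 b2 hb2 h1 h2
      rcases Finset.mem_insert.mp hb1 with hb1c | hb1 <;>
        rcases Finset.mem_insert.mp hb2 with hb2c | hb2
      · rw [hb1c, hb2c]
      · rw [hb1c] at h1
        exact absurd (main v hv b2 hb2 h1 h2) (fun h => h)
      · rw [hb2c] at h2
        exact absurd (main v hv b1 hb1 h2 h1) (fun h => h)
      · exact hB'.2 v hv b1 (Finset.erase_subset _ _ hb1) b2 (Finset.erase_subset _ _ hb2) h1 h2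
    case isFalse hv2B' =>
      exact hB'.2
  have hcard'' : B''.card = B'.card := by
    rw [hB''def]
    split
    case isTrue hv2B' =>
      have hcB' : c ∉ B' := fun hcB' =>
        hcv2 (hB'.2 v2 hv2s' c hcB' v2 hv2B' (Or.inr h2c) (Or.inl rfl))
      rw [Finset.card_insert_of_notMem (fun h => hcB' (Finset.erase_subset _ _ h)),
        Finset.card_erase_of_mem hv2B']
      exact Nat.succ_pred_eq_of_pos (Finset.card_pos.mpr ⟨v2, hv2B'⟩)
    case isFalse => rfl
  have hv0nB'' : v0 ∉ B'' := fun h => hv0ns' (hB''sub h)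
  refine ⟨insert v0 B'', insert v1 S', ⟨?_, ?_⟩, ⟨?_, ?_⟩, ?_⟩
  · intro y hy
    rcases Finset.mem_insert.mp hy with rfl | hy
    · exact hv0s
    · exact hs'sub (hB''sub hy)
  · intro v hv b1 hb1 b2 hb2 h1 h2
    by_cases hvs' : v ∈ s'
    · have key : ∀ b ∈ insert v0 B'', (b = v ∨ T.Adj v b) → b ∈ B'' := by
        intro b hb hbv
        rcases Finset.mem_insert.mp hb with hbv0 | hb
        · exfalso
          rcases hbv with hbv | hbv
          · rw [← hbv, hbv0] at hvs'
            exact hv0ns' hvs'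
          · have hA : T.Adj v v0 := by rw [← hbv0]; exact hbv
            have : v = v1 := hleaf0 v (hs'sub hvs') hA
            rw [this] at hvs'
            exact hv1ns' hvs'
        · exact hb
      exact hB''pack.2 v hvs' b1 (key b1 hb1 h1) b2 (key b2 hb2 h2) h1 h2
    · have hv01 : v = v0 ∨ v = v1 := by
        by_contra hcon
        push_neg at hcon
        exact hvs' ((hmem_s' v).mpr ⟨hv, hcon.1, hcon.2⟩)
      have key : ∀ b ∈ insert v0 B'', (b = v ∨ T.Adj v b) → b = v0 := by
        intro b hb hbv
        rcases Finset.mem_insert.mp hb with hbv0 | hb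
        · exact hbv0
        · exfalso
          have hbs : b ∈ s' := hB''sub hb
          rcases hv01 with hv' | hv'
          · rcases hbv with hbv | hbv
            · rw [hbv, hv'] at hbs
              exact hv0ns' hbs
            · have hA : T.Adj v0 b := by rw [← hv']; exact hbv
              have : b = v1 := hleaf0 b (hs'sub hbs) hA.symm
              exact hv1ns' (this ▸ hbs)
          · rcases hbv with hbv | hbv
            · rw [hbv, hv'] at hbs
              exact hv1ns' hbs
            · have hA : T.Adj b v1 := by rw [← hv']; exact hbv.symm
              rcases hv1nb b (hs'sub hbs) hA with h | h
              · exact hv0ns' (h ▸ hbs)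
              · exact hv2nB'' (h ▸ hb)
      rw [key b1 hb1 h1, key b2 hb2 h2]
  · intro y hy
    rcases Finset.mem_insert.mp hy with rfl | hy
    · exact hv1s
    · exact hs'sub (hS'.1 hy)
  · intro v hv hvS
    have hvv1 : v ≠ v1 := fun h => hvS (by rw [h]; exact Finset.mem_insert_self _ _)
    by_cases hvv0 : v = v0
    · exact ⟨v1, Finset.mem_insert_self _ _, by rw [hvv0]; exact h10⟩
    · have hvs' : v ∈ s' := (hmem_s' v).mpr ⟨hv, hvv0, hvv1⟩
      have hvS' : v ∉ S' := fun h => hvS (Finset.mem_insert.mpr (Or.inr h))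
      obtain ⟨w, hw, hwadj⟩ := hS'.2 v hvs' hvS'
      exact ⟨w, Finset.mem_insert.mpr (Or.inr hw), hwadj⟩
  · have h1 : v1 ∉ S' := fun h => hv1ns' (hS'.1 h)
    rw [Finset.card_insert_of_notMem h1, Finset.card_insert_of_notMem hv0nB'', hcard'']
    omega

/-- Reduction 4b: `v0` unique leaf at `v1`, `deg v1 = 2`, `v2`'s neighbors other than
`v1, v3` are non-leaves all of whose other neighbors are leaves.  Remove `{v0, v1, v2}`. -/
lemma reduce4b {s : Finset V} {v0 v1 v2 v3 : V}
    (hv0 : IsLeafAt T s v0 v1)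
    (hv1nb : ∀ w ∈ s, T.Adj w v1 → w = v0 ∨ w = v2)
    (hv12 : T.Adj v1 v2) (hv2s : v2 ∈ s) (h02 : v0 ≠ v2)
    (hv3s : v3 ∈ s) (h23 : T.Adj v2 v3) (h31 : v3 ≠ v1)
    (hch : ∀ c ∈ s, T.Adj v2 c → c ≠ v1 → c ≠ v3 →
      (∃ d ∈ s, T.Adj c d ∧ d ≠ v2) ∧
      (∀ d ∈ s, T.Adj c d → d ≠ v2 → ∀ w ∈ s, T.Adj w d → w = c))
    {B' S' : Finset V} (hB' : RelPack T (((s.erase v0).erase v1).erase v2) B')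
    (hS' : RelDom T (((s.erase v0).erase v1).erase v2) S') (hc : S'.card ≤ B'.card) :
    ∃ B S : Finset V, RelPack T s B ∧ RelDom T s S ∧ S.card ≤ B.card := by
  classical
  obtain ⟨hv0s, hv1s, h10, hleaf0⟩ := hv0
  set s' := ((s.erase v0).erase v1).erase v2 with hs'
  have hs'sub : s' ⊆ s :=
    (Finset.erase_subset _ _).trans ((Finset.erase_subset _ _).trans (Finset.erase_subset _ _))
  have hmem_s' : ∀ y, y ∈ s' ↔ (y ∈ s ∧ y ≠ v0 ∧ y ≠ v1 ∧ y ≠ v2) := by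
    intro y
    simp only [hs', Finset.mem_erase]
    tauto
  have h01 : T.Adj v0 v1 := h10.symm
  have hv0ns' : v0 ∉ s' := fun h => ((hmem_s' v0).mp h).2.1 rfl
  have hv1ns' : v1 ∉ s' := fun h => ((hmem_s' v1).mp h).2.2.1 rfl
  have hv2ns' : v2 ∉ s' := fun h => ((hmem_s' v2).mp h).2.2.2 rfl
  have h20 : ¬ T.Adj v2 v0 := fun h => T.irrefl ((hleaf0 v2 hv2s h) ▸ hv12)
  -- children of v2 other than v1, v3
  have hch' : ∀ x, (x ∈ s ∧ T.Adj v2 x ∧ x ≠ v1 ∧ x ≠ v3) →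
      ∃ d, d ∈ s ∧ T.Adj x d ∧ d ≠ v2 := by
    intro x hx
    obtain ⟨d, hd, h1, h2⟩ := (hch x hx.1 hx.2.1 hx.2.2.1 hx.2.2.2).1
    exact ⟨d, hd, h1, h2⟩
  set σ : V → V := fun x =>
    if h : x ∈ s ∧ T.Adj v2 x ∧ x ≠ v1 ∧ x ≠ v3 then (hch' x h).choose else x with hσdef
  have hσspec : ∀ x (h : x ∈ s ∧ T.Adj v2 x ∧ x ≠ v1 ∧ x ≠ v3),
      σ x ∈ s ∧ T.Adj x (σ x) ∧ σ x ≠ v2 ∧ ∀ w ∈ s, T.Adj w (σ x) → w = x := by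
    intro x h
    have hs2 := (hch' x h).choose_spec
    have hσx : σ x = (hch' x h).choose := by simp only [hσdef, dif_pos h]
    rw [hσx]
    exact ⟨hs2.1, hs2.2.1, hs2.2.2,
      fun w hw hadj => (hch x h.1 h.2.1 h.2.2.1 h.2.2.2).2 _ hs2.1 hs2.2.1 hs2.2.2 w hw hadj⟩
  have hσid : ∀ x, ¬(x ∈ s ∧ T.Adj v2 x ∧ x ≠ v1 ∧ x ≠ v3) → σ x = x := by
    intro x h
    simp only [hσdef, dif_neg h]
  have hchildMem : ∀ x, (x ∈ s ∧ T.Adj v2 x ∧ x ≠ v1 ∧ x ≠ v3) → x ∈ s' := by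
    intro x hx
    refine (hmem_s' x).mpr ⟨hx.1, ?_, hx.2.2.1, hx.2.1.ne'⟩
    rintro rfl
    exact h20 hx.2.1
  have hσMem : ∀ x (h : x ∈ s ∧ T.Adj v2 x ∧ x ≠ v1 ∧ x ≠ v3), σ x ∈ s' := by
    intro x h
    obtain ⟨hm, hadj, hne2, hleaf⟩ := hσspec x h
    refine (hmem_s' (σ x)).mpr ⟨hm, ?_, ?_, hne2⟩
    · rintro heq
      have := hleaf0 x h.1 (by rw [← heq]; exact hadj)
      exact h.2.2.1 this
    · rintro heq
      rcases hv1nb x h.1 (by rw [← heq]; exact hadj) with h' | h'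
      · rw [h'] at h
        exact h20 h.2.1
      · rw [h'] at h
        exact T.irrefl h.2.1
  have hnotBoth : ∀ x ∈ B', ∀ h : x ∈ s ∧ T.Adj v2 x ∧ x ≠ v1 ∧ x ≠ v3, σ x ∉ B' := by
    intro x hx h hσB
    have := hB'.2 x (hchildMem x h) (σ x) hσB x hx
      (Or.inr (hσspec x h).2.1) (Or.inl rfl)
    exact (hσspec x h).2.1.ne' this
  set B'' := B'.image σ with hB''def
  have hcard'' : B''.card = B'.card := by
    rw [hB''def]
    apply Finset.card_image_of_injOn
    intro x hx y hy heq
    by_cases cx : x ∈ s ∧ T.Adj v2 x ∧ x ≠ v1 ∧ x ≠ v3 <;>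
      by_cases cy : y ∈ s ∧ T.Adj v2 y ∧ y ≠ v1 ∧ y ≠ v3
    · have := (hσspec x cx).2.2.2 y cy.1 (by rw [heq]; exact (hσspec y cy).2.1)
      exact this.symm
    · rw [hσid y cy] at heq
      exact absurd (show σ x ∈ B' from by rw [heq]; exact hy) (hnotBoth x hx cx)
    · rw [hσid x cx] at heq
      exact absurd (show σ y ∈ B' from by rw [← heq]; exact hx) (hnotBoth y hy cy)
    · rw [hσid x cx, hσid y cy] at heq
      exact heq
  have hB''sub : B'' ⊆ s' := by
    intro b hb
    obtain ⟨x, hx, rfl⟩ := Finset.mem_image.mp hb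
    by_cases cx : x ∈ s ∧ T.Adj v2 x ∧ x ≠ v1 ∧ x ≠ v3
    · exact hσMem x cx
    · rw [hσid x cx]
      exact hB'.1 hx
  have hchar : ∀ b ∈ B'', ∃ x, x ∈ B' ∧
      ((¬(x ∈ s ∧ T.Adj v2 x ∧ x ≠ v1 ∧ x ≠ v3) ∧ b = x) ∨
       ((x ∈ s ∧ T.Adj v2 x ∧ x ≠ v1 ∧ x ≠ v3) ∧ b = σ x)) := by
    intro b hb
    obtain ⟨x, hx, rfl⟩ := Finset.mem_image.mp hb
    by_cases cx : x ∈ s ∧ T.Adj v2 x ∧ x ≠ v1 ∧ x ≠ v3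
    · exact ⟨x, hx, Or.inr ⟨cx, rfl⟩⟩
    · exact ⟨x, hx, Or.inl ⟨cx, hσid x cx⟩⟩
  have hF7 : ∀ b ∈ B'', T.Adj v2 b → b = v3 := by
    intro b hb hadj
    obtain ⟨x, hx, hcase⟩ := hchar b hb
    rcases hcase with ⟨hnc, hbx⟩ | ⟨hc, hbx⟩ <;> rw [hbx] at hadj ⊢
    · by_contra hb3
      have hxs' : x ∈ s' := hB'.1 hx
      exact hnc ⟨hs'sub hxs', hadj, ((hmem_s' x).mp hxs').2.2.1, hb3⟩
    · exfalso
      have := (hσspec x hc).2.2.2 v2 hv2s hadj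
      rw [this] at hc
      exact T.irrefl hc.2.1
  -- B'' is a relative packing of s'
  have hB''pack : RelPack T s' B'' := by
    refine ⟨hB''sub, ?_⟩
    intro v hv b1 hb1 b2 hb2 h1 h2
    obtain ⟨x, hx, hcx⟩ := hchar b1 hb1
    obtain ⟨y, hy, hcy⟩ := hchar b2 hb2
    have lemA : ∀ a ∈ B', ∀ (ha : a ∈ s ∧ T.Adj v2 a ∧ a ≠ v1 ∧ a ≠ v3), ∀ z ∈ B',
        ¬(z ∈ s ∧ T.Adj v2 z ∧ z ≠ v1 ∧ z ≠ v3) →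
        (σ a = v ∨ T.Adj v (σ a)) → (z = v ∨ T.Adj v z) → σ a = z := by
      intro a haB ha z hzB hznc hσa hz
      rcases hσa with hσa | hσa
      · rcases hz with hz | hz
        · rw [hσa, hz]
        · exfalso
          have hzadj : T.Adj z (σ a) := by rw [hσa]; exact hz.symm
          have : z = a := (hσspec a ha).2.2.2 z (hs'sub (hB'.1 hzB)) hzadj
          rw [this] at hznc
          exact hznc ha
      · exfalso
        have hva : v = a := (hσspec a ha).2.2.2 v (hs'sub hv) hσa
        have := hB'.2 a (hchildMem a ha) z hzB a haB
          (by rw [← hva]; exact hz) (Or.inl rfl)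
        rw [this] at hznc
        exact hznc ha
    rcases hcx with ⟨hncx, hbx⟩ | ⟨hcx, hbx⟩ <;> rcases hcy with ⟨hncy, hby⟩ | ⟨hcy, hby⟩ <;>
      rw [hbx] at h1 ⊢ <;> rw [hby] at h2 ⊢
    · exact hB'.2 v hv x hx y hy h1 h2
    · exact (lemA y hy hcy x hx hncx h2 h1).symm
    · exact lemA x hx hcx y hy hncy h1 h2
    · -- both children
      rcases h1 with h1 | h1 <;> rcases h2 with h2 | h2
      · rw [h1, h2]
      · exfalso
        have hvy : v = y := (hσspec y hcy).2.2.2 v (hs'sub hv) h2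
        have : T.Adj v2 (σ x) := by rw [h1, hvy]; exact hcy.2.1
        have := (hσspec x hcx).2.2.2 v2 hv2s this
        rw [this] at hcx
        exact T.irrefl hcx.2.1
      · exfalso
        have hvx : v = x := (hσspec x hcx).2.2.2 v (hs'sub hv) h1
        have : T.Adj v2 (σ y) := by rw [h2, hvx]; exact hcx.2.1
        have := (hσspec y hcy).2.2.2 v2 hv2s this
        rw [this] at hcy
        exact T.irrefl hcy.2.1
      · have hvx : v = x := (hσspec x hcx).2.2.2 v (hs'sub hv) h1
        have hvy : v = y := (hσspec y hcy).2.2.2 v (hs'sub hv) h2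
        rw [← hvx, hvy]
  have hv0nB'' : v0 ∉ B'' := fun h => hv0ns' (hB''sub h)
  refine ⟨insert v0 B'', insert v1 S', ⟨?_, ?_⟩, ⟨?_, ?_⟩, ?_⟩
  · intro y hy
    rcases Finset.mem_insert.mp hy with rfl | hy
    · exact hv0s
    · exact hs'sub (hB''sub hy)
  · intro v hv b1 hb1 b2 hb2 h1 h2
    by_cases hvs' : v ∈ s'
    · have key : ∀ b ∈ insert v0 B'', (b = v ∨ T.Adj v b) → b ∈ B'' := by
        intro b hb hbv
        rcases Finset.mem_insert.mp hb with hbv0 | hb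
        · exfalso
          rcases hbv with hbv | hbv
          · rw [← hbv, hbv0] at hvs'
            exact hv0ns' hvs'
          · have hA : T.Adj v v0 := by rw [← hbv0]; exact hbv
            have : v = v1 := hleaf0 v (hs'sub hvs') hA
            rw [this] at hvs'
            exact hv1ns' hvs'
        · exact hb
      exact hB''pack.2 v hvs' b1 (key b1 hb1 h1) b2 (key b2 hb2 h2) h1 h2
    · have hv012 : v = v0 ∨ v = v1 ∨ v = v2 := by
        by_contra hcon
        push_neg at hcon
        exact hvs' ((hmem_s' v).mpr ⟨hv, hcon.1, hcon.2.1, hcon.2.2⟩)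
      rcases hv012 with hv' | hv' | hv'
      · have key : ∀ b ∈ insert v0 B'', (b = v ∨ T.Adj v b) → b = v0 := by
          intro b hb hbv
          rcases Finset.mem_insert.mp hb with hbv0 | hb
          · exact hbv0
          · exfalso
            have hbs : b ∈ s' := hB''sub hb
            rcases hbv with hbv | hbv
            · rw [hbv, hv'] at hbs
              exact hv0ns' hbs
            · have hA : T.Adj v0 b := by rw [← hv']; exact hbv
              have : b = v1 := hleaf0 b (hs'sub hbs) hA.symm
              exact hv1ns' (this ▸ hbs)
        rw [key b1 hb1 h1, key b2 hb2 h2]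
      · have key : ∀ b ∈ insert v0 B'', (b = v ∨ T.Adj v b) → b = v0 := by
          intro b hb hbv
          rcases Finset.mem_insert.mp hb with hbv0 | hb
          · exact hbv0
          · exfalso
            have hbs : b ∈ s' := hB''sub hb
            rcases hbv with hbv | hbv
            · rw [hbv, hv'] at hbs
              exact hv1ns' hbs
            · have hA : T.Adj b v1 := by rw [← hv']; exact hbv.symm
              rcases hv1nb b (hs'sub hbs) hA with h | h
              · exact hv0ns' (h ▸ hbs)
              · exact hv2ns' (h ▸ hbs)
        rw [key b1 hb1 h1, key b2 hb2 h2]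
      · have key : ∀ b ∈ insert v0 B'', (b = v ∨ T.Adj v b) → b = v3 := by
          intro b hb hbv
          rcases Finset.mem_insert.mp hb with hbv0 | hb
          · exfalso
            rcases hbv with hbv | hbv
            · rw [hbv0, hv'] at hbv
              exact h02 hbv
            · have hA : T.Adj v2 v0 := by rw [← hv', ← hbv0]; exact hbv
              exact h20 hA
          · rcases hbv with hbv | hbv
            · exfalso
              rw [hbv, hv'] at hb
              exact hv2ns' (hB''sub hb)
            · exact hF7 b hb (by rw [← hv']; exact hbv)
        rw [key b1 hb1 h1, key b2 hb2 h2]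
  · intro y hy
    rcases Finset.mem_insert.mp hy with rfl | hy
    · exact hv1s
    · exact hs'sub (hS'.1 hy)
  · intro v hv hvS
    have hvv1 : v ≠ v1 := fun h => hvS (by rw [h]; exact Finset.mem_insert_self _ _)
    by_cases hvv0 : v = v0
    · exact ⟨v1, Finset.mem_insert_self _ _, by rw [hvv0]; exact h10⟩
    by_cases hvv2 : v = v2
    · exact ⟨v1, Finset.mem_insert_self _ _, by rw [hvv2]; exact hv12⟩
    · have hvs' : v ∈ s' := (hmem_s' v).mpr ⟨hv, hvv0, hvv1, hvv2⟩
      have hvS' : v ∉ S' := fun h => hvS (Finset.mem_insert.mpr (Or.inr h))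
      obtain ⟨w, hw, hwadj⟩ := hS'.2 v hvs' hvS'
      exact ⟨w, Finset.mem_insert.mpr (Or.inr hw), hwadj⟩
  · have h1 : v1 ∉ S' := fun h => hv1ns' (hS'.1 h)
    rw [Finset.card_insert_of_notMem h1, Finset.card_insert_of_notMem hv0nB'', hcard'']
    omega

lemma no_triangle (hac : T.IsAcyclic) {a b c : V} (hab : T.Adj a b) (hbc : T.Adj b c)
    (hca : T.Adj a c) : False := by
  refine not_two_paths hac (p := SimpleGraph.Walk.cons hca SimpleGraph.Walk.nil)
    (q := SimpleGraph.Walk.cons hab (SimpleGraph.Walk.cons hbc SimpleGraph.Walk.nil)) ?_ ?_ ?_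
  · simp [SimpleGraph.Walk.isPath_def, hca.ne]
  · simp [SimpleGraph.Walk.isPath_def, hab.ne, hbc.ne, hca.ne]
  · intro h
    have := congrArg SimpleGraph.Walk.length h
    simp at this

lemma exists_config (hac : T.IsAcyclic) (s : Finset V) (hne : s.Nonempty)
    (hC2 : ¬ ∃ u x x', x ≠ x' ∧ IsLeafAt T s x u ∧ IsLeafAt T s x' u)
    (hC3 : ¬ ∃ u ∈ s, ∀ x, (x = u ∨ (x ∈ s ∧ T.Adj u x)) → ∀ w ∈ s, T.Adj w x →
      (w = u ∨ (w ∈ s ∧ T.Adj u w))) :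
    ∃ v0 v1 v2, IsLeafAt T s v0 v1 ∧ v2 ∈ s ∧ T.Adj v1 v2 ∧ v0 ≠ v2 ∧
      (∀ w ∈ s, T.Adj w v1 → w = v0 ∨ w = v2) ∧
      ((∃ c, IsLeafAt T s c v2 ∧ c ≠ v1) ∨
       (∃ v3 ∈ s, T.Adj v2 v3 ∧ v3 ≠ v1 ∧ ∀ c ∈ s, T.Adj v2 c → c ≠ v1 → c ≠ v3 →
         (∃ d ∈ s, T.Adj c d ∧ d ≠ v2) ∧
         (∀ d ∈ s, T.Adj c d → d ≠ v2 → ∀ w ∈ s, T.Adj w d → w = c))) := by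
  classical
  -- Step 1: from ¬C3, each vertex sees a vertex at distance 2
  have step : ∀ u ∈ s, ∃ x w, x ∈ s ∧ T.Adj u x ∧ w ∈ s ∧ T.Adj w x ∧ w ≠ u ∧ ¬ T.Adj u w := by
    intro u hu
    by_contra hstep
    push_neg at hstep
    apply hC3
    refine ⟨u, hu, ?_⟩
    intro x hx w hw hadj
    rcases hx with rfl | ⟨hxs, hxadj⟩
    · exact Or.inr ⟨hw, hadj.symm⟩
    · by_cases hwu : w = u
      · exact Or.inl hwu
      · exact Or.inr ⟨hw, hstep x w hxs hxadj hw hadj hwu⟩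
  obtain ⟨u0, hu0⟩ := hne
  obtain ⟨x1, w1, hx1s, hux1, hw1s, hw1x1, hw1u, hw1nadj⟩ := step u0 hu0
  obtain ⟨x2, w2, hx2s, hx1x2, hw2s, hw2x2, hw2x1, hw2nadj⟩ := step x1 hx1s
  -- Step 2: an s-path of length 3 exists
  have hlen3 : ∃ (a b : V) (p : T.Walk a b), p.IsPath ∧ (∀ x ∈ p.support, x ∈ s) ∧
      p.length = 3 := by
    by_cases hx2u : x2 = u0
    · -- path w2 - u0 - x1 - w1
      have e1 : T.Adj w2 u0 := by rw [← hx2u]; exact hw2x2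
      have e2 : T.Adj u0 x1 := hux1
      have e3 : T.Adj x1 w1 := hw1x1.symm
      have hne1 : w2 ≠ w1 := by
        rintro rfl
        exact hw1nadj e1.symm
      have hne2 : u0 ≠ w1 := fun h => hw1u h.symm
      refine ⟨w2, w1, SimpleGraph.Walk.cons e1 (SimpleGraph.Walk.cons e2
        (SimpleGraph.Walk.cons e3 SimpleGraph.Walk.nil)), ?_, ?_, rfl⟩
      · simp [SimpleGraph.Walk.isPath_def, e1.ne, e2.ne, e3.ne, hw2x1, hne1, hne2]
      · intro x hx
        simp [SimpleGraph.Walk.support_cons] at hx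
        rcases hx with rfl | rfl | rfl | rfl
        exacts [hw2s, hu0, hx1s, hw1s]
    · -- path w2 - x2 - x1 - u0
      have e1 : T.Adj w2 x2 := hw2x2
      have e2 : T.Adj x2 x1 := hx1x2.symm
      have e3 : T.Adj x1 u0 := hux1.symm
      have hne1 : w2 ≠ u0 := by
        rintro rfl
        exact no_triangle hac hux1 hx1x2 hw2x2
      refine ⟨w2, u0, SimpleGraph.Walk.cons e1 (SimpleGraph.Walk.cons e2
        (SimpleGraph.Walk.cons e3 SimpleGraph.Walk.nil)), ?_, ?_, rfl⟩
      · simp [SimpleGraph.Walk.isPath_def, e1.ne, e2.ne, e3.ne, hw2x1, hne1, hx2u]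
      · intro x hx
        simp [SimpleGraph.Walk.support_cons] at hx
        rcases hx with rfl | rfl | rfl | rfl
        exacts [hw2s, hx2s, hx1s, hu0]
  -- Step 3: take a longest s-path
  set PL : Set ℕ := {n | ∃ (a b : V) (p : T.Walk a b), p.IsPath ∧ (∀ x ∈ p.support, x ∈ s) ∧
    p.length = n} with hPL
  have hbdd : BddAbove PL := by
    refine ⟨Fintype.card V, ?_⟩
    rintro n ⟨a, b, p, hp, hsupp, rfl⟩
    have h1 : p.support.length = p.length + 1 := SimpleGraph.Walk.length_support p
    have h2 : p.support.Nodup := hp.support_nodup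
    have h3 := h2.length_le_card
    omega
  have hPLne : PL.Nonempty := ⟨3, hlen3⟩
  obtain ⟨a, b, p, hp, hsupp, hplen⟩ := Nat.sSup_mem hPLne hbdd
  have hmax : ∀ (a' b' : V) (q : T.Walk a' b'), q.IsPath → (∀ x ∈ q.support, x ∈ s) →
      q.length ≤ p.length := by
    intro a' b' q hq hqs
    rw [hplen]
    exact le_csSup hbdd ⟨a', b', q, hq, hqs, rfl⟩
  have h3le : 3 ≤ p.length := by
    rw [hplen]
    exact le_csSup hbdd hlen3
  clear hplen hPLne hbdd hlen3
  cases p with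
  | nil => simp at h3le
  | @cons _ v1 _ h01 p1 =>
  cases p1 with
  | nil => simp at h3le
  | @cons _ v2 _ h12 p2 =>
  cases p2 with
  | nil => simp at h3le
  | @cons _ v3 _ h23 r =>
  set v0 := a with hv0def
  -- basic facts
  have hp1 : (SimpleGraph.Walk.cons h12 (SimpleGraph.Walk.cons h23 r)).IsPath := hp.of_cons
  have hp2 : (SimpleGraph.Walk.cons h23 r).IsPath := hp1.of_cons
  have hv0not : v0 ∉ (SimpleGraph.Walk.cons h12 (SimpleGraph.Walk.cons h23 r)).support :=
    ((SimpleGraph.Walk.cons_isPath_iff _ _).mp hp).2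
  have hv1not : v1 ∉ (SimpleGraph.Walk.cons h23 r).support :=
    ((SimpleGraph.Walk.cons_isPath_iff _ _).mp hp1).2
  have hv2not : v2 ∉ r.support := ((SimpleGraph.Walk.cons_isPath_iff _ _).mp hp2).2
  have hv3mem : v3 ∈ r.support := SimpleGraph.Walk.start_mem_support r
  have hv0s : v0 ∈ s := hsupp v0 (SimpleGraph.Walk.start_mem_support _)
  have hv1s : v1 ∈ s := hsupp v1 (by simp)
  have hv2s : v2 ∈ s := hsupp v2 (by simp)
  have hv3s : v3 ∈ s := hsupp v3 (by simp [hv3mem])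
  have h02 : v0 ≠ v2 := by
    intro h
    exact hv0not (by rw [h]; simp)
  have h13 : v1 ≠ v3 := by
    intro h
    exact hv1not (by rw [h]; simp [hv3mem])
  have hsupp_mem : ∀ x, x ∈ (SimpleGraph.Walk.cons h01 (SimpleGraph.Walk.cons h12
      (SimpleGraph.Walk.cons h23 r))).support ↔
      (x = v0 ∨ x = v1 ∨ x = v2 ∨ x ∈ r.support) := by
    intro x
    simp [SimpleGraph.Walk.support_cons]
  -- claim 0 : the only s-neighbor of v0 is v1
  have claim0 : ∀ w ∈ s, T.Adj w v0 → w = v1 := by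
    intro w hw hadj
    by_cases hsup : w ∈ (SimpleGraph.Walk.cons h12 (SimpleGraph.Walk.cons h23 r)).support
    · exact helper_adj_support hac h01 hp hadj.symm hsup
    · by_cases hw0 : w = v0
      · rw [hw0] at hadj
        exact (T.irrefl hadj).elim
      · exfalso
        have hwp : w ∉ (SimpleGraph.Walk.cons h01 (SimpleGraph.Walk.cons h12
            (SimpleGraph.Walk.cons h23 r))).support := by
          rw [SimpleGraph.Walk.support_cons]
          intro hmem
          rcases List.mem_cons.mp hmem with h | h
          · exact hw0 h
          · exact hsup h
        have hq := hmax w b (SimpleGraph.Walk.cons hadj (SimpleGraph.Walk.cons h01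
          (SimpleGraph.Walk.cons h12 (SimpleGraph.Walk.cons h23 r)))) (hp.cons hwp) ?_
        · simp [SimpleGraph.Walk.length_cons] at hq
        · intro x hx
          rw [SimpleGraph.Walk.support_cons] at hx
          rcases List.mem_cons.mp hx with rfl | hx
          · exact hw
          · exact hsupp x hx
  have hv0leaf : IsLeafAt T s v0 v1 := ⟨hv0s, hv1s, h01.symm, claim0⟩
  -- claim 1 : the only s-neighbors of v1 are v0 and v2
  have claim1 : ∀ w ∈ s, T.Adj w v1 → w = v0 ∨ w = v2 := by
    intro c hcs hadj
    by_contra hcon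
    push_neg at hcon
    obtain ⟨hc0, hc2⟩ := hcon
    have hcv1 : c ≠ v1 := hadj.ne
    have hcnp : c ∉ (SimpleGraph.Walk.cons h01 (SimpleGraph.Walk.cons h12
        (SimpleGraph.Walk.cons h23 r))).support := by
      rw [hsupp_mem]
      rintro (h | h | h | h)
      · exact hc0 h
      · exact hcv1 h
      · exact hc2 h
      · exact hc2 (helper_adj_support hac h12 hp1 hadj.symm (by simp [h]))
    have hcnp1 : c ∉ (SimpleGraph.Walk.cons h12 (SimpleGraph.Walk.cons h23 r)).support := by
      intro h
      exact hcnp (by rw [SimpleGraph.Walk.support_cons]; exact List.mem_cons_of_mem _ h)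
    have hcleaf : ∀ e ∈ s, T.Adj e c → e = v1 := by
      intro e hes headj
      by_contra hev1
      by_cases hesup : e ∈ (SimpleGraph.Walk.cons h01 (SimpleGraph.Walk.cons h12
          (SimpleGraph.Walk.cons h23 r))).support
      · rw [hsupp_mem] at hesup
        rcases hesup with rfl | rfl | hesup | hesup
        · -- e = v0 : then c would be a neighbor of v0, so c = v1
          exact hcv1 (claim0 c hcs headj.symm)
        · exact hev1 rfl
        · -- e = v2 : detour v1 - c - e vs path
          exact no_detour hac (SimpleGraph.Walk.cons h12 (SimpleGraph.Walk.cons h23 r)) hp1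
            (by rw [hesup]; simp)
            (SimpleGraph.Walk.cons hadj.symm (SimpleGraph.Walk.cons headj.symm
              SimpleGraph.Walk.nil))
            (by simp [SimpleGraph.Walk.isPath_def, hadj.ne', headj.ne', Ne.symm hev1])
            (x := c) (by simp) hcnp1
        · -- e on r : same detour
          exact no_detour hac (SimpleGraph.Walk.cons h12 (SimpleGraph.Walk.cons h23 r)) hp1
            (by simp [hesup])
            (SimpleGraph.Walk.cons hadj.symm (SimpleGraph.Walk.cons headj.symm
              SimpleGraph.Walk.nil))
            (by simp [SimpleGraph.Walk.isPath_def, hadj.ne', headj.ne', Ne.symm hev1])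
            (x := c) (by simp) hcnp1
      · -- e off the path : extend to a longer path
        exfalso
        have hq := hmax e b (SimpleGraph.Walk.cons headj (SimpleGraph.Walk.cons hadj
          (SimpleGraph.Walk.cons h12 (SimpleGraph.Walk.cons h23 r)))) ?_ ?_
        · simp [SimpleGraph.Walk.length_cons] at hq
        · refine (hp1.cons hcnp1).cons ?_
          rw [SimpleGraph.Walk.support_cons]
          intro hmem
          rcases List.mem_cons.mp hmem with h | h
          · exact headj.ne h
          · exact hesup (by rw [SimpleGraph.Walk.support_cons]; exact List.mem_cons_of_mem _ h)
        · intro x hx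
          rw [SimpleGraph.Walk.support_cons] at hx
          rcases List.mem_cons.mp hx with rfl | hx
          · exact hes
          rw [SimpleGraph.Walk.support_cons] at hx
          rcases List.mem_cons.mp hx with rfl | hx
          · exact hcs
          · exact hsupp x (by rw [SimpleGraph.Walk.support_cons]; exact List.mem_cons_of_mem _ hx)
    exact hC2 ⟨v1, c, v0, hc0, ⟨hcs, hv1s, hadj.symm, hcleaf⟩, hv0leaf⟩
  refine ⟨v0, v1, v2, hv0leaf, hv2s, h12, h02, claim1, ?_⟩
  by_cases hleafv2 : ∃ c, IsLeafAt T s c v2 ∧ c ≠ v1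
  · exact Or.inl hleafv2
  · push_neg at hleafv2
    refine Or.inr ⟨v3, hv3s, h23, Ne.symm h13, ?_⟩
    intro c hcs hadj hcv1 hcv3
    have hcv2 : c ≠ v2 := hadj.ne'
    have hcnp : c ∉ (SimpleGraph.Walk.cons h01 (SimpleGraph.Walk.cons h12
        (SimpleGraph.Walk.cons h23 r))).support := by
      rw [hsupp_mem]
      rintro (h | h | h | h)
      · exact (h12.ne' : v2 ≠ v1) (claim0 v2 hv2s (by rw [← h]; exact hadj))
      · exact hcv1 h
      · exact hcv2 h
      · exact hcv3 (helper_adj_support hac h23 hp2 hadj h)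
    have hcfacts := (hsupp_mem c).not.mp hcnp
    push_neg at hcfacts
    obtain ⟨hcv0, -, -, hcr⟩ := hcfacts
    constructor
    · -- c has a neighbor other than v2
      by_contra hno
      push_neg at hno
      have hcl : IsLeafAt T s c v2 := by
        refine ⟨hcs, hv2s, hadj, ?_⟩
        intro w hw hwadj
        exact hno w hw hwadj.symm
      exact hcv1 (hleafv2 c hcl)
    · intro d hds hcd hdv2
      have hdc : d ≠ c := hcd.ne'
      -- d is not on the path
      have hdnp : d ∉ (SimpleGraph.Walk.cons h01 (SimpleGraph.Walk.cons h12
          (SimpleGraph.Walk.cons h23 r))).support := by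
        rw [hsupp_mem]
        rintro (h | h | h | h)
        · rw [h] at hcd
          exact hcv1 (claim0 c hcs hcd)
        · rcases claim1 c hcs (by rw [h] at hcd; exact hcd) with h' | h'
          · exact hcv0 h'
          · exact hcv2 h'
        · exact hdv2 h
        · exact no_detour hac (SimpleGraph.Walk.cons h23 r) hp2
            (by simp [h])
            (SimpleGraph.Walk.cons hadj (SimpleGraph.Walk.cons hcd SimpleGraph.Walk.nil))
            (by simp [SimpleGraph.Walk.isPath_def, hadj.ne, hcd.ne, Ne.symm hdv2, hcv2])
            (x := c) (by simp)
            (by intro hh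
                rw [SimpleGraph.Walk.support_cons] at hh
                rcases List.mem_cons.mp hh with h' | h'
                · exact hcv2 h'
                · exact hcr h')
      have hdfacts := (hsupp_mem d).not.mp hdnp
      push_neg at hdfacts
      obtain ⟨hdv0, hdv1, -, hdr⟩ := hdfacts
      intro w hw hwadj
      by_contra hwc
      have hwd : w ≠ d := hwadj.ne
      have hcp2 : c ∉ (SimpleGraph.Walk.cons h23 r).support := by
        intro hh
        rw [SimpleGraph.Walk.support_cons] at hh
        rcases List.mem_cons.mp hh with h' | h'
        · exact hcv2 h'
        · exact hcr h'
      have hdp2 : d ∉ (SimpleGraph.Walk.cons h23 r).support := by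
        intro hh
        rw [SimpleGraph.Walk.support_cons] at hh
        rcases List.mem_cons.mp hh with h' | h'
        · exact hdv2 h'
        · exact hdr h'
      by_cases hwsup : w ∈ (SimpleGraph.Walk.cons h01 (SimpleGraph.Walk.cons h12
          (SimpleGraph.Walk.cons h23 r))).support
      · rw [hsupp_mem] at hwsup
        rcases hwsup with h | h | h | h
        · -- w = v0
          exact hdv1 (claim0 d hds (by rw [← h]; exact hwadj.symm))
        · -- w = v1
          rcases claim1 d hds (by rw [← h]; exact hwadj.symm) with h' | h'
          · exact hdv0 h'
          · exact hdv2 h'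
        · -- w = v2 : triangle v2 - c - d
          exact no_triangle hac hadj hcd (by rw [← h]; exact hwadj)
        · -- w on r : detour v2 - c - d - w
          have hv2w : v2 ≠ w := fun hh => hv2not (by rw [hh]; exact h)
          have hcw : c ≠ w := fun hh => hcr (by rw [hh]; exact h)
          exact no_detour hac (SimpleGraph.Walk.cons h23 r) hp2
            (by simp [h])
            (SimpleGraph.Walk.cons hadj (SimpleGraph.Walk.cons hcd
              (SimpleGraph.Walk.cons hwadj.symm SimpleGraph.Walk.nil)))
            (by simp [SimpleGraph.Walk.isPath_def, hadj.ne, hcd.ne, Ne.symm hdv2, hcv2,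
                hv2w, hcw, hwd.symm])
            (x := c) (by simp) hcp2
      · -- w off the path : extend w - d - c - v2 - ⋯ to a longer path
        have hwfacts := (hsupp_mem w).not.mp hwsup
        push_neg at hwfacts
        obtain ⟨hwv0, hwv1, hwv2, hwr⟩ := hwfacts
        have hq := hmax w b (SimpleGraph.Walk.cons hwadj (SimpleGraph.Walk.cons hcd.symm
          (SimpleGraph.Walk.cons hadj.symm (SimpleGraph.Walk.cons h23 r)))) ?_ ?_
        · simp [SimpleGraph.Walk.length_cons] at hq
        · refine ((hp2.cons hcp2).cons ?_).cons ?_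
          · rw [SimpleGraph.Walk.support_cons]
            intro hmem
            rcases List.mem_cons.mp hmem with h' | h'
            · exact hdc h'
            · exact hdp2 h'
          · rw [SimpleGraph.Walk.support_cons]
            intro hmem
            rcases List.mem_cons.mp hmem with h' | h'
            · exact hwd h'
            rw [SimpleGraph.Walk.support_cons] at h'
            rcases List.mem_cons.mp h' with h'' | h''
            · exact hwc h''
            rw [SimpleGraph.Walk.support_cons] at h''
            rcases List.mem_cons.mp h'' with h3 | h3
            · exact hwv2 h3
            · exact hwr h3
        · intro x hx
          rw [SimpleGraph.Walk.support_cons] at hx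
          rcases List.mem_cons.mp hx with rfl | hx
          · exact hw
          rw [SimpleGraph.Walk.support_cons] at hx
          rcases List.mem_cons.mp hx with rfl | hx
          · exact hds
          rw [SimpleGraph.Walk.support_cons] at hx
          rcases List.mem_cons.mp hx with rfl | hx
          · exact hcs
          · refine hsupp x ?_
            rw [hsupp_mem]
            rw [SimpleGraph.Walk.support_cons] at hx
            rcases List.mem_cons.mp hx with h' | h'
            · exact Or.inr (Or.inr (Or.inl h'))
            · exact Or.inr (Or.inr (Or.inr h'))

theorem key_induction (hac : T.IsAcyclic) (s : Finset V) :
    ∃ B S : Finset V, RelPack T s B ∧ RelDom T s S ∧ S.card ≤ B.card := by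
  classical
  induction s using Finset.strongInduction with
  | _ s IH =>
  rcases s.eq_empty_or_nonempty with rfl | hne
  · exact ⟨∅, ∅, ⟨Finset.Subset.refl _, by simp⟩, ⟨Finset.Subset.refl _, by simp⟩, le_refl _⟩
  by_cases hC2 : ∃ u x x', x ≠ x' ∧ IsLeafAt T s x u ∧ IsLeafAt T s x' u
  · obtain ⟨u, x, x', hxx', hx, hx'⟩ := hC2
    obtain ⟨B', S', hB', hS', hc⟩ := IH (s.erase x) (Finset.erase_ssubset hx.1)
    exact reduceC2 hxx' hx hx' hB' hS' hc
  by_cases hC3 : ∃ u ∈ s, ∀ x, (x = u ∨ (x ∈ s ∧ T.Adj u x)) → ∀ w ∈ s, T.Adj w x →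
      (w = u ∨ (w ∈ s ∧ T.Adj u w))
  · obtain ⟨u, hus, hclosed⟩ := hC3
    have hss : s.filter (fun y => ¬(y = u ∨ T.Adj u y)) ⊂ s := by
      refine Finset.filter_ssubset.mpr ⟨u, hus, ?_⟩
      simp
    obtain ⟨B', S', hB', hS', hc⟩ := IH _ hss
    exact reduceC3 hus hclosed hB' hS' hc
  obtain ⟨v0, v1, v2, hv0, hv2s, h12, h02, hv1nb, hcase⟩ := exists_config hac s hne hC2 hC3
  rcases hcase with ⟨c, hcl, hcv1⟩ | ⟨v3, hv3s, h23, h31, hch⟩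
  · have hss : (s.erase v0).erase v1 ⊂ s :=
      Finset.ssubset_of_subset_of_ssubset (Finset.erase_subset _ _)
        (Finset.erase_ssubset hv0.1)
    obtain ⟨B', S', hB', hS', hc⟩ := IH _ hss
    exact reduce4a hv0 hv1nb h12 hv2s h02 hcl hcv1 hB' hS' hc
  · have hss : ((s.erase v0).erase v1).erase v2 ⊂ s :=
      Finset.ssubset_of_subset_of_ssubset
        ((Finset.erase_subset _ _).trans (Finset.erase_subset _ _))
        (Finset.erase_ssubset hv0.1)
    obtain ⟨B', S', hB', hS', hc⟩ := IH _ hss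
    exact reduce4b hv0 hv1nb h12 hv2s h02 hv3s h23 h31 hch hB' hS' hc

end MeirMoon

/-- Meir–Moon: for every tree `T`, `γ(T) = ρ(T)`. -/
theorem dominationNumber_eq_packingNumber (T : SimpleGraph V) [Fintype V] [DecidableEq V]
    [DecidableRel T.Adj] (hT : T.IsTree) :
    dominationNumber T = packingNumber T := by
  classical
  have hac : T.IsAcyclic := hT.2
  have hmemC : ∀ v y : V, y ∈ closedNbrFinset T v ↔ (y = v ∨ T.Adj v y) := by
    intro v y
    simp [closedNbrFinset]
  have hPSbdd : BddAbove {m | ∃ B : Finset V, IsPacking T B ∧ B.card = m} := by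
    refine ⟨Fintype.card V, ?_⟩
    rintro n ⟨B, hB, rfl⟩
    simpa using Finset.card_le_univ B
  obtain ⟨B, S, hB, hS, hcard⟩ := key_induction (T := T) hac Finset.univ
  have hBpack : IsPacking T B := by
    intro v
    rw [Finset.card_le_one]
    intro a ha b hb
    rw [Finset.mem_inter] at ha hb
    exact hB.2 v (Finset.mem_univ v) a ha.2 b hb.2 ((hmemC v a).mp ha.1) ((hmemC v b).mp hb.1)
  have hSdom : IsDominatingSet T S := fun v hv => hS.2 v (Finset.mem_univ v) hv
  have h1 : dominationNumber T ≤ S.card := Nat.sInf_le ⟨S, hSdom, rfl⟩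
  have h2 : B.card ≤ packingNumber T := le_csSup hPSbdd ⟨B, hBpack, rfl⟩
  have h3 : packingNumber T ≤ dominationNumber T := by
    have hPSne : ({m | ∃ B : Finset V, IsPacking T B ∧ B.card = m} : Set ℕ).Nonempty :=
      ⟨0, ∅, by intro v; simp, rfl⟩
    have hDSne : ({m | ∃ S : Finset V, IsDominatingSet T S ∧ S.card = m} : Set ℕ).Nonempty :=
      ⟨(Finset.univ : Finset V).card, Finset.univ,
        fun v hv => absurd (Finset.mem_univ v) hv, rfl⟩
    obtain ⟨B0, hB0, hB0c⟩ := Nat.sSup_mem hPSne hPSbdd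
    obtain ⟨S0, hS0, hS0c⟩ := Nat.sInf_mem hDSne
    have hB0rel : RelPack T Finset.univ B0 := by
      refine ⟨Finset.subset_univ _, ?_⟩
      intro v hv b1 hb1 b2 hb2 hh1 hh2
      have := hB0 v
      rw [Finset.card_le_one] at this
      exact this b1 (Finset.mem_inter.mpr ⟨(hmemC v b1).mpr hh1, hb1⟩)
        b2 (Finset.mem_inter.mpr ⟨(hmemC v b2).mpr hh2, hb2⟩)
    have hS0rel : RelDom T Finset.univ S0 := ⟨Finset.subset_univ _, fun v _ hv => hS0 v hv⟩
    have := relPack_card_le_relDom_card hB0rel hS0rel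
    rw [dominationNumber, packingNumber, ← hB0c, ← hS0c]
    exact this
  have hγ : dominationNumber T ≤ packingNumber T := le_trans h1 (le_trans hcard h2)
  omega
end

section
/- Let G be a finite simple connected graph of order n ≥ 3 with s support vertices, and let δ' be the minimum degree taken over all vertices of G that are not pendant vertices. Then the open packing number satisfies ρ°(G) ≤ (n + (δ' − 1)s)/δ'. -/
open SimpleGraph Finset

variable {V : Type*}

/-- `B` is an open packing in `G`: every open neighborhood meets `B` in at most one vertex. -/
def IsOpenPacking (G : SimpleGraph V) [Fintype V] [DecidableEq V] [DecidableRel G.Adj]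
    (B : Finset V) : Prop :=
  ∀ v : V, (G.neighborFinset v ∩ B).card ≤ 1

/-- The open packing number `ρ°(G)`: the maximum cardinality of an open packing in `G`. -/
noncomputable def openPackingNumber (G : SimpleGraph V) [Fintype V] [DecidableEq V]
    [DecidableRel G.Adj] : ℕ :=
  sSup {m | ∃ B : Finset V, IsOpenPacking G B ∧ B.card = m}

/-- If `G` is connected of order `n ≥ 3` with `s` support vertices and `δ'` is the
minimum degree over non-pendant vertices, then `ρ°(G) ≤ (n + (δ' − 1)s) / δ'`. -/
theorem openPackingNumber_le (G : SimpleGraph V) [Fintype V] [DecidableEq V]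
    [DecidableRel G.Adj] (hconn : G.Connected) (hn : 3 ≤ Fintype.card V)
    (δ' : ℕ) (hδ' : δ' = sInf {d : ℕ | ∃ v : V, G.degree v ≠ 1 ∧ G.degree v = d}) :
    (openPackingNumber G : ℝ) ≤
      ((Fintype.card V : ℝ) +
          ((δ' : ℝ) - 1) * ({v : V | ∃ u : V, G.Adj v u ∧ G.degree u = 1}.ncard : ℝ)) /
        (δ' : ℝ) := by
  classical
  set n := Fintype.card V with hn'
  -- every vertex has positive degree
  have hdegpos : ∀ v : V, 0 < G.degree v := by
    intro v
    obtain ⟨w, hw⟩ := Fintype.exists_ne_of_one_lt_card (by omega) v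
    rw [G.degree_pos_iff_exists_adj]
    obtain ⟨p⟩ := hconn v w
    cases p with
    | nil => exact absurd rfl hw
    | cons h q => exact ⟨_, h⟩
  -- unique neighbor for vertices of degree 1
  have huniq : ∀ a b c : V, G.degree a = 1 → G.Adj a b → G.Adj a c → b = c := by
    intro a b c ha hb hc
    have h1 : (G.neighborFinset a).card ≤ 1 := le_of_eq ha
    exact Finset.card_le_one.mp h1 b (by simpa using hb) c (by simpa using hc)
  -- there exists a non-pendant vertex
  have hex : ∃ v : V, G.degree v ≠ 1 := by
    by_contra h
    push_neg at h
    have hne : Nonempty V := Fintype.card_pos_iff.mp (by omega)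
    obtain ⟨v⟩ := hne
    obtain ⟨u, hu⟩ := G.degree_pos_iff_exists_adj v |>.mp (hdegpos v)
    have key : ∀ {x y : V} (_ : G.Walk x y), x = v ∨ x = u → y = v ∨ y = u := by
      intro x y p
      induction p with
      | nil => exact id
      | @cons a b c hab q ih =>
        intro hx
        apply ih
        rcases hx with rfl | rfl
        · exact Or.inr (huniq a b u (h a) hab hu)
        · exact Or.inl (huniq a b v (h a) hab hu.symm)
    -- find a third vertex
    have : ∃ w : V, w ≠ v ∧ w ≠ u := by
      by_contra hw
      push_neg at hw
      have hsub : (Finset.univ : Finset V) ⊆ {v, u} := by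
        intro w _
        rcases em (w = v) with rfl | h1
        · simp
        · simp [hw w h1]
      have := Finset.card_le_card hsub
      have h2 : ({v, u} : Finset V).card ≤ 2 := Finset.card_le_two
      simp only [Finset.card_univ] at this
      omega
    obtain ⟨w, hwv, hwu⟩ := this
    obtain ⟨p⟩ := hconn v w
    rcases key p (Or.inl rfl) with h1 | h1
    · exact hwv h1
    · exact hwu h1
  obtain ⟨v₀, hv₀⟩ := hex
  have hTne : {d : ℕ | ∃ v : V, G.degree v ≠ 1 ∧ G.degree v = d}.Nonempty :=
    ⟨G.degree v₀, v₀, hv₀, rfl⟩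
  have hδ2 : 2 ≤ δ' := by
    rw [hδ']
    refine le_csInf hTne ?_
    rintro d ⟨v, hne1, rfl⟩
    have := hdegpos v
    omega
  -- the support vertex finset
  set sFin : Finset V := Finset.univ.filter (fun v => ∃ u : V, G.Adj v u ∧ G.degree u = 1)
    with hsFin
  have hs : ({v : V | ∃ u : V, G.Adj v u ∧ G.degree u = 1}).ncard = sFin.card := by
    rw [Set.ncard_eq_toFinset_card']
    congr 1
    ext v
    simp [hsFin]
  -- main counting lemma
  have main : ∀ B : Finset V, IsOpenPacking G B →
      δ' * B.card ≤ n + (δ' - 1) * sFin.card := by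
    intro B hB
    set P : Finset V := B.filter (fun b => G.degree b = 1) with hP
    set Q : Finset V := B.filter (fun b => ¬ G.degree b = 1) with hQ
    -- the neighbor map
    set f : V → V := fun p => if h : ∃ u, G.Adj p u then h.choose else p with hf
    have hadjf : ∀ p : V, 0 < G.degree p → G.Adj p (f p) := by
      intro p hp
      obtain ⟨u, hu⟩ := G.degree_pos_iff_exists_adj p |>.mp hp
      have hex : ∃ u, G.Adj p u := ⟨u, hu⟩
      simp only [hf, dif_pos hex]
      exact hex.choose_spec
    have hmaps : ∀ p ∈ P, f p ∈ sFin := by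
      intro p hp
      rw [hP, Finset.mem_filter] at hp
      refine Finset.mem_filter.mpr ⟨Finset.mem_univ _, p, (hadjf p (hdegpos p)).symm, hp.2⟩
    have hinj : Set.InjOn f P := by
      intro p hp q hq hpq
      have hpB : p ∈ B := (Finset.mem_filter.mp hp).1
      have hqB : q ∈ B := (Finset.mem_filter.mp hq).1
      have h1 : p ∈ G.neighborFinset (f p) ∩ B := by
        simp only [Finset.mem_inter, SimpleGraph.mem_neighborFinset]
        exact ⟨(hadjf p (hdegpos p)).symm, hpB⟩
      have h2 : q ∈ G.neighborFinset (f p) ∩ B := by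
        simp only [Finset.mem_inter, SimpleGraph.mem_neighborFinset]
        exact ⟨hpq ▸ (hadjf q (hdegpos q)).symm, hqB⟩
      exact Finset.card_le_one.mp (hB (f p)) p h1 q h2
    have hPs : P.card ≤ sFin.card := Finset.card_le_card_of_injOn f hmaps hinj
    -- degree sum bound
    have hdeg : ∀ b : V, G.degree b = ∑ v : V, if G.Adj b v then 1 else 0 := by
      intro b
      rw [← Finset.card_filter, ← SimpleGraph.neighborFinset_eq_filter]
      rfl
    have hsum : ∑ b ∈ B, G.degree b ≤ n := by
      calc ∑ b ∈ B, G.degree b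
          = ∑ b ∈ B, ∑ v : V, if G.Adj b v then 1 else 0 :=
            Finset.sum_congr rfl fun b _ => hdeg b
        _ = ∑ v : V, ∑ b ∈ B, if G.Adj b v then 1 else 0 := Finset.sum_comm
        _ ≤ ∑ _v : V, 1 := by
            refine Finset.sum_le_sum fun v _ => ?_
            have : (∑ b ∈ B, if G.Adj b v then 1 else 0) =
                (G.neighborFinset v ∩ B).card := by
              rw [SimpleGraph.neighborFinset_eq_filter, Finset.filter_inter,
                Finset.univ_inter, Finset.card_filter]
              exact Finset.sum_congr rfl fun b _ => if_congr (G.adj_comm b v) rfl rfl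
            rw [this]
            exact hB v
        _ = n := by simp [hn']
    have hsplit : ∑ b ∈ P, G.degree b + ∑ b ∈ Q, G.degree b = ∑ b ∈ B, G.degree b :=
      Finset.sum_filter_add_sum_filter_not B _ _
    have hPsum : ∑ b ∈ P, G.degree b = P.card := by
      rw [Finset.card_eq_sum_ones]
      exact Finset.sum_congr rfl fun b hb => (Finset.mem_filter.mp hb).2
    have hQsum : δ' * Q.card ≤ ∑ b ∈ Q, G.degree b := by
      rw [mul_comm, ← smul_eq_mul]
      refine Finset.card_nsmul_le_sum Q _ _ fun b hb => ?_
      rw [hδ']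
      exact Nat.sInf_le ⟨b, (Finset.mem_filter.mp hb).2, rfl⟩
    have hcard : B.card = P.card + Q.card := (Finset.card_filter_add_card_filter_not _).symm
    -- combine
    have h1 : P.card + ∑ b ∈ Q, G.degree b ≤ n := by omega
    have h2 : 1 ≤ δ' := by omega
    zify [h2] at hQsum hcard hPs ⊢
    nlinarith [mul_le_mul_of_nonneg_left hPs (by omega : (0:ℤ) ≤ (δ':ℤ) - 1),
      (by exact_mod_cast h1 : (P.card : ℤ) + (∑ b ∈ Q, G.degree b : ℕ) ≤ (n:ℤ))]
  -- the open packing number is attained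
  have hMne : {m | ∃ B : Finset V, IsOpenPacking G B ∧ B.card = m}.Nonempty := by
    refine ⟨0, ∅, fun v => ?_, Finset.card_empty⟩
    simp
  have hMbdd : BddAbove {m | ∃ B : Finset V, IsOpenPacking G B ∧ B.card = m} := by
    refine ⟨n, ?_⟩
    rintro m ⟨B, _, rfl⟩
    exact Finset.card_le_univ B
  obtain ⟨B, hBpack, hBcard⟩ := Nat.sSup_mem hMne hMbdd
  have hkey : δ' * openPackingNumber G ≤ n + (δ' - 1) * sFin.card := by
    rw [openPackingNumber, ← hBcard]
    exact main B hBpack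
  -- conclude over ℝ
  have hδpos : (0 : ℝ) < (δ' : ℝ) := by exact_mod_cast (by omega : 0 < δ')
  rw [le_div_iff₀ hδpos]
  rw [hs]
  have := (Nat.cast_le (α := ℝ)).mpr hkey
  push_cast [Nat.cast_sub (show 1 ≤ δ' by omega)] at this
  nlinarith [this]
end

section
/- For every finite tree T of order at least 2, the total domination number equals the open packing number: γ_t(T) = ρ°(T). -/
open SimpleGraph Finset

variable {V : Type*}

/-- `S` is a total dominating set in `G`. -/
def IsTotalDominatingSet (G : SimpleGraph V) (S : Finset V) : Prop :=
  ∀ v : V, ∃ u ∈ S, G.Adj u v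

/-- The total domination number `γ_t(G)`: the minimum cardinality of a total
dominating set. -/
noncomputable def totalDominationNumber (G : SimpleGraph V) [Fintype V] : ℕ :=
  sInf {m | ∃ S : Finset V, IsTotalDominatingSet G S ∧ S.card = m}

namespace RallAux

variable [DecidableEq V] {T : SimpleGraph V}




lemma isPath_concat {u v w : V} {p : T.Walk u v} (hp : p.IsPath) (h : T.Adj v w)
    (hw : w ∉ p.support) : (p.concat h).IsPath := by
  rw [← SimpleGraph.Walk.isPath_reverse_iff, SimpleGraph.Walk.reverse_concat]
  exact hp.reverse.cons (by rwa [SimpleGraph.Walk.support_reverse, List.mem_reverse])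

lemma mem_shortest (hconn : T.Connected) {r w u : V} (Q : T.Walk r w)
    (hQ : Q.length = T.dist r w) (hu : u ∈ Q.support) :
    T.dist r u + T.dist u w = T.dist r w := by
  have h1 : T.dist r u ≤ (Q.takeUntil u hu).length := SimpleGraph.dist_le _
  have h2 : T.dist u w ≤ (Q.dropUntil u hu).length := SimpleGraph.dist_le _
  have h3 : (Q.takeUntil u hu).length + (Q.dropUntil u hu).length = Q.length := by
    have := congrArg SimpleGraph.Walk.length (Q.take_spec hu)
    rwa [SimpleGraph.Walk.length_append] at this
  have h4 := hconn.dist_triangle (u := r) (v := u) (w := w)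
  omega

lemma adj_depth (hT : T.IsTree) (r : V) {u w : V} (h : T.Adj u w) :
    T.dist r u + 1 = T.dist r w ∨ T.dist r w + 1 = T.dist r u := by
  have hconn := hT.isConnected
  have hd1 : T.dist u w = 1 := SimpleGraph.dist_eq_one_iff_adj.mpr h
  have hd2 : T.dist w u = 1 := SimpleGraph.dist_eq_one_iff_adj.mpr h.symm
  have t1 : T.dist r w ≤ T.dist r u + 1 := by
    have := hconn.dist_triangle (u := r) (v := u) (w := w); omega
  have t2 : T.dist r u ≤ T.dist r w + 1 := by
    have := hconn.dist_triangle (u := r) (v := w) (w := u); omega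
  have hne : T.dist r u ≠ T.dist r w := by
    intro hEq
    obtain ⟨Q, hQp, hQl⟩ := hconn.exists_path_of_dist r w
    by_cases hu : u ∈ Q.support
    · have := mem_shortest hconn Q hQl hu
      omega
    · have hQ' : (Q.concat h.symm).IsPath := isPath_concat hQp h.symm hu
      have hlen : (Q.concat h.symm).length = T.dist r w + 1 := by
        rw [SimpleGraph.Walk.length_concat, hQl]
      obtain ⟨P, hPp, hPl⟩ := hconn.exists_path_of_dist r u
      have hPQ := (hT.existsUnique_path r u).unique hQ' hPp
      have : (Q.concat h.symm).length = P.length := by rw [hPQ]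
      omega
  omega

lemma parent_eq (hT : T.IsTree) (r : V) {w u u' : V} (h : T.Adj u w) (h' : T.Adj u' w)
    (hd : T.dist r u + 1 = T.dist r w) (hd' : T.dist r u' + 1 = T.dist r w) : u = u' := by
  have hconn := hT.isConnected
  by_contra hne
  obtain ⟨P, hPp, hPl⟩ := hconn.exists_path_of_dist r u
  have hwP : w ∉ P.support := by
    intro hw
    have := mem_shortest hconn P hPl hw
    have : T.dist w u = 1 := SimpleGraph.dist_eq_one_iff_adj.mpr h.symm
    omega
  have hq1 : (P.concat h).IsPath := isPath_concat hPp h hwP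
  have hu'P : u' ∉ (P.concat h).support := by
    rw [SimpleGraph.Walk.support_concat, List.mem_append,
      List.mem_singleton]
    rintro (hmem | rfl)
    · have h5 := mem_shortest hconn P hPl hmem
      have h6 : T.dist u' u = 0 := by omega
      exact hne ((hconn u' u).dist_eq_zero_iff.mp h6).symm
    · exact h'.ne rfl
  have hq2 : ((P.concat h).concat h'.symm).IsPath := isPath_concat hq1 h'.symm hu'P
  obtain ⟨P', hP'p, hP'l⟩ := hconn.exists_path_of_dist r u'
  have hPQ := (hT.existsUnique_path r u').unique hq2 hP'p
  have hlen : ((P.concat h).concat h'.symm).length = P'.length := by rw [hPQ]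
  rw [SimpleGraph.Walk.length_concat, SimpleGraph.Walk.length_concat] at hlen
  omega

lemma exists_parent (hT : T.IsTree) {r v : V} (hv : v ≠ r) :
    ∃ w, T.Adj w v ∧ T.dist r w + 1 = T.dist r v := by
  have hconn := hT.isConnected
  have hpos : 0 < T.dist r v := hconn.pos_dist_of_ne (fun h => hv h.symm)
  obtain ⟨R, hRp, hRl⟩ := hconn.exists_path_of_dist v r
  cases R with
  | nil => exact absurd rfl hv
  | @cons _ w _ hadj R' =>
    refine ⟨w, hadj.symm, ?_⟩
    have h1 : T.dist r w ≤ R'.reverse.length := SimpleGraph.dist_le _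
    rw [SimpleGraph.Walk.length_reverse] at h1
    have h2 : R'.length + 1 = T.dist v r := by
      simpa [SimpleGraph.Walk.length_cons] using hRl
    have h3 : T.dist w v = 1 := SimpleGraph.dist_eq_one_iff_adj.mpr hadj.symm
    have h4 := hconn.dist_triangle (u := r) (v := w) (w := v)
    have h5 : T.dist v r = T.dist r v := SimpleGraph.dist_comm
    omega

lemma exists_adj [Fintype V] (hT : T.IsTree) (hn : 2 ≤ Fintype.card V) (v : V) : ∃ w, T.Adj v w := by
  obtain ⟨w, hw⟩ := Fintype.exists_ne_of_one_lt_card hn v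
  obtain ⟨p⟩ := hT.isConnected v w
  cases p with
  | nil => exact absurd rfl hw
  | cons h q => exact ⟨_, h⟩


variable [Fintype V] [DecidableRel T.Adj]

/-- Vertices not totally dominated by `S`. -/
def undomSet (T : SimpleGraph V) [DecidableRel T.Adj] (S : Finset V) : Finset V :=
  univ.filter (fun v => ¬ ∃ s ∈ S, T.Adj s v)

lemma mem_undomSet {S : Finset V} {v : V} :
    v ∈ undomSet T S ↔ ¬ ∃ s ∈ S, T.Adj s v := by simp [undomSet]

lemma core (hT : T.IsTree) (hn : 2 ≤ Fintype.card V) :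
    ∃ S B : Finset V, IsTotalDominatingSet T S ∧ IsOpenPacking T B ∧ B.card = S.card := by
  classical
  obtain ⟨r⟩ : Nonempty V := Fintype.card_pos_iff.mp (by omega)
  choose par hpadj hpd using fun (v : V) (hv : v ≠ r) => RallAux.exists_parent hT hv
  have key : ∀ n (S B : Finset V), (undomSet T S).card ≤ n → IsOpenPacking T B →
      B.card = S.card →
      (∀ b ∈ B, ∃ s ∈ S, T.Adj s b) →
      (∀ b ∈ B, ∀ u ∈ undomSet T S, T.dist r u ≤ T.dist r b) →
      (∀ b ∈ B, ∀ hb : b ≠ r, par b hb ∈ S) →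
      ∃ S' B' : Finset V, IsTotalDominatingSet T S' ∧ IsOpenPacking T B' ∧
        B'.card = S'.card := by
    intro n
    induction n with
    | zero =>
      intro S B hcard hpack hcards hdom _ _
      refine ⟨S, B, ?_, hpack, hcards⟩
      intro v
      by_contra hno
      have hv : v ∈ undomSet T S := mem_undomSet.mpr hno
      have : 0 < (undomSet T S).card := Finset.card_pos.mpr ⟨v, hv⟩
      omega
    | succ n ih =>
      intro S B hcard hpack hcards hdom hmax hparS
      rcases Finset.eq_empty_or_nonempty (undomSet T S) with hUe | hUne
      · refine ⟨S, B, ?_, hpack, hcards⟩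
        intro v
        by_contra hno
        have hv : v ∈ undomSet T S := mem_undomSet.mpr hno
        simp [hUe] at hv
      · obtain ⟨u, huU, humax⟩ := Finset.exists_max_image (undomSet T S) (T.dist r) hUne
        have hu_undom : ¬ ∃ s ∈ S, T.Adj s u := mem_undomSet.mp huU
        obtain ⟨s, hs_adj, hs_par⟩ : ∃ s, T.Adj s u ∧ ∀ hu : u ≠ r, s = par u hu := by
          by_cases hur : u = r
          · obtain ⟨w, hw⟩ := RallAux.exists_adj hT hn u
            exact ⟨w, hw.symm, fun h => absurd hur h⟩
          · exact ⟨par u hur, hpadj u hur, fun h => rfl⟩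
        have KC : ∀ w, T.Adj u w → ∀ b ∈ B, ¬ T.Adj w b := by
          intro w huw b hb hwb
          have hbu : b ≠ u := by
            rintro rfl
            exact hu_undom (hdom b hb)
          have hmaxu := hmax b hb u huU
          rcases RallAux.adj_depth hT r huw with h1 | h1 <;>
            rcases RallAux.adj_depth hT r hwb with h2 | h2
          · have hbr : b ≠ r := by
              intro hbrr
              rw [hbrr] at h2
              have h0 : T.dist r r = 0 := by simp
              omega
            have hpw : par b hbr = w :=
              RallAux.parent_eq hT r (hpadj b hbr) hwb (hpd b hbr) h2
            exact hu_undom ⟨w, hpw ▸ hparS b hb hbr, huw.symm⟩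
          · exact hbu (RallAux.parent_eq hT r huw hwb.symm h1 h2).symm
          · have hbr : b ≠ r := by
              intro hbrr
              rw [hbrr] at h2
              have h0 : T.dist r r = 0 := by simp
              omega
            have hpw : par b hbr = w :=
              RallAux.parent_eq hT r (hpadj b hbr) hwb (hpd b hbr) h2
            exact hu_undom ⟨w, hpw ▸ hparS b hb hbr, huw.symm⟩
          · omega
        have hsS : s ∉ S := fun h => hu_undom ⟨s, h, hs_adj⟩
        have huB : u ∉ B := fun h => hu_undom (hdom u h)
        have hUsub : undomSet T (insert s S) ⊆ (undomSet T S).erase u := by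
          intro v hv
          have hv' : ¬ ∃ x ∈ insert s S, T.Adj x v := mem_undomSet.mp hv
          refine Finset.mem_erase.mpr ⟨?_, mem_undomSet.mpr ?_⟩
          · rintro rfl
            exact hv' ⟨s, Finset.mem_insert_self _ _, hs_adj⟩
          · rintro ⟨x, hx, hxv⟩
            exact hv' ⟨x, Finset.mem_insert_of_mem hx, hxv⟩
        refine ih (insert s S) (insert u B) ?_ ?_ ?_ ?_ ?_ ?_
        · have h1 : (undomSet T (insert s S)).card ≤ ((undomSet T S).erase u).card :=
            Finset.card_le_card hUsub
          have h2 : ((undomSet T S).erase u).card = (undomSet T S).card - 1 :=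
            Finset.card_erase_of_mem huU
          have h3 : 0 < (undomSet T S).card := Finset.card_pos.mpr ⟨u, huU⟩
          omega
        · intro v
          by_cases hv : u ∈ T.neighborFinset v
          · have hEq : T.neighborFinset v ∩ insert u B = {u} := by
              apply Finset.Subset.antisymm
              · intro x hx
                rcases Finset.mem_inter.mp hx with ⟨hx1, hx2⟩
                rcases Finset.mem_insert.mp hx2 with rfl | hx2
                · exact Finset.mem_singleton_self _
                · exact absurd ((T.mem_neighborFinset v x).mp hx1)
                    (KC v ((T.mem_neighborFinset v u).mp hv).symm x hx2)
              · intro x hx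
                rw [Finset.mem_singleton] at hx; subst hx
                exact Finset.mem_inter.mpr ⟨hv, Finset.mem_insert_self _ _⟩
            rw [hEq, Finset.card_singleton]
          · rw [Finset.inter_insert_of_notMem hv]
            exact hpack v
        · rw [Finset.card_insert_of_notMem huB, Finset.card_insert_of_notMem hsS, hcards]
        · intro b hb
          rcases Finset.mem_insert.mp hb with rfl | hb
          · exact ⟨s, Finset.mem_insert_self _ _, hs_adj⟩
          · obtain ⟨x, hx, hxb⟩ := hdom b hb
            exact ⟨x, Finset.mem_insert_of_mem hx, hxb⟩
        · intro b hb v hvU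
          have hvU' : v ∈ undomSet T S := Finset.mem_of_mem_erase (hUsub hvU)
          rcases Finset.mem_insert.mp hb with rfl | hb
          · exact humax v hvU'
          · exact hmax b hb v hvU'
        · intro b hb hbr
          rcases Finset.mem_insert.mp hb with rfl | hb
          · rw [← hs_par hbr]; exact Finset.mem_insert_self _ _
          · exact Finset.mem_insert_of_mem (hparS b hb hbr)
  have h0 : IsOpenPacking T ∅ := by intro v; simp [IsOpenPacking]
  exact key (undomSet T ∅).card ∅ ∅ le_rfl h0 rfl (by simp) (by simp) (by simp)

end RallAux


namespace RallAux

variable [Fintype V] [DecidableEq V] {T : SimpleGraph V} [DecidableRel T.Adj]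

lemma packing_card_le {B S : Finset V} (hpack : IsOpenPacking T B)
    (hS : IsTotalDominatingSet T S) : B.card ≤ S.card := by
  classical
  choose f hf1 hf2 using hS
  apply Finset.card_le_card_of_injOn f (fun b _ => hf1 b)
  intro b1 hb1 b2 hb2 hfeq
  have h1 : b1 ∈ T.neighborFinset (f b1) ∩ B :=
    Finset.mem_inter.mpr ⟨(T.mem_neighborFinset _ _).mpr (hf2 b1), Finset.mem_coe.mp hb1⟩
  have h2 : b2 ∈ T.neighborFinset (f b1) ∩ B := by
    rw [hfeq]
    exact Finset.mem_inter.mpr ⟨(T.mem_neighborFinset _ _).mpr (hf2 b2), Finset.mem_coe.mp hb2⟩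
  exact Finset.card_le_one.mp (hpack (f b1)) b1 h1 b2 h2

end RallAux

/-- Rall: for every tree `T` of order at least two, `γ_t(T) = ρ°(T)`. -/
theorem totalDominationNumber_eq_openPackingNumber (T : SimpleGraph V) [Fintype V]
    [DecidableEq V] [DecidableRel T.Adj] (hT : T.IsTree) (hn : 2 ≤ Fintype.card V) :
    totalDominationNumber T = openPackingNumber T := by
  classical
  obtain ⟨S₀, B₀, hS₀, hB₀, hcard₀⟩ := RallAux.core hT hn
  have hBbdd : BddAbove {m | ∃ B : Finset V, IsOpenPacking T B ∧ B.card = m} := by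
    refine ⟨Fintype.card V, ?_⟩
    rintro m ⟨B, -, rfl⟩
    exact (Finset.card_le_univ B).trans_eq Finset.card_univ
  have hBne : Set.Nonempty {m | ∃ B : Finset V, IsOpenPacking T B ∧ B.card = m} :=
    ⟨0, ∅, by intro v; simp [IsOpenPacking], rfl⟩
  have hSne : Set.Nonempty {m | ∃ S : Finset V, IsTotalDominatingSet T S ∧ S.card = m} :=
    ⟨S₀.card, S₀, hS₀, rfl⟩
  obtain ⟨Smin, hSmin, hSmincard⟩ := Nat.sInf_mem hSne
  obtain ⟨Bmax, hBmax, hBmaxcard⟩ := Nat.sSup_mem hBne hBbdd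
  apply le_antisymm
  · calc totalDominationNumber T ≤ S₀.card := Nat.sInf_le ⟨S₀, hS₀, rfl⟩
      _ = B₀.card := hcard₀.symm
      _ ≤ openPackingNumber T := le_csSup hBbdd ⟨B₀, hB₀, rfl⟩
  · calc openPackingNumber T = Bmax.card := hBmaxcard.symm
      _ ≤ Smin.card := RallAux.packing_card_le hBmax hSmin
      _ = totalDominationNumber T := hSmincard
end

section
/- Let T be a finite tree of order n ≥ 3 with s support vertices. Then the open packing number satisfies ρ°(T) ≤ (n + s)/2. -/
open SimpleGraph Finset

variable {V : Type*}

/-- For a tree `T` of order `n ≥ 3` with `s` support vertices, `ρ°(T) ≤ (n + s) / 2`. -/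
theorem openPackingNumber_le_tree (T : SimpleGraph V) [Fintype V] [DecidableEq V]
    [DecidableRel T.Adj] (hT : T.IsTree) (hn : 3 ≤ Fintype.card V) :
    (openPackingNumber T : ℝ) ≤
      ((Fintype.card V : ℝ) +
          ({v : V | ∃ u : V, T.Adj v u ∧ T.degree u = 1}.ncard : ℝ)) / 2 := by
  classical
  set n := Fintype.card V with hn'
  set S : Finset V := univ.filter (fun v => ∃ u : V, T.Adj v u ∧ T.degree u = 1) with hS
  have hncard : {v : V | ∃ u : V, T.Adj v u ∧ T.degree u = 1}.ncard = S.card := by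
    rw [Set.ncard_eq_toFinset_card']
    congr 1
    ext v
    simp [hS]
  -- every vertex has positive degree
  have hdegpos : ∀ v : V, 0 < T.degree v := by
    intro v
    rw [T.degree_pos_iff_exists_adj]
    have : 1 < Fintype.card V := by omega
    obtain ⟨u, hu⟩ := Fintype.exists_ne_of_one_lt_card this v
    obtain ⟨p⟩ := hT.isConnected.preconnected v u
    exact ⟨p.getVert 1, Walk.adj_snd (Walk.not_nil_of_ne (Ne.symm hu))⟩
  -- the key counting bound
  have key : ∀ B : Finset V, IsOpenPacking T B → 2 * B.card ≤ n + S.card := by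
    intro B hB
    -- leaves in B
    set L : Finset V := B.filter (fun b => T.degree b = 1) with hL
    -- choose the unique neighbor of any leaf
    have choose : ∀ b : V, T.degree b = 1 → ∃ w, T.neighborFinset b = {w} :=
      fun b hb => Finset.card_eq_one.mp hb
    set f : V → V := fun b =>
      if h : T.degree b = 1 then (choose b h).choose else b with hf
    have hfadj : ∀ b : V, T.degree b = 1 → T.neighborFinset b = {f b} := by
      intro b hb
      simp only [hf, dif_pos hb]
      exact (choose b hb).choose_spec
    -- the leaves of B inject into S
    have hLS : L.card ≤ S.card := by
      apply Finset.card_le_card_of_injOn f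
      · intro b hb
        simp only [Finset.mem_coe, hL, mem_filter] at hb
        have hadj : T.Adj b (f b) := by
          rw [← mem_neighborFinset, hfadj b hb.2]; exact mem_singleton_self _
        rw [Finset.mem_coe, hS, mem_filter]
        exact ⟨mem_univ _, b, hadj.symm, hb.2⟩
      · intro b1 hb1 b2 hb2 hedge
        rw [Finset.mem_coe, hL, mem_filter] at hb1 hb2
        by_contra hne
        have h1 : T.Adj b1 (f b1) := by
          rw [← mem_neighborFinset, hfadj b1 hb1.2]; exact mem_singleton_self _
        have h2 : T.Adj b2 (f b2) := by
          rw [← mem_neighborFinset, hfadj b2 hb2.2]; exact mem_singleton_self _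
        have hm1 : b1 ∈ T.neighborFinset (f b1) ∩ B := by
          rw [mem_inter, mem_neighborFinset]; exact ⟨h1.symm, hb1.1⟩
        have hm2 : b2 ∈ T.neighborFinset (f b1) ∩ B := by
          rw [mem_inter, mem_neighborFinset, hedge]; exact ⟨h2.symm, hb2.1⟩
        have : 1 < (T.neighborFinset (f b1) ∩ B).card :=
          Finset.one_lt_card.mpr ⟨b1, hm1, b2, hm2, hne⟩
        exact absurd (hB (f b1)) (by omega)
    -- double counting: sum of degrees over B is at most n
    have hsum : ∑ b ∈ B, T.degree b ≤ n := by
      have e1 : ∑ b ∈ B, T.degree b =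
          ∑ v : V, (T.neighborFinset v ∩ B).card := by
        have : ∀ v : V, (T.neighborFinset v ∩ B).card =
            ∑ b ∈ B, if T.Adj v b then 1 else 0 := by
          intro v
          rw [← Finset.card_filter]
          congr 1
          ext b
          simp [mem_neighborFinset, and_comm]
        simp_rw [this]
        rw [Finset.sum_comm]
        apply Finset.sum_congr rfl
        intro b _
        rw [← Finset.card_filter]
        unfold SimpleGraph.degree
        congr 1
        ext v
        simp [mem_neighborFinset, adj_comm]
      rw [e1, hn']
      calc ∑ v : V, (T.neighborFinset v ∩ B).card ≤ ∑ _v : V, 1 :=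
            Finset.sum_le_sum (fun v _ => hB v)
        _ = Fintype.card V := by simp
    -- non-leaves have degree ≥ 2
    have hmain : 2 * B.card ≤ ∑ b ∈ B, T.degree b + L.card := by
      have : ∑ b ∈ B, 2 ≤ ∑ b ∈ B, (T.degree b + if T.degree b = 1 then 1 else 0) := by
        apply Finset.sum_le_sum
        intro b _
        by_cases hb : T.degree b = 1
        · simp [hb]
        · have := hdegpos b
          simp only [hb, if_neg hb]
          omega
      rw [Finset.sum_add_distrib, ← Finset.card_filter, ← hL] at this
      simpa [two_mul, Finset.sum_const, mul_comm] using this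
    omega
  -- bound the supremum
  have hsup : openPackingNumber T ≤ (n + S.card) / 2 := by
    apply csSup_le
    · exact ⟨0, ∅, fun v => by simp, by simp⟩
    · rintro m ⟨B, hB, rfl⟩
      have := key B hB
      omega
  calc (openPackingNumber T : ℝ) ≤ (((n + S.card) / 2 : ℕ) : ℝ) := by exact_mod_cast hsup
    _ ≤ ((n + S.card : ℕ) : ℝ) / 2 := Nat.cast_div_le
    _ = ((n : ℝ) + ({v : V | ∃ u : V, T.Adj v u ∧ T.degree u = 1}.ncard : ℝ)) / 2 := by
        rw [hncard]; push_cast; ring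
end

section
/- Let T be a finite tree of order n ≥ 3 with s support vertices. Then the total domination number satisfies γ_t(T) ≤ (n + s)/2. -/
open SimpleGraph Finset

variable {V : Type*}

universe u

namespace TDaux

variable {W : Type u}

/-- `z` is a pendant neighbour (leaf) attached to `y`. -/
def LeafNbr (G : SimpleGraph W) (y z : W) : Prop :=
  G.Adj y z ∧ ∀ t, G.Adj z t → t = y

/-- `y` is a support vertex. -/
def SuppP (G : SimpleGraph W) (y : W) : Prop := ∃ z, LeafNbr G y z

noncomputable def suppFinset (G : SimpleGraph W) [Fintype W] : Finset W :=
  @Finset.filter W (SuppP G) (Classical.decPred _) Finset.univ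

lemma mem_suppFinset {G : SimpleGraph W} [Fintype W] {z : W} :
    z ∈ suppFinset G ↔ SuppP G z := by
  rw [suppFinset, @Finset.mem_filter]
  simp

variable {T : SimpleGraph W}

lemma isPath_concat {a b c : W} {p : T.Walk a b} (hp : p.IsPath) (h : T.Adj b c)
    (hc : c ∉ p.support) : (p.concat h).IsPath := by
  rw [← Walk.isPath_reverse_iff, Walk.reverse_concat]
  exact Walk.IsPath.cons (p.isPath_reverse_iff.2 hp)
    (by rwa [Walk.support_reverse, List.mem_reverse])

lemma dist_ne_of_adj (hT : T.IsTree) {r y z : W} (h : T.Adj y z) :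
    T.dist r y ≠ T.dist r z := by
  classical
  intro he
  obtain ⟨P, hP, hPl⟩ := hT.isConnected.exists_path_of_dist r z
  by_cases hy : y ∈ P.support
  · have h1 : T.dist r y ≤ (P.takeUntil y hy).length := dist_le _
    have h2 : T.dist y z ≤ (P.dropUntil y hy).length := dist_le _
    have h3 : (P.takeUntil y hy).length + (P.dropUntil y hy).length = P.length := by
      rw [← Walk.length_append, P.take_spec hy]
    have h4 : 0 < T.dist y z := (hT.isConnected y z).pos_dist_of_ne h.ne
    omega
  · have hQ : (P.concat h.symm).IsPath := isPath_concat hP h.symm hy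
    obtain ⟨R, hR, hRl⟩ := hT.isConnected.exists_path_of_dist r y
    have heq : (⟨P.concat h.symm, hQ⟩ : T.Path r y) = ⟨R, hR⟩ :=
      hT.IsAcyclic.path_unique _ _
    have hlen := congrArg (fun p : T.Path r y => p.1.length) heq
    simp only [Walk.length_concat] at hlen
    omega

lemma adj_dist_cases (hT : T.IsTree) {r y z : W} (h : T.Adj y z) :
    T.dist r z + 1 = T.dist r y ∨ T.dist r z = T.dist r y + 1 := by
  have h1 : T.dist r z ≤ T.dist r y + T.dist y z := hT.isConnected.dist_triangle
  have h2 : T.dist r y ≤ T.dist r z + T.dist z y := hT.isConnected.dist_triangle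
  have h3 : T.dist y z = 1 := dist_eq_one_iff_adj.2 h
  have h4 : T.dist z y = 1 := dist_eq_one_iff_adj.2 h.symm
  have h5 := dist_ne_of_adj hT h (r := r)
  omega

lemma parent_unique (hT : T.IsTree) {r y z₁ z₂ : W} (h₁ : T.Adj y z₁) (h₂ : T.Adj y z₂)
    (d₁ : T.dist r z₁ + 1 = T.dist r y) (d₂ : T.dist r z₂ + 1 = T.dist r y) : z₁ = z₂ := by
  classical
  obtain ⟨P₁, hP₁, l₁⟩ := hT.isConnected.exists_path_of_dist r z₁
  obtain ⟨P₂, hP₂, l₂⟩ := hT.isConnected.exists_path_of_dist r z₂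
  have hy₁ : y ∉ P₁.support := by
    intro hy
    have ha : T.dist r y ≤ (P₁.takeUntil y hy).length := dist_le _
    have hb : (P₁.takeUntil y hy).length + (P₁.dropUntil y hy).length = P₁.length := by
      rw [← Walk.length_append, P₁.take_spec hy]
    have h4 : 0 < T.dist y z₁ := (hT.isConnected y z₁).pos_dist_of_ne h₁.ne
    have hc : T.dist y z₁ ≤ (P₁.dropUntil y hy).length := dist_le _
    omega
  have hy₂ : y ∉ P₂.support := by
    intro hy
    have ha : T.dist r y ≤ (P₂.takeUntil y hy).length := dist_le _
    have hb : (P₂.takeUntil y hy).length + (P₂.dropUntil y hy).length = P₂.length := by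
      rw [← Walk.length_append, P₂.take_spec hy]
    have h4 : 0 < T.dist y z₂ := (hT.isConnected y z₂).pos_dist_of_ne h₂.ne
    have hc : T.dist y z₂ ≤ (P₂.dropUntil y hy).length := dist_le _
    omega
  have hQ₁ : (P₁.concat h₁.symm).IsPath := isPath_concat hP₁ h₁.symm hy₁
  have hQ₂ : (P₂.concat h₂.symm).IsPath := isPath_concat hP₂ h₂.symm hy₂
  have heq : (⟨P₁.concat h₁.symm, hQ₁⟩ : T.Path r y) = ⟨P₂.concat h₂.symm, hQ₂⟩ :=
    hT.IsAcyclic.path_unique _ _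
  have heq' : P₁.concat h₁.symm = P₂.concat h₂.symm := congrArg Subtype.val heq
  obtain ⟨hv, -⟩ := Walk.concat_inj heq'
  exact hv

lemma exists_parent (hT : T.IsTree) {r y : W} (hne : y ≠ r) :
    ∃ z, T.Adj y z ∧ T.dist r z + 1 = T.dist r y := by
  obtain ⟨P, hP, hPl⟩ := hT.isConnected.exists_path_of_dist r y
  cases hR : P.reverse with
  | nil =>
    exfalso
    have h0 := congrArg Walk.length hR
    rw [Walk.length_reverse] at h0
    simp only [Walk.length_nil] at h0
    exact hne ((hT.isConnected.dist_eq_zero_iff).1 (by omega)).symm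
  | cons h q =>
    rename_i z'
    refine ⟨_, h, ?_⟩
    have e1 : P.length = q.length + 1 := by
      have h0 := congrArg Walk.length hR
      rw [Walk.length_reverse] at h0
      simpa using h0
    have h1 : T.dist r z' ≤ q.reverse.length := dist_le _
    rw [Walk.length_reverse] at h1
    have h4 : T.dist z' y = 1 := dist_eq_one_iff_adj.2 h.symm
    have h3 := hT.isConnected.dist_triangle (u := r) (v := z') (w := y)
    have h5 := adj_dist_cases hT h (r := r)
    omega

lemma leaf_structure (hT : T.IsTree) {r u v : W} (hmax : ∀ z, T.dist r z ≤ T.dist r u)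
    (hv : T.Adj u v) (hdv : T.dist r v + 1 = T.dist r u) : ∀ z, T.Adj u z → z = v := by
  intro z hz
  rcases adj_dist_cases hT hz (r := r) with h | h
  · exact parent_unique hT hz hv h hdv
  · have := hmax z
    omega


lemma peel (hT : T.IsTree) {a b : W} (R : T.Walk a b) (hR : R.length = T.dist a b)
    (hpos : R.length ≠ 0) :
    ∃ (m : W) (_ : T.Adj a m) (R' : T.Walk m b), R'.length = T.dist m b ∧
      T.dist m b + 1 = T.dist a b := by
  cases R with
  | nil => simp at hpos
  | cons h q =>
    rename_i m
    have h1 : T.dist m b ≤ q.length := dist_le q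
    have h2 : T.dist a b ≤ T.dist m b + 1 := by
      have h3 := hT.isConnected.dist_triangle (u := a) (v := m) (w := b)
      have h4 : T.dist a m = 1 := dist_eq_one_iff_adj.2 h
      omega
    simp only [Walk.length_cons] at hR
    exact ⟨m, h, q, by omega, by omega⟩

section Deletion

variable [DecidableEq W] {A : Finset W} {c : W}

lemma cross_of_walk (hbd : ∀ a ∈ A, ∀ b, b ∉ A → T.Adj a b → b = c) :
    ∀ {a b : W} (P : T.Walk a b), a ∈ A → b ∉ A → c ∈ P.support := by
  intro a b P
  induction P with
  | nil => intro h1 h2; exact absurd h1 h2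
  | @cons a' v' b' h q ih =>
    intro h1 h2
    by_cases hv : v' ∈ A
    · simp only [Walk.support_cons, List.mem_cons]
      exact Or.inr (ih hv h2)
    · have hvc := hbd _ h1 _ hv h
      simp only [Walk.support_cons, List.mem_cons]
      exact Or.inr (hvc ▸ q.start_mem_support)

lemma path_avoids (hT : T.IsTree) (hc : c ∉ A)
    (hbd : ∀ a ∈ A, ∀ b, b ∉ A → T.Adj a b → b = c)
    {a b : W} (ha : a ∉ A) (hb : b ∉ A) (P : T.Walk a b) (hP : P.IsPath) :
    ∀ x ∈ P.support, x ∉ A := by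
  classical
  intro x hx hxA
  have h1 : c ∈ (P.takeUntil x hx).support := by
    have := cross_of_walk hbd (P.takeUntil x hx).reverse hxA ha
    rwa [Walk.support_reverse, List.mem_reverse] at this
  have h2 : c ∈ (P.dropUntil x hx).support := cross_of_walk hbd _ hxA hb
  have hcx : c ≠ x := fun h => hc (h ▸ hxA)
  have h3 : c ∈ (P.dropUntil x hx).support.tail := by
    have := Walk.support_eq_cons (P.dropUntil x hx)
    rw [this] at h2
    rcases List.mem_cons.1 h2 with h2 | h2
    · exact absurd h2 hcx
    · exact h2
  have hnd : (P.support).Nodup := hP.support_nodup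
  rw [← P.take_spec hx, Walk.support_append] at hnd
  have := List.disjoint_of_nodup_append hnd
  exact this h1 h3

lemma reachable_induce {s : Set W} :
    ∀ {a b : W} (P : T.Walk a b) (_ : ∀ x ∈ P.support, x ∈ s) (ha : a ∈ s) (hb : b ∈ s),
      (T.induce s).Reachable ⟨a, ha⟩ ⟨b, hb⟩ := by
  intro a b P
  induction P with
  | nil =>
    intro _ ha hb
    exact Reachable.refl _
  | @cons a' v' b' h q ih =>
    intro hs ha hb
    have hv : v' ∈ s := hs v' (by simp)
    have hadj : (T.induce s).Adj ⟨a', ha⟩ ⟨v', hv⟩ := by simpa using h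
    exact hadj.reachable.trans (ih (fun x hx => hs x (by simp [hx])) hv hb)

lemma induced_isTree [Fintype W] (hT : T.IsTree) (hc : c ∉ A)
    (hbd : ∀ a ∈ A, ∀ b, b ∉ A → T.Adj a b → b = c) :
    (T.induce (↑(Aᶜ) : Set W)).IsTree := by
  classical
  have hmem : ∀ x : W, x ∈ (↑(Aᶜ) : Set W) ↔ x ∉ A := by
    intro x; simp
  constructor
  · rw [connected_iff]
    refine ⟨?_, ⟨⟨c, (hmem c).2 hc⟩⟩⟩
    rintro ⟨a, ha⟩ ⟨b, hb⟩
    obtain ⟨P, hP, -⟩ := hT.isConnected.exists_path_of_dist a b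
    have havoid := path_avoids hT hc hbd ((hmem a).1 ha) ((hmem b).1 hb) P hP
    exact reachable_induce P (fun x hx => (hmem x).2 (havoid x hx)) ha hb
  · apply isAcyclic_of_path_unique
    intro v w p q
    have f := SimpleGraph.Embedding.induce (G := T) (↑(Aᶜ) : Set W)
    have hmap : (⟨p.1.map f.toHom, Walk.map_isPath_of_injective f.injective p.2⟩ : T.Path _ _)
        = ⟨q.1.map f.toHom, Walk.map_isPath_of_injective f.injective q.2⟩ :=
      hT.IsAcyclic.path_unique _ _
    have := congrArg Subtype.val hmap
    simp only at this
    exact Subtype.ext (Walk.map_injective_of_injective f.injective _ _ this)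

end Deletion

section SuppBounds

variable [Fintype W] [DecidableEq W] {A : Finset W} {c : W}

lemma supp_transfer (hbd : ∀ a ∈ A, ∀ b, b ∉ A → T.Adj a b → b = c)
    (z' : ↥(↑(Aᶜ) : Set W)) (h : SuppP (T.induce (↑(Aᶜ) : Set W)) z') :
    SuppP T z'.1 ∨ ((z' : W) ∉ A ∧ T.Adj c z'.1 ∧ ∀ t, t ∉ A → T.Adj c t → t = z'.1) := by
  obtain ⟨q', hq1, hq2⟩ := h
  have hzA : (z' : W) ∉ A := by have := z'.2; simpa using this
  have hqA : (q' : W) ∉ A := by have := q'.2; simpa using this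
  have hadj : T.Adj z'.1 q'.1 := by simpa using hq1
  by_cases hqc : (q' : W) = c
  · right
    refine ⟨hzA, by rw [← hqc]; exact hadj.symm, ?_⟩
    intro t ht hadjt
    rw [← hqc] at hadjt
    have : (⟨t, by simpa using ht⟩ : ↥(↑(Aᶜ) : Set W)) = z' := hq2 _ (by simpa using hadjt)
    simpa using congrArg Subtype.val this
  · left
    refine ⟨q'.1, hadj, ?_⟩
    intro t hadjt
    by_cases htA : t ∈ A
    · exact absurd (hbd _ htA _ hqA hadjt.symm) hqc
    · have : (⟨t, by simpa using htA⟩ : ↥(↑(Aᶜ) : Set W)) = z' := hq2 _ (by simpa using hadjt)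
      simpa using congrArg Subtype.val this

lemma suppCard_induce_le_general (hbd : ∀ a ∈ A, ∀ b, b ∉ A → T.Adj a b → b = c) :
    (suppFinset (T.induce (↑(Aᶜ) : Set W))).card ≤ (suppFinset T \ A).card + 1 := by
  classical
  set b₀ : W := if h : ∃ b, b ∉ A ∧ T.Adj c b ∧ ∀ t, t ∉ A → T.Adj c t → t = b
    then h.choose else c with hb₀
  have key : ∀ z' ∈ suppFinset (T.induce (↑(Aᶜ) : Set W)),
      (z' : W) ∈ insert b₀ (suppFinset T \ A) := by
    intro z' hz'
    rcases supp_transfer hbd z' (mem_suppFinset.1 hz') with h | ⟨h1, h2, h3⟩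
    · apply Finset.mem_insert_of_mem
      rw [Finset.mem_sdiff, mem_suppFinset]
      exact ⟨h, by have := z'.2; simpa using this⟩
    · have hP : ∃ b, b ∉ A ∧ T.Adj c b ∧ ∀ t, t ∉ A → T.Adj c t → t = b :=
        ⟨z'.1, h1, h2, h3⟩
    
      have : b₀ = z'.1 := by
        rw [hb₀, dif_pos hP]
        exact h3 _ hP.choose_spec.1 hP.choose_spec.2.1
      rw [← this]
      exact Finset.mem_insert_self _ _
  calc (suppFinset (T.induce (↑(Aᶜ) : Set W))).card
      ≤ (insert b₀ (suppFinset T \ A)).card := by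
        apply Finset.card_le_card_of_injOn _ key
        intro x _ y _ h
        exact Subtype.ext h
    _ ≤ (suppFinset T \ A).card + 1 := Finset.card_insert_le _ _

lemma suppCard_induce_le_refined (hbd : ∀ a ∈ A, ∀ b, b ∉ A → T.Adj a b → b = c)
    (hc2 : ∃ b₁ b₂, b₁ ≠ b₂ ∧ b₁ ∉ A ∧ b₂ ∉ A ∧ T.Adj c b₁ ∧ T.Adj c b₂) :
    (suppFinset (T.induce (↑(Aᶜ) : Set W))).card ≤ (suppFinset T \ A).card := by
  classical
  have key : ∀ z' ∈ suppFinset (T.induce (↑(Aᶜ) : Set W)),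
      (z' : W) ∈ suppFinset T \ A := by
    intro z' hz'
    rcases supp_transfer hbd z' (mem_suppFinset.1 hz') with h | ⟨h1, h2, h3⟩
    · rw [Finset.mem_sdiff, mem_suppFinset]
      exact ⟨h, by have := z'.2; simpa using this⟩
    · exfalso
      obtain ⟨b₁, b₂, hne, hb₁, hb₂, ha₁, ha₂⟩ := hc2
      have e₁ := h3 _ hb₁ ha₁
      have e₂ := h3 _ hb₂ ha₂
      exact hne (e₁.trans e₂.symm)
  apply Finset.card_le_card_of_injOn _ key
  intro x _ y _ h
  exact Subtype.ext h

end SuppBounds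

section Main

variable [Fintype W] [DecidableEq W]

lemma reduce_core (T : SimpleGraph W) (hT : T.IsTree)
    (HI : ∀ (W' : Type u) [Fintype W'] (G : SimpleGraph W'), G.IsTree →
      2 ≤ Fintype.card W' → Fintype.card W' < Fintype.card W →
      ∃ S : Finset W', (∀ z, ∃ m ∈ S, G.Adj m z) ∧
        2 * S.card ≤ Fintype.card W' + (suppFinset G).card)
    {A : Finset W} {c : W} (hc : c ∉ A)
    (hbd : ∀ a ∈ A, ∀ b, b ∉ A → T.Adj a b → b = c)
    (hA : A.Nonempty) (h2 : A.card + 2 ≤ Fintype.card W) :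
    ∃ S₀ : Finset W, (∀ m ∈ S₀, m ∉ A) ∧ (∀ z, z ∉ A → ∃ m ∈ S₀, T.Adj m z) ∧
      2 * S₀.card + A.card ≤ Fintype.card W + (suppFinset (T.induce (↑(Aᶜ) : Set W))).card := by
  classical
  have htree' := induced_isTree hT hc hbd
  have hcardA : A.card ≤ Fintype.card W := by
    simpa using Finset.card_le_univ A
  have hcard' : Fintype.card ↥(↑(Aᶜ) : Set W) = Fintype.card W - A.card := by
    rw [← Finset.card_compl A, ← Fintype.card_coe (Aᶜ)]
    apply Fintype.card_congr
    exact Equiv.subtypeEquivRight (fun x => by simp)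
  have hA1 : 1 ≤ A.card := hA.card_pos
  obtain ⟨S', hS'dom, hS'b⟩ := HI _ (T.induce (↑(Aᶜ) : Set W)) htree'
    (by rw [hcard']; omega) (by rw [hcard']; omega)
  rw [hcard'] at hS'b
  refine ⟨S'.image Subtype.val, ?_, ?_, ?_⟩
  · intro m hm
    obtain ⟨m', -, rfl⟩ := Finset.mem_image.1 hm
    have := m'.2
    simpa using this
  · intro z hz
    obtain ⟨m', hm', hadj⟩ := hS'dom ⟨z, by simpa using hz⟩
    exact ⟨m'.1, Finset.mem_image_of_mem _ hm', by simpa using hadj⟩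
  · rw [Finset.card_image_of_injective _ Subtype.val_injective]
    omega

theorem main : ∀ (n : ℕ) {W' : Type u} [Fintype W'] (T : SimpleGraph W'), T.IsTree →
    2 ≤ Fintype.card W' → Fintype.card W' = n →
    ∃ S : Finset W', (∀ z, ∃ m ∈ S, T.Adj m z) ∧
      2 * S.card ≤ Fintype.card W' + (suppFinset T).card := by
  intro n
  induction n using Nat.strong_induction_on with
  | _ n IH =>
  intro W _ T hT hcard2 hn
  classical
  have HI : ∀ (W' : Type u) [Fintype W'] (G : SimpleGraph W'), G.IsTree →
      2 ≤ Fintype.card W' → Fintype.card W' < Fintype.card W →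
      ∃ S : Finset W', (∀ z, ∃ m ∈ S, G.Adj m z) ∧
        2 * S.card ≤ Fintype.card W' + (suppFinset G).card := by
    intro W' _ G hG hG2 hlt
    exact IH _ (hn ▸ hlt) G hG hG2 rfl
  by_cases hn2 : Fintype.card W = 2
  · -- base case : two vertices
    rw [← Finset.card_univ, Finset.card_eq_two] at hn2
    obtain ⟨a, b, hab, huniv⟩ := hn2
    have hall : ∀ x : W, x = a ∨ x = b := by
      intro x
      have : x ∈ (Finset.univ : Finset W) := Finset.mem_univ x
      rw [huniv] at this
      simpa using this
    have hadj : T.Adj a b := by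
      obtain ⟨P, hP, hPl⟩ := hT.isConnected.exists_path_of_dist a b
      cases P with
      | nil => exact absurd rfl hab
      | cons h q =>
        rename_i m
        rcases hall m with rfl | rfl
        · exact absurd rfl h.ne
        · exact h
    have hleafa : LeafNbr T a b := by
      refine ⟨hadj, fun t ht => ?_⟩
      rcases hall t with rfl | rfl
      · rfl
      · exact absurd ht (T.irrefl)
    have hleafb : LeafNbr T b a := by
      refine ⟨hadj.symm, fun t ht => ?_⟩
      rcases hall t with rfl | rfl
      · exact absurd ht (T.irrefl)
      · rfl
    refine ⟨{a, b}, ?_, ?_⟩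
    · intro z
      rcases hall z with rfl | rfl
      · exact ⟨b, by simp, hadj.symm⟩
      · exact ⟨a, by simp, hadj⟩
    · have hsub : {a, b} ⊆ suppFinset T := by
        intro t ht
        rw [mem_suppFinset]
        simp only [Finset.mem_insert, Finset.mem_singleton] at ht
        rcases ht with rfl | rfl
        · exact ⟨b, hleafa⟩
        · exact ⟨a, hleafb⟩
      have h1 : ({a, b} : Finset W).card = 2 := Finset.card_pair hab
      have h2 := Finset.card_le_card hsub
      omega
  · -- n ≥ 3
    have hn3 : 3 ≤ Fintype.card W := by omega
    by_cases hTwo : ∃ y z₁ z₂, z₁ ≠ z₂ ∧ LeafNbr T y z₁ ∧ LeafNbr T y z₂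
    · -- a support vertex with two leaves: delete one leaf
      obtain ⟨y, z₁, z₂, hz12, hL₁, hL₂⟩ := hTwo
      have hyz₁ : y ∉ ({z₁} : Finset W) := by
        simp only [Finset.mem_singleton]
        exact fun h => T.irrefl (h ▸ hL₁.1)
      have hbd : ∀ a ∈ ({z₁} : Finset W), ∀ b, b ∉ ({z₁} : Finset W) → T.Adj a b → b = y := by
        intro a ha b _ hadj
        rw [Finset.mem_singleton] at ha
        exact hL₁.2 b (ha ▸ hadj)
      obtain ⟨S₀, hS₀A, hS₀dom, hS₀b⟩ := reduce_core T hT HI hyz₁ hbd ⟨z₁, Finset.mem_singleton_self z₁⟩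
        (by simpa using hn3)
      have hyS₀ : y ∈ S₀ := by
        obtain ⟨m, hm, hadj⟩ := hS₀dom z₂ (by simpa using hz12.symm)
        rwa [← hL₂.2 m hadj.symm]
      have hsupp := suppCard_induce_le_general (T := T) hbd
      have hsd : (suppFinset T \ {z₁}).card ≤ (suppFinset T).card :=
        Finset.card_le_card (Finset.sdiff_subset)
      refine ⟨S₀, ?_, ?_⟩
      · intro z
        by_cases hz : z ∈ ({z₁} : Finset W)
        · rw [Finset.mem_singleton] at hz
          exact ⟨y, hyS₀, hz ▸ hL₁.1⟩
        · exact hS₀dom z hz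
      · have : ({z₁} : Finset W).card = 1 := rfl
        omega
    · -- no support has two leaves
      have hL1 : ∀ y z₁ z₂, LeafNbr T y z₁ → LeafNbr T y z₂ → z₁ = z₂ := by
        intro y z₁ z₂ h1 h2
        by_contra hne
        exact hTwo ⟨y, z₁, z₂, hne, h1, h2⟩
      have : Nonempty W := Fintype.card_pos_iff.1 (by omega)
      -- diameter pair
      obtain ⟨p₀, -, hmax₀⟩ := Finset.exists_max_image (Finset.univ ×ˢ Finset.univ)
        (fun p => T.dist p.1 p.2) ⟨(Classical.arbitrary W, Classical.arbitrary W), by simp⟩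
      set r := p₀.1 with hr
      set u := p₀.2 with hu
      have hmax : ∀ a b : W, T.dist a b ≤ T.dist r u := by
        intro a b
        exact hmax₀ (a, b) (by simp)
      set d := T.dist r u with hd
      -- d ≥ 2
      have hd2 : 2 ≤ d := by
        rcases Nat.lt_or_ge d 2 with hlt | hge
        · exfalso
          -- get three distinct vertices
          obtain ⟨a, b, hab⟩ := Fintype.exists_pair_of_one_lt_card (α := W) (by omega)
          have hcs : 2 < (Finset.univ : Finset W).card := by rw [Finset.card_univ]; omega
          obtain ⟨e, he, hea, heb⟩ : ∃ e, e ∈ (Finset.univ : Finset W) ∧ e ≠ a ∧ e ≠ b := by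
            have : ((Finset.univ : Finset W) \ {a, b}).Nonempty := by
              apply Finset.card_pos.1
              have := Finset.card_le_card (Finset.sdiff_subset
                (s := (Finset.univ : Finset W)) (t := {a, b}))
              have h2 : ({a, b} : Finset W).card = 2 := Finset.card_pair hab
              have h3 := Finset.le_card_sdiff ({a, b} : Finset W) (Finset.univ : Finset W)
              omega
            obtain ⟨e, he⟩ := this
            simp only [Finset.mem_sdiff, Finset.mem_insert, Finset.mem_singleton] at he
            exact ⟨e, Finset.mem_univ e, fun h => he.2 (Or.inl h), fun h => he.2 (Or.inr h)⟩
          have hadjall : ∀ s t : W, s ≠ t → T.Adj s t := by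
            intro s t hst
            have h1 : T.dist s t ≤ 1 := le_trans (hmax s t) (by omega)
            have h2 : T.dist s t ≠ 0 := by
              rw [SimpleGraph.dist_ne_zero_iff_ne_and_reachable]
              exact ⟨hst, hT.isConnected s t⟩
            have : T.dist s t = 1 := by omega
            exact dist_eq_one_iff_adj.1 this
          -- triangle gives two distinct paths from a to b
          have hab' := hadjall a b hab
          have hae := hadjall a e (fun h => hea h.symm)
          have heb' : T.Adj e b := hadjall e b heb
          have hP1 : (Walk.cons hab' Walk.nil).IsPath := by
            simp [Walk.cons_isPath_iff, hab]
          have hP2 : (Walk.cons hae (Walk.cons heb' Walk.nil)).IsPath := by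
            simp [Walk.cons_isPath_iff, hab, heb, Ne.symm hea]
          have heq : (⟨Walk.cons hab' Walk.nil, hP1⟩ : T.Path a b)
              = ⟨Walk.cons hae (Walk.cons heb' Walk.nil), hP2⟩ :=
            hT.IsAcyclic.path_unique _ _
          have := congrArg (fun p : T.Path a b => p.1.length) heq
          simp at this
        · exact hge
      obtain ⟨P, hP, hPl⟩ := hT.isConnected.exists_path_of_dist r u
      have hRlen : P.reverse.length = T.dist u r := by
        rw [Walk.length_reverse, SimpleGraph.dist_comm]; exact hPl
      have ecomm : T.dist u r = T.dist r u := dist_comm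
      obtain ⟨v, h_uv, Q₁, hQ₁len, hstep1⟩ := peel hT P.reverse hRlen (by omega)
      have ecommv : T.dist v r = T.dist r v := dist_comm
      have hdv : T.dist r v + 1 = d := by omega
      obtain ⟨w, h_vw, Q₂, hQ₂len, hstep2⟩ := peel hT Q₁ hQ₁len (by omega)
      have ecommw : T.dist w r = T.dist r w := dist_comm
      have hdw : T.dist r w + 2 = d := by omega
      have hu_leaf : ∀ z, T.Adj u z → z = v :=
        leaf_structure hT (fun z => hmax r z) h_uv (by omega)
      have hv_struct : ∀ z, T.Adj v z → z = w ∨ (T.dist r z = d ∧ ∀ t, T.Adj z t → t = v) := by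
        intro z hz
        rcases adj_dist_cases hT hz (r := r) with hlo | hhi
        · left
          exact parent_unique (r := r) hT hz h_vw (by omega) (by omega)
        · right
          have hzd : T.dist r z = d := by have := hmax r z; omega
          refine ⟨hzd, ?_⟩
          exact leaf_structure (r := r) hT (fun t => by have := hmax r t; omega) hz.symm (by omega)
      have hvw_ne : v ≠ w := fun h => by rw [h] at hdv; omega
      by_cases hd3 : d ≤ 3
      · -- base : diameter at most 3, S = {v, w}
        refine ⟨{v, w}, ?_, ?_⟩
        · intro z
          obtain ⟨R, hRp, hRl⟩ := hT.isConnected.exists_path_of_dist u z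
          have hRle : R.length ≤ 3 := by
            rw [hRl]; exact le_trans (hmax u z) (by omega)
          cases R with
          | nil => exact ⟨v, by simp, h_uv.symm⟩
          | cons h₁ R₁ =>
            rename_i m₁
            have e₁ : m₁ = v := hu_leaf m₁ h₁
            cases R₁ with
            | nil => exact ⟨w, by simp, by rw [e₁]; exact h_vw.symm⟩
            | cons h₂ R₂ =>
              rename_i m₂
              rw [e₁] at h₂
              cases R₂ with
              | nil => exact ⟨v, by simp, h₂⟩
              | cons h₃ R₃ =>
                rename_i m₃
                have hR₃ : R₃.length = 0 := by
                  simp only [Walk.length_cons] at hRle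
                  omega
                have hz3 : m₃ = z := Walk.eq_of_length_eq_zero hR₃
                rcases hv_struct m₂ h₂ with e₂ | ⟨-, hlf⟩
                · exact ⟨w, by simp, by rw [← hz3, ← e₂]; exact h₃⟩
                · exfalso
                  have e₃ := hlf _ h₃
                  have e4 : T.dist u v = 1 := dist_eq_one_iff_adj.2 h_uv
                  rw [← e₃, hz3] at e4
                  simp only [Walk.length_cons] at hRl
                  omega
        · have hvs : v ∈ suppFinset T :=
            mem_suppFinset.2 ⟨u, h_uv.symm, hu_leaf⟩
          have h1 : 1 ≤ (suppFinset T).card := Finset.card_pos.2 ⟨v, hvs⟩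
          have h2 : ({v, w} : Finset W).card = 2 := Finset.card_pair hvw_ne
          omega
      · -- d ≥ 4
        have hd4 : 4 ≤ d := by omega
        have hdu : T.dist r u = d := hd.symm
        obtain ⟨x, h_wx, Q₃, hQ₃len, hstep3⟩ := peel hT Q₂ hQ₂len (by omega)
        have ecommx : T.dist x r = T.dist r x := dist_comm
        have hdx : T.dist r x + 3 = d := by omega
        obtain ⟨x₄, h_xx4, Q₄, hQ₄len, hstep4⟩ := peel hT Q₃ hQ₃len (by omega)
        have ecommx4 : T.dist x₄ r = T.dist r x₄ := dist_comm
        have hdx4 : T.dist r x₄ + 4 = d := by omega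
        have hne_uv : u ≠ v := fun h => by rw [← h] at hdv; omega
        have hne_uw : u ≠ w := fun h => by rw [← h] at hdw; omega
        have hne_ux : u ≠ x := fun h => by rw [← h] at hdx; omega
        have hne_ux4 : u ≠ x₄ := fun h => by rw [← h] at hdx4; omega
        have hne_vx : v ≠ x := fun h => by rw [← h] at hdx; omega
        have hne_vx4 : v ≠ x₄ := fun h => by rw [← h] at hdx4; omega
        have hne_wx : w ≠ x := fun h => by rw [← h] at hdx; omega
        have hne_wx4 : w ≠ x₄ := fun h => by rw [← h] at hdx4; omega
        have hne_xx4 : x ≠ x₄ := fun h => by rw [← h] at hdx4; omega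
        have hv_only : ∀ z, T.Adj v z → z = u ∨ z = w := by
          intro z hz
          rcases hv_struct z hz with h | ⟨hzd, hlf⟩
          · exact Or.inr h
          · exact Or.inl (hL1 v z u ⟨hz, hlf⟩ ⟨h_uv.symm, hu_leaf⟩)
        have houts : ∀ (B : Finset W) (p q : W), p ∉ B → q ∉ B → p ≠ q →
            B.card + 2 ≤ Fintype.card W := by
          intro B p q hp hq hpq
          have h1 : (insert p (insert q B)).card ≤ Fintype.card W := by
            rw [← Finset.card_univ]
            exact Finset.card_le_card (Finset.subset_univ _)
          rw [Finset.card_insert_of_notMem (by simp [hp, hpq]),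
            Finset.card_insert_of_notMem hq] at h1
          omega
        have hvsupp : v ∈ suppFinset T := mem_suppFinset.2 ⟨u, h_uv.symm, hu_leaf⟩
        by_cases hwleaf : ∃ z, LeafNbr T w z
        · -- case : w has a pendant leaf; delete {u, v}
          obtain ⟨z, hz⟩ := hwleaf
          have hzu : z ≠ u := by
            intro h
            rw [h] at hz
            exact hvw_ne (hu_leaf w hz.1.symm).symm
          have hzv : z ≠ v := by
            intro h
            rw [h] at hz
            exact hne_uw ((hz.2 u h_uv.symm).symm ▸ rfl)
          have hzA : z ∉ ({u, v} : Finset W) := by simp [hzu, hzv]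
          have hcA : w ∉ ({u, v} : Finset W) := by simp [hne_uw.symm, hvw_ne.symm]
          have hbd : ∀ a ∈ ({u, v} : Finset W), ∀ b, b ∉ ({u, v} : Finset W) →
              T.Adj a b → b = w := by
            intro a ha b hb hadj
            simp only [Finset.mem_insert, Finset.mem_singleton] at ha
            rcases ha with rfl | rfl
            · exact absurd (by simp [hu_leaf b hadj]) hb
            · rcases hv_only b hadj with rfl | rfl
              · exact absurd (by simp) hb
              · rfl
          have hxA : x ∉ ({u, v} : Finset W) := by simp [hne_ux.symm, hne_vx.symm]
          have h2 : ({u, v} : Finset W).card + 2 ≤ Fintype.card W := by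
            exact houts _ w x hcA hxA hne_wx
          obtain ⟨S₀, hS₀A, hS₀dom, hS₀b⟩ := reduce_core T hT HI hcA hbd ⟨u, by simp⟩ h2
          have hwS₀ : w ∈ S₀ := by
            obtain ⟨m, hm, hadj⟩ := hS₀dom z hzA
            rwa [← hz.2 m hadj.symm]
          have hxz : x ≠ z := by
            intro h
            have := hz.2 x₄ (by rw [h] at h_xx4; exact h_xx4)
            rw [this] at hdx4
            omega
          have hsupp := suppCard_induce_le_refined (T := T) hbd
            ⟨x, z, hxz, hxA, hzA, h_wx, hz.1⟩
          have hsd : (suppFinset T \ {u, v}).card ≤ (suppFinset T).card :=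
            Finset.card_le_card Finset.sdiff_subset
          refine ⟨insert v S₀, ?_, ?_⟩
          · intro z₀
            by_cases hz₀ : z₀ ∈ ({u, v} : Finset W)
            · simp only [Finset.mem_insert, Finset.mem_singleton] at hz₀
              rcases hz₀ with rfl | rfl
              · exact ⟨v, Finset.mem_insert_self _ _, h_uv.symm⟩
              · exact ⟨w, Finset.mem_insert_of_mem hwS₀, h_vw.symm⟩
            · obtain ⟨m, hm, hadj⟩ := hS₀dom z₀ hz₀
              exact ⟨m, Finset.mem_insert_of_mem hm, hadj⟩
          · have hci : (insert v S₀).card ≤ S₀.card + 1 := Finset.card_insert_le _ _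
            have hca : ({u, v} : Finset W).card = 2 := Finset.card_pair hne_uv
            omega
        · -- w has no pendant leaf
          set C := (T.neighborFinset w).erase x with hC
          have hCmem : ∀ y, y ∈ C ↔ (y ≠ x ∧ T.Adj w y) := by
            intro y
            simp [hC, Finset.mem_erase, mem_neighborFinset]
          have hCd : ∀ y ∈ C, T.dist r y + 1 = d := by
            intro y hy
            obtain ⟨hyx, hwy⟩ := (hCmem y).1 hy
            rcases adj_dist_cases hT hwy (r := r) with hlo | hhi
            · exact absurd (parent_unique (r := r) hT hwy h_wx hlo (by omega)) hyx
            · omega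
          have hCleaf : ∀ y ∈ C, ∀ z, T.Adj y z → z = w ∨ LeafNbr T y z := by
            intro y hy z hz
            obtain ⟨hyx, hwy⟩ := (hCmem y).1 hy
            have hyd := hCd y hy
            rcases adj_dist_cases hT hz (r := r) with hlo | hhi
            · left
              exact parent_unique (r := r) hT hz hwy.symm (by omega) (by omega)
            · right
              exact ⟨hz, leaf_structure (r := r) hT (fun t => by have := hmax r t; omega)
                hz.symm (by omega)⟩
          have hCsup : ∀ y ∈ C, ∃ z, LeafNbr T y z := by
            intro y hy
            obtain ⟨hyx, hwy⟩ := (hCmem y).1 hy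
            by_contra hno
            push_neg at hno
            apply hwleaf
            refine ⟨y, hwy, ?_⟩
            intro t ht
            rcases hCleaf y hy t ht with h | h
            · exact h
            · exact absurd h (hno t)
          choose! g hg using hCsup
          have hginj : ∀ y₁ ∈ C, ∀ y₂ ∈ C, g y₁ = g y₂ → y₁ = y₂ := by
            intro y₁ h₁ y₂ h₂ he
            apply (hg y₂ h₂).2 y₁
            rw [← he]
            exact (hg y₁ h₁).1.symm
          have hgd : ∀ y ∈ C, T.dist r (g y) = d := by
            intro y hy
            obtain ⟨hyx, hwy⟩ := (hCmem y).1 hy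
            have hyd := hCd y hy
            rcases adj_dist_cases hT (hg y hy).1 (r := r) with hlo | hhi
            · exfalso
              have hgw : g y = w := parent_unique (r := r) hT (hg y hy).1 hwy.symm hlo (by omega)
              have := (hg y hy).2 x (by rw [hgw]; exact h_wx)
              exact hyx this.symm
            · have := hmax r (g y)
              omega
          have hvC : v ∈ C := (hCmem v).2 ⟨hne_vx, h_vw.symm⟩
          have hC1 : 1 ≤ C.card := Finset.card_pos.2 ⟨v, hvC⟩
          by_cases ha2 : 2 ≤ C.card
          · -- at least two branches at w : remove the whole branch at w
            set A := insert w (C ∪ C.image g) with hA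
            have hgyC : ∀ y ∈ C, g y ∉ C := by
              intro y hy hmem
              have h1 := hCd _ hmem
              have h2 := hgd y hy
              omega
            have hwA1 : w ∉ C := fun h => T.irrefl ((hCmem w).1 h).2
            have hwA2 : w ∉ C.image g := by
              intro h
              obtain ⟨y, hy, he⟩ := Finset.mem_image.1 h
              have := (hg y hy).2 x (by rw [he]; exact h_wx)
              exact ((hCmem y).1 hy).1 this.symm
            have hdisj : Disjoint C (C.image g) := by
              rw [Finset.disjoint_left]
              intro t ht hti
              obtain ⟨y, hy, he⟩ := Finset.mem_image.1 hti
              exact hgyC y hy (he ▸ ht)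
            have hcardim : (C.image g).card = C.card :=
              Finset.card_image_of_injOn (fun y₁ h₁ y₂ h₂ => hginj y₁ h₁ y₂ h₂)
            have hAcard : A.card = 2 * C.card + 1 := by
              rw [hA, Finset.card_insert_of_notMem (by simp [hwA1, hwA2]),
                Finset.card_union_of_disjoint hdisj, hcardim]
              omega
            have hgx : ∀ y ∈ C, g y ≠ x := by
              intro y hy h
              have := hgd y hy
              rw [h] at this
              omega
            have hgx4 : ∀ y ∈ C, g y ≠ x₄ := by
              intro y hy h
              have := hgd y hy
              rw [h] at this
              omega
            have hCx4 : x₄ ∉ C := fun h => by have := hCd _ h; omega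
            have hCx : x ∉ C := fun h => ((hCmem x).1 h).1 rfl
            have hxA : x ∉ A := by
              simp only [hA, Finset.mem_insert, Finset.mem_union, Finset.mem_image]
              push_neg
              exact ⟨hne_wx.symm, hCx, fun y hy => hgx y hy⟩
            have hx4A : x₄ ∉ A := by
              simp only [hA, Finset.mem_insert, Finset.mem_union, Finset.mem_image]
              push_neg
              exact ⟨hne_wx4.symm, hCx4, fun y hy => hgx4 y hy⟩
            have hbd : ∀ a ∈ A, ∀ b, b ∉ A → T.Adj a b → b = x := by
              intro a ha b hb hadj
              simp only [hA, Finset.mem_insert, Finset.mem_union, Finset.mem_image] at ha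
              rcases ha with rfl | hC' | ⟨y, hy, rfl⟩
              · by_contra hbx
                apply hb
                simp only [hA, Finset.mem_insert, Finset.mem_union]
                exact Or.inr (Or.inl ((hCmem b).2 ⟨hbx, hadj⟩))
              · exfalso
                rcases hCleaf a hC' b hadj with rfl | hlf
                · exact hb (by simp [hA])
                · apply hb
                  have hbg : b = g a := hL1 a b (g a) hlf (hg a hC')
                  simp only [hA, Finset.mem_insert, Finset.mem_union, Finset.mem_image]
                  exact Or.inr (Or.inr ⟨a, hC', hbg.symm⟩)
              · exfalso
                have hby := (hg y hy).2 b hadj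
                apply hb
                simp only [hA, Finset.mem_insert, Finset.mem_union]
                exact Or.inr (Or.inl (hby ▸ hy))
            have h2 : A.card + 2 ≤ Fintype.card W := houts A x x₄ hxA hx4A hne_xx4
            obtain ⟨S₀, hS₀A, hS₀dom, hS₀b⟩ := reduce_core T hT HI hxA hbd
              ⟨w, by simp [hA]⟩ h2
            have hsupp := suppCard_induce_le_general (T := T) (c := x) hbd
            have hCsub : C ⊆ suppFinset T := fun y hy => mem_suppFinset.2 ⟨g y, hg y hy⟩
            have hCA : C ⊆ A := fun y hy => by simp [hA, hy]
            have hsd1 : suppFinset T \ A ⊆ suppFinset T \ C :=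
              Finset.sdiff_subset_sdiff (le_refl _) hCA
            have hsd2 : (suppFinset T \ C).card + C.card = (suppFinset T).card :=
              Finset.card_sdiff_add_card_eq_card hCsub
            have hsd3 := Finset.card_le_card hsd1
            refine ⟨insert w C ∪ S₀, ?_, ?_⟩
            · intro z₀
              by_cases hz₀ : z₀ ∈ A
              · simp only [hA, Finset.mem_insert, Finset.mem_union, Finset.mem_image] at hz₀
                rcases hz₀ with rfl | hC' | ⟨y, hy, rfl⟩
                · exact ⟨v, by simp [hvC], h_vw⟩
                · exact ⟨w, by simp, ((hCmem z₀).1 hC').2⟩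
                · exact ⟨y, by simp [hy], (hg y hy).1⟩
              · obtain ⟨m, hm, hadj⟩ := hS₀dom z₀ hz₀
                exact ⟨m, Finset.mem_union_right _ hm, hadj⟩
            · have hc1 : (insert w C ∪ S₀).card ≤ C.card + 1 + S₀.card := by
                have h3 := Finset.card_union_le (insert w C) S₀
                have h4 := Finset.card_insert_le w C
                omega
              omega
          · -- C = {v}
            have hCv : C = {v} := by
              have h1 : C.card = 1 := by omega
              obtain ⟨y₀, hy₀⟩ := Finset.card_eq_one.1 h1
              rw [hy₀] at hvC ⊢
              rw [Finset.mem_singleton] at hvC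
              rw [hvC]
            have hw_only : ∀ t, T.Adj w t → t = v ∨ t = x := by
              intro t ht
              by_cases htx : t = x
              · exact Or.inr htx
              · have hmem : t ∈ C := (hCmem t).2 ⟨htx, ht⟩
                rw [hCv, Finset.mem_singleton] at hmem
                exact Or.inl hmem
            by_cases hx3 : ∃ b, T.Adj x b ∧ b ≠ w ∧ b ≠ x₄
            · -- x has another neighbour : delete {u, v, w}
              obtain ⟨b, hxb, hbw, hbx4⟩ := hx3
              have hbu : b ≠ u := by
                intro h
                rw [h] at hxb
                exact hne_vx (hu_leaf x hxb.symm).symm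
              have hbv : b ≠ v := by
                intro h
                rw [h] at hxb
                rcases hv_only x hxb.symm with h' | h'
                · exact hne_ux h'.symm
                · exact hne_wx h'.symm
              have hA3 : x ∉ ({u, v, w} : Finset W) := by
                simp [hne_ux.symm, hne_vx.symm, hne_wx.symm]
              have hbd : ∀ a ∈ ({u, v, w} : Finset W), ∀ b', b' ∉ ({u, v, w} : Finset W) →
                  T.Adj a b' → b' = x := by
                intro a ha b' hb' hadj
                simp only [Finset.mem_insert, Finset.mem_singleton] at ha
                rcases ha with rfl | rfl | rfl
                · exact absurd (by simp [hu_leaf b' hadj]) hb'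
                · rcases hv_only b' hadj with rfl | rfl
                  · exact absurd (by simp) hb'
                  · exact absurd (by simp) hb'
                · rcases hw_only b' hadj with rfl | rfl
                  · exact absurd (by simp) hb'
                  · rfl
              have hx4A : x₄ ∉ ({u, v, w} : Finset W) := by
                simp [hne_ux4.symm, hne_vx4.symm, hne_wx4.symm]
              have h2 : ({u, v, w} : Finset W).card + 2 ≤ Fintype.card W :=
                houts _ x x₄ hA3 hx4A hne_xx4
              obtain ⟨S₀, hS₀A, hS₀dom, hS₀b⟩ := reduce_core T hT HI hA3 hbd ⟨u, by simp⟩ h2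
              have hbA : b ∉ ({u, v, w} : Finset W) := by simp [hbu, hbv, hbw]
              have hsupp := suppCard_induce_le_refined (T := T) hbd
                ⟨x₄, b, fun h => hbx4 h.symm, hx4A, hbA, h_xx4, hxb⟩
              have hsd2 : (suppFinset T \ {v}).card + 1 = (suppFinset T).card := by
                have := Finset.card_sdiff_add_card_eq_card
                  (show {v} ⊆ suppFinset T by simp [hvsupp])
                simpa using this
              have hsd1 : (suppFinset T \ {u, v, w}).card ≤ (suppFinset T \ {v}).card :=
                Finset.card_le_card (Finset.sdiff_subset_sdiff (le_refl _) (by simp))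
              have hcard3 : ({u, v, w} : Finset W).card = 3 := by
                rw [Finset.card_insert_of_notMem (by simp [hne_uv, hne_uw]),
                  Finset.card_insert_of_notMem (by simp [hvw_ne]), Finset.card_singleton]
              refine ⟨insert v (insert w S₀), ?_, ?_⟩
              · intro z₀
                by_cases hz₀ : z₀ ∈ ({u, v, w} : Finset W)
                · simp only [Finset.mem_insert, Finset.mem_singleton] at hz₀
                  rcases hz₀ with rfl | rfl | rfl
                  · exact ⟨v, by simp, h_uv.symm⟩
                  · exact ⟨w, by simp, h_vw.symm⟩
                  · exact ⟨v, by simp, h_vw⟩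
                · obtain ⟨m, hm, hadj⟩ := hS₀dom z₀ hz₀
                  exact ⟨m, by simp [hm], hadj⟩
              · have hc1 : (insert v (insert w S₀)).card ≤ S₀.card + 2 := by
                  have h3 := Finset.card_insert_le v (insert w S₀)
                  have h4 := Finset.card_insert_le w S₀
                  omega
                omega
            · push_neg at hx3
              have hfive : ({u, v, w, x, x₄} : Finset W).card = 5 := by
                rw [Finset.card_insert_of_notMem (by simp [hne_uv, hne_uw, hne_ux, hne_ux4]),
                  Finset.card_insert_of_notMem (by simp [hvw_ne, hne_vx, hne_vx4]),
                  Finset.card_insert_of_notMem (by simp [hne_wx, hne_wx4]),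
                  Finset.card_insert_of_notMem (by simp [hne_xx4]), Finset.card_singleton]
              have hn5 : 5 ≤ Fintype.card W := by
                rw [← hfive, ← Finset.card_univ]
                exact Finset.card_le_card (Finset.subset_univ _)
              by_cases hcard5 : Fintype.card W = 5
              · -- T is the path P5
                have huniv : ({u, v, w, x, x₄} : Finset W) = Finset.univ :=
                  Finset.eq_univ_of_card _ (by omega)
                refine ⟨{v, w, x}, ?_, ?_⟩
                · intro z₀
                  have hz₀ : z₀ ∈ ({u, v, w, x, x₄} : Finset W) := by rw [huniv]; simp
                  simp only [Finset.mem_insert, Finset.mem_singleton] at hz₀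
                  rcases hz₀ with rfl | rfl | rfl | rfl | rfl
                  · exact ⟨v, by simp, h_uv.symm⟩
                  · exact ⟨w, by simp, h_vw.symm⟩
                  · exact ⟨v, by simp, h_vw⟩
                  · exact ⟨w, by simp, h_wx⟩
                  · exact ⟨x, by simp, h_xx4⟩
                · have h3 : ({v, w, x} : Finset W).card ≤ 3 := by
                    have h1 := Finset.card_insert_le v ({w, x} : Finset W)
                    have h4 := Finset.card_insert_le w ({x} : Finset W)
                    simp only [Finset.card_singleton] at h4
                    omega
                  have hs1 : 1 ≤ (suppFinset T).card := Finset.card_pos.2 ⟨v, hvsupp⟩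
                  omega
              · -- at least 6 vertices : delete {u, v, w, x}
                have hn6 : 6 ≤ Fintype.card W := by omega
                have hx4A : x₄ ∉ ({u, v, w, x} : Finset W) := by
                  simp [hne_ux4.symm, hne_vx4.symm, hne_wx4.symm, hne_xx4.symm]
                have hbd : ∀ a ∈ ({u, v, w, x} : Finset W), ∀ b', b' ∉ ({u, v, w, x} : Finset W) →
                    T.Adj a b' → b' = x₄ := by
                  intro a ha b' hb' hadj
                  simp only [Finset.mem_insert, Finset.mem_singleton] at ha
                  rcases ha with rfl | rfl | rfl | rfl
                  · exact absurd (by simp [hu_leaf b' hadj]) hb'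
                  · rcases hv_only b' hadj with rfl | rfl
                    · exact absurd (by simp) hb'
                    · exact absurd (by simp) hb'
                  · rcases hw_only b' hadj with rfl | rfl
                    · exact absurd (by simp) hb'
                    · exact absurd (by simp) hb'
                  · by_cases hbw : b' = w
                    · exact absurd (by simp [hbw]) hb'
                    · exact hx3 b' hadj hbw
                have hcard4 : ({u, v, w, x} : Finset W).card = 4 := by
                  rw [Finset.card_insert_of_notMem (by simp [hne_uv, hne_uw, hne_ux]),
                    Finset.card_insert_of_notMem (by simp [hvw_ne, hne_vx]),
                    Finset.card_insert_of_notMem (by simp [hne_wx]), Finset.card_singleton]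
                have h2 : ({u, v, w, x} : Finset W).card + 2 ≤ Fintype.card W := by omega
                obtain ⟨S₀, hS₀A, hS₀dom, hS₀b⟩ := reduce_core T hT HI hx4A hbd ⟨u, by simp⟩ h2
                have hsupp := suppCard_induce_le_general (T := T) (c := x₄) hbd
                have hsd2 : (suppFinset T \ {v}).card + 1 = (suppFinset T).card := by
                  have := Finset.card_sdiff_add_card_eq_card
                    (show {v} ⊆ suppFinset T by simp [hvsupp])
                  simpa using this
                have hsd1 : (suppFinset T \ {u, v, w, x}).card ≤ (suppFinset T \ {v}).card :=
                  Finset.card_le_card (Finset.sdiff_subset_sdiff (le_refl _) (by simp))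
                refine ⟨insert v (insert w S₀), ?_, ?_⟩
                · intro z₀
                  by_cases hz₀ : z₀ ∈ ({u, v, w, x} : Finset W)
                  · simp only [Finset.mem_insert, Finset.mem_singleton] at hz₀
                    rcases hz₀ with rfl | rfl | rfl | rfl
                    · exact ⟨v, by simp, h_uv.symm⟩
                    · exact ⟨w, by simp, h_vw.symm⟩
                    · exact ⟨v, by simp, h_vw⟩
                    · exact ⟨w, by simp, h_wx⟩
                  · obtain ⟨m, hm, hadj⟩ := hS₀dom z₀ hz₀
                    exact ⟨m, by simp [hm], hadj⟩
                · have hc1 : (insert v (insert w S₀)).card ≤ S₀.card + 2 := by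
                    have h3 := Finset.card_insert_le v (insert w S₀)
                    have h4 := Finset.card_insert_le w S₀
                    omega
                  omega

end Main

end TDaux


/-- Chellali–Haynes: for a tree `T` of order `n ≥ 3` with `s` support vertices,
`γ_t(T) ≤ (n + s) / 2`. -/
theorem totalDominationNumber_le_tree (T : SimpleGraph V) [Fintype V] [DecidableEq V]
    [DecidableRel T.Adj] (hT : T.IsTree) (hn : 3 ≤ Fintype.card V) :
    (totalDominationNumber T : ℝ) ≤
      ((Fintype.card V : ℝ) +
          ({v : V | ∃ u : V, T.Adj v u ∧ T.degree u = 1}.ncard : ℝ)) / 2 := by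
  classical
  obtain ⟨S, hS, hSb⟩ := TDaux.main (Fintype.card V) T hT (by omega) rfl
  have hγ : totalDominationNumber T ≤ S.card :=
    Nat.sInf_le ⟨S, hS, rfl⟩
  have hset : {v : V | ∃ u : V, T.Adj v u ∧ T.degree u = 1}
      = ↑(TDaux.suppFinset T) := by
    ext z
    simp only [Set.mem_setOf_eq, Finset.coe_sort_coe, Finset.mem_coe,
      TDaux.mem_suppFinset]
    constructor
    · rintro ⟨q, hadj, hdeg⟩
      refine ⟨q, hadj, ?_⟩
      intro t ht
      have hq : T.neighborFinset q = {z} := by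
        apply Finset.eq_of_subset_of_card_le
        · intro t' ht'
          rw [mem_neighborFinset] at ht'
          rw [Finset.mem_singleton]
          by_contra hne
          have h2 : ({t', z} : Finset V) ⊆ T.neighborFinset q := by
            intro a ha
            simp only [Finset.mem_insert, Finset.mem_singleton] at ha
            rcases ha with rfl | rfl
            · rwa [mem_neighborFinset]
            · rw [mem_neighborFinset]
              exact hadj.symm
          have h3 := Finset.card_le_card h2
          rw [Finset.card_pair hne] at h3
          rw [← card_neighborFinset_eq_degree] at hdeg
          omega
        · rw [Finset.card_singleton, card_neighborFinset_eq_degree, hdeg]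
      have : t ∈ T.neighborFinset q := by rwa [mem_neighborFinset]
      rw [hq, Finset.mem_singleton] at this
      exact this
    · rintro ⟨q, hadj, huniq⟩
      refine ⟨q, hadj, ?_⟩
      rw [← card_neighborFinset_eq_degree]
      have hq : T.neighborFinset q = {z} := by
        ext t
        rw [mem_neighborFinset, Finset.mem_singleton]
        constructor
        · exact huniq t
        · rintro rfl
          exact hadj.symm
      rw [hq, Finset.card_singleton]
  have hncard : {v : V | ∃ u : V, T.Adj v u ∧ T.degree u = 1}.ncard
      = (TDaux.suppFinset T).card := by
    rw [hset, Set.ncard_coe_finset]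
  rw [hncard]
  have hfin : 2 * totalDominationNumber T ≤
      Fintype.card V + (TDaux.suppFinset T).card := by omega
  have : (2 : ℝ) * (totalDominationNumber T : ℝ) ≤
      (Fintype.card V : ℝ) + ((TDaux.suppFinset T).card : ℝ) := by
    exact_mod_cast hfin
  linarith
end
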